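/- arXiv:2301.09741 — 16 statements merged into one kernel-verified Lean document; each statement's English description precedes it below -/
import Mathlib

section
/- For every t ∈ ℂ*, letting s = diag(t, t², …, tⁿ), one has s⁻¹ F_k s = t^{n−k} · F_k. Consequently, for every linear subspace H of Mat_n(ℂ) and every g ∈ GL(n,ℂ), if g⁻¹ F_k g ∈ H then (sg)⁻¹ F_k (sg) ∈ H; in particular every Hessenberg variety H(F_k, H) is stable under the one-parameter subgroup S = {diag(t, t², …, tⁿ) : t ∈ ℂ*}. -/
/-- `F_k`: the `n × n` matrix with entry `1` in positions `(i, n-k+i)` for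
`i = 1, …, k` (1-based), i.e. (0-based) `X i j = 1` iff `i < k` and `j = n - k + i`. -/
def Fmat (n k : ℕ) : Matrix (Fin n) (Fin n) ℂ :=
  Matrix.of fun i j => if (i : ℕ) < k ∧ (j : ℕ) = n - k + (i : ℕ) then 1 else 0

/-- For every `t ∈ ℂ*`, letting `s = diag(t, t², …, tⁿ)`, one has
`s⁻¹ F_k s = t^(n-k) • F_k`; consequently, for every linear subspace `H` of the
matrices and every `g ∈ GL(n,ℂ)`, if `g⁻¹ F_k g ∈ H` then `(sg)⁻¹ F_k (sg) ∈ H`;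
in particular every Hessenberg variety `H(F_k, H)` is stable under the one-parameter
subgroup `S = {diag(t, …, tⁿ)}`. -/
theorem stmt1 {n k : ℕ} (hk1 : 1 ≤ k) (hk2 : k ≤ n - 1)
    (t : ℂ) (ht : t ≠ 0) :
    (Matrix.diagonal (fun i : Fin n => t ^ ((i : ℕ) + 1)))⁻¹ * Fmat n k *
        Matrix.diagonal (fun i : Fin n => t ^ ((i : ℕ) + 1)) = t ^ (n - k) • Fmat n k ∧
    ∀ (H : Submodule ℂ (Matrix (Fin n) (Fin n) ℂ)) (g : Matrix (Fin n) (Fin n) ℂ),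
      IsUnit g → g⁻¹ * Fmat n k * g ∈ H →
      (Matrix.diagonal (fun i : Fin n => t ^ ((i : ℕ) + 1)) * g)⁻¹ * Fmat n k *
        (Matrix.diagonal (fun i : Fin n => t ^ ((i : ℕ) + 1)) * g) ∈ H := by
  set d : Fin n → ℂ := fun i : Fin n => t ^ ((i : ℕ) + 1) with hd
  set s : Matrix (Fin n) (Fin n) ℂ := Matrix.diagonal d with hs
  have hdne : ∀ i, d i ≠ 0 := fun i => pow_ne_zero _ ht
  have hsu : IsUnit s := by
    rw [hs, Matrix.isUnit_iff_isUnit_det, Matrix.det_diagonal]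
    exact (Finset.prod_ne_zero_iff.mpr fun i _ => hdne i).isUnit
  have hkey : s * (t ^ (n - k) • Fmat n k) = Fmat n k * s := by
    ext i j
    rw [Matrix.mul_smul, Matrix.smul_apply, Matrix.diagonal_mul, Matrix.mul_diagonal]
    simp only [Fmat, Matrix.of_apply]
    by_cases hij : (i : ℕ) < k ∧ (j : ℕ) = n - k + (i : ℕ)
    · rw [if_pos hij]
      have : d j = t ^ (n - k) * d i := by
        simp only [hd, hij.2, ← pow_add]
        ring_nf
      rw [this, smul_eq_mul]; ring
    · rw [if_neg hij]; simp
  have hmain : s⁻¹ * Fmat n k * s = t ^ (n - k) • Fmat n k := by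
    have := congrArg (fun M => s⁻¹ * M) hkey
    simp only [← mul_assoc, Matrix.nonsing_inv_mul _ ((Matrix.isUnit_iff_isUnit_det s).mp hsu),
      one_mul] at this
    rw [mul_assoc] at this ⊢
    exact this.symm
  refine ⟨hmain, fun H g hg hmem => ?_⟩
  rw [Matrix.mul_inv_rev]
  have : g⁻¹ * s⁻¹ * Fmat n k * (s * g) = g⁻¹ * (s⁻¹ * Fmat n k * s) * g := by
    noncomm_ring
  rw [this, hmain, Matrix.mul_smul, Matrix.smul_mul]
  exact H.smul_mem _ hmem
end

section
/- Let X be an n×n skeletal nilpotent matrix. Then there exists a permutation w of {1,…,n} such that for every t ∈ ℂ*, setting s_w(t) = diag(t^{w(1)}, t^{w(2)}, …, t^{w(n)}), one has s_w(t)⁻¹ X s_w(t) = t · X. Consequently, for every Hessenberg space H and every g ∈ GL(n,ℂ), if g⁻¹ X g ∈ H then (s_w(t) g)⁻¹ X (s_w(t) g) ∈ H; i.e., the Hessenberg variety H(X,H) is stable under the subtorus {s_w(t) : t ∈ ℂ*} of T. -/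
/-- The Hessenberg space of a Hessenberg function `h` (0-based indices). -/
def hessSpace {n : ℕ} (h : Fin n → Fin n) : Set (Matrix (Fin n) (Fin n) ℂ) :=
  {M | ∀ i j : Fin n, h j < i → M i j = 0}

/-- `X` is skeletal nilpotent: strictly upper-triangular with at most one nonzero
entry in each row and each column. -/
def Skeletal {n : ℕ} (X : Matrix (Fin n) (Fin n) ℂ) : Prop :=
  (∀ i j : Fin n, j ≤ i → X i j = 0) ∧
  (∀ i j j' : Fin n, X i j ≠ 0 → X i j' ≠ 0 → j = j') ∧
  (∀ i i' j : Fin n, X i j ≠ 0 → X i' j ≠ 0 → i = i')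

/-- Rank in a chain: number of iterated predecessors of `j` under `X`. -/
noncomputable def skelRk {n : ℕ} (X : Matrix (Fin n) (Fin n) ℂ) : Fin n → ℕ
  | j => if h : ∃ k, k < j ∧ X k j ≠ 0 then skelRk X h.choose + 1 else 0
  termination_by j => j.val
  decreasing_by exact h.choose_spec.1

/-- Start of the chain containing `j`. -/
noncomputable def skelSt {n : ℕ} (X : Matrix (Fin n) (Fin n) ℂ) : Fin n → Fin n
  | j => if h : ∃ k, k < j ∧ X k j ≠ 0 then skelSt X h.choose else j
  termination_by j => j.val
  decreasing_by exact h.choose_spec.1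

section aux
variable {n : ℕ} {X : Matrix (Fin n) (Fin n) ℂ}

lemma skel_step (hX : Skeletal X) {i j : Fin n} (hij : X i j ≠ 0) :
    skelRk X j = skelRk X i + 1 ∧ skelSt X j = skelSt X i := by
  have hlt : i < j := by
    by_contra hc
    exact hij (hX.1 i j (le_of_not_gt hc))
  have h : ∃ k, k < j ∧ X k j ≠ 0 := ⟨i, hlt, hij⟩
  have hc : h.choose = i := hX.2.2 h.choose i j h.choose_spec.2 hij
  constructor
  · rw [skelRk, dif_pos h, hc]
  · rw [skelSt, dif_pos h, hc]

lemma skel_rk_le_aux : ∀ m : ℕ, ∀ j : Fin n, j.val ≤ m → skelRk X j ≤ j.val := by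
  intro m
  induction m with
  | zero =>
    intro j hj
    rw [skelRk]
    split
    · next h =>
      have h1 : (h.choose : ℕ) < j.val := h.choose_spec.1
      omega
    · omega
  | succ m ih =>
    intro j hj
    rw [skelRk]
    split
    · next h =>
      have h1 : (h.choose : ℕ) < j.val := h.choose_spec.1
      have h2 := ih h.choose (by omega)
      omega
    · omega

lemma skel_rk_le (j : Fin n) : skelRk X j ≤ j.val :=
  skel_rk_le_aux j.val j le_rfl

lemma skel_inj (hX : Skeletal X) : ∀ r : ℕ, ∀ i j : Fin n, skelRk X i = r → skelRk X j = r →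
    skelSt X i = skelSt X j → i = j := by
  intro r
  induction r with
  | zero =>
    intro i j hi hj hst
    have hci : ¬ ∃ k, k < i ∧ X k i ≠ 0 := by
      intro h; rw [skelRk, dif_pos h] at hi; omega
    have hcj : ¬ ∃ k, k < j ∧ X k j ≠ 0 := by
      intro h; rw [skelRk, dif_pos h] at hj; omega
    rw [skelSt, dif_neg hci, skelSt, dif_neg hcj] at hst
    exact hst
  | succ r ih =>
    intro i j hi hj hst
    have hi0 : ∃ k, k < i ∧ X k i ≠ 0 := by
      by_contra hc
      rw [skelRk, dif_neg hc] at hi; omega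
    have hj0 : ∃ k, k < j ∧ X k j ≠ 0 := by
      by_contra hc
      rw [skelRk, dif_neg hc] at hj; omega
    obtain ⟨ki, _, hki⟩ := hi0
    obtain ⟨kj, _, hkj⟩ := hj0
    obtain ⟨hri, hsi⟩ := skel_step hX hki
    obtain ⟨hrj, hsj⟩ := skel_step hX hkj
    have hk : ki = kj := by
      apply ih <;> [omega; omega; skip]
      rw [← hsi, ← hsj, hst]
    subst hk
    exact hX.2.1 ki i j hki hkj

/-- A numeric key that is injective and increases by exactly 1 along the edges of `X`. -/
noncomputable def skelKey (X : Matrix (Fin n) (Fin n) ℂ) (j : Fin n) : ℕ :=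
  (skelSt X j).val * n + skelRk X j

lemma skelKey_inj (hX : Skeletal X) : Function.Injective (skelKey X) := by
  intro i j hij
  unfold skelKey at hij
  have h1 : skelRk X i < n := lt_of_le_of_lt (skel_rk_le i) i.isLt
  have h2 : skelRk X j < n := lt_of_le_of_lt (skel_rk_le j) j.isLt
  have hn : 0 < n := lt_of_le_of_lt (Nat.zero_le _) h1
  have e1 : ((skelSt X i).val * n + skelRk X i) / n = (skelSt X i).val := by
    rw [add_comm, Nat.add_mul_div_right _ _ hn, Nat.div_eq_of_lt h1, Nat.zero_add]
  have e2 : ((skelSt X j).val * n + skelRk X j) / n = (skelSt X j).val := by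
    rw [add_comm, Nat.add_mul_div_right _ _ hn, Nat.div_eq_of_lt h2, Nat.zero_add]
  have hst : (skelSt X i).val = (skelSt X j).val := by
    rw [← e1, ← e2, hij]
  have hrk : skelRk X i = skelRk X j := by rw [hst] at hij; omega
  exact skel_inj hX (skelRk X i) i j rfl hrk.symm (Fin.val_injective hst)

lemma skelKey_step (hX : Skeletal X) {i j : Fin n} (hij : X i j ≠ 0) :
    skelKey X j = skelKey X i + 1 := by
  obtain ⟨h1, h2⟩ := skel_step hX hij
  unfold skelKey
  rw [h1, h2]; ring

/-- The position of `i` when elements are sorted by key. -/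
noncomputable def skelW (X : Matrix (Fin n) (Fin n) ℂ) (i : Fin n) : ℕ :=
  (Finset.univ.filter (fun k => skelKey X k < skelKey X i)).card

lemma skelW_lt (i : Fin n) : skelW X i < n := by
  have hi : i ∉ Finset.univ.filter (fun k => skelKey X k < skelKey X i) := by
    simp
  have hss : Finset.univ.filter (fun k => skelKey X k < skelKey X i) ⊂ Finset.univ :=
    (Finset.ssubset_iff_of_subset (Finset.subset_univ _)).mpr
      ⟨i, Finset.mem_univ i, hi⟩
  have := Finset.card_lt_card hss
  simpa [skelW] using this

lemma skelW_injective (hX : Skeletal X) : Function.Injective (skelW X) := by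
  have mono : ∀ i j : Fin n, skelKey X i < skelKey X j → skelW X i < skelW X j := by
    intro i j hlt
    apply Finset.card_lt_card
    constructor
    · intro k hk
      simp only [Finset.mem_filter, Finset.mem_univ, true_and] at hk ⊢
      omega
    · intro hsub
      have hi : i ∈ Finset.univ.filter (fun k => skelKey X k < skelKey X j) := by
        simp [hlt]
      have := hsub hi
      simp at this
  intro i j hij
  by_contra hne
  have hk : skelKey X i ≠ skelKey X j := fun h => hne (skelKey_inj hX h)
  rcases lt_or_gt_of_ne hk with h | h
  · exact absurd hij (Nat.ne_of_lt (mono _ _ h))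
  · exact absurd hij.symm (Nat.ne_of_lt (mono _ _ h))

lemma skelW_step (hX : Skeletal X) {i j : Fin n} (hij : X i j ≠ 0) :
    skelW X j = skelW X i + 1 := by
  have hkey := skelKey_step hX hij
  have hset : Finset.univ.filter (fun k => skelKey X k < skelKey X j)
      = insert i (Finset.univ.filter (fun k => skelKey X k < skelKey X i)) := by
    ext k
    simp only [Finset.mem_filter, Finset.mem_univ, true_and, Finset.mem_insert, hkey]
    constructor
    · intro hk
      rcases Nat.lt_succ_iff_lt_or_eq.mp hk with h | h
      · exact Or.inr h
      · exact Or.inl (skelKey_inj hX h)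
    · rintro (rfl | h)
      · omega
      · omega
  have hi : i ∉ Finset.univ.filter (fun k => skelKey X k < skelKey X i) := by simp
  unfold skelW
  rw [hset, Finset.card_insert_of_notMem hi]

end aux

/-- For `X` skeletal nilpotent there is a permutation `w` of `{1,…,n}`
such that, with `s_w(t) = diag(t^{w(1)}, …, t^{w(n)})`, one has
`s_w(t)⁻¹ X s_w(t) = t • X` for all `t ∈ ℂ*`; consequently every Hessenberg variety
`H(X,H)` is stable under the subtorus `{s_w(t) : t ∈ ℂ*}`. -/
theorem stmt2 {n : ℕ} (X : Matrix (Fin n) (Fin n) ℂ) (hX : Skeletal X) :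
    ∃ w : Equiv.Perm (Fin n),
      (∀ t : ℂ, t ≠ 0 →
        (Matrix.diagonal (fun i => t ^ ((w i : ℕ) + 1)))⁻¹ * X *
          Matrix.diagonal (fun i => t ^ ((w i : ℕ) + 1)) = t • X) ∧
      (∀ h : Fin n → Fin n, (∀ i, i ≤ h i) → Monotone h →
        ∀ t : ℂ, t ≠ 0 → ∀ g : Matrix (Fin n) (Fin n) ℂ, IsUnit g →
          g⁻¹ * X * g ∈ hessSpace h →
          (Matrix.diagonal (fun i => t ^ ((w i : ℕ) + 1)) * g)⁻¹ * X *
            (Matrix.diagonal (fun i => t ^ ((w i : ℕ) + 1)) * g) ∈ hessSpace h) := by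
  classical
  set wf : Fin n → Fin n := fun i => ⟨skelW X i, skelW_lt i⟩ with hwf
  have hinj : Function.Injective wf := by
    intro i j hij
    exact skelW_injective hX (by simpa [hwf, Fin.ext_iff] using hij)
  set w : Equiv.Perm (Fin n) := Equiv.ofBijective wf (Finite.injective_iff_bijective.mp hinj)
    with hw
  have hwval : ∀ i : Fin n, ((w i : Fin n) : ℕ) = skelW X i := fun i => rfl
  have key1 : ∀ t : ℂ, t ≠ 0 →
      (Matrix.diagonal (fun i => t ^ ((w i : ℕ) + 1)))⁻¹ * X *
        Matrix.diagonal (fun i => t ^ ((w i : ℕ) + 1)) = t • X := by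
    intro t ht
    set d : Fin n → ℂ := fun i => t ^ ((w i : ℕ) + 1) with hd
    have hcomm : X * Matrix.diagonal d = Matrix.diagonal d * (t • X) := by
      ext i j
      rw [Matrix.mul_diagonal, Matrix.diagonal_mul, Matrix.smul_apply]
      by_cases hx : X i j = 0
      · simp [hx]
      · have hk : skelW X j = skelW X i + 1 := skelW_step hX hx
        show X i j * d j = d i * (t * X i j)
        rw [hd]
        simp only [hwval, hk]
        ring
    have hdet : IsUnit (Matrix.diagonal d).det := by
      rw [Matrix.det_diagonal]
      refine isUnit_iff_ne_zero.mpr (Finset.prod_ne_zero_iff.mpr fun i _ => ?_)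
      exact pow_ne_zero _ ht
    rw [mul_assoc, hcomm, ← mul_assoc, Matrix.nonsing_inv_mul _ hdet, one_mul]
  refine ⟨w, key1, ?_⟩
  intro h _ _ t ht g _ hmem
  set D : Matrix (Fin n) (Fin n) ℂ := Matrix.diagonal (fun i => t ^ ((w i : ℕ) + 1)) with hD
  have heq : (D * g)⁻¹ * X * (D * g) = t • (g⁻¹ * X * g) := by
    rw [Matrix.mul_inv_rev]
    have hassoc : g⁻¹ * D⁻¹ * X * (D * g) = g⁻¹ * (D⁻¹ * X * D) * g := by
      simp only [mul_assoc]
    rw [hassoc, key1 t ht, mul_smul_comm, smul_mul_assoc]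
  rw [heq]
  intro i j hij
  have h0 := hmem i j hij
  simp only [Matrix.smul_apply, h0, smul_zero]
end

section
/- Let X be an n×n skeletal nilpotent matrix and let w be a permutation of {1,…,n} such that s_w(t)⁻¹ X s_w(t) = t·X for all t ∈ ℂ*, where s_w(t) = diag(t^{w(1)}, …, t^{w(n)}). Then for every Hessenberg space H, the set of cosets {gB ∈ G/B : g⁻¹ X g ∈ H and, for all t ∈ ℂ*, g⁻¹ s_w(t) g ∈ B} is finite; that is, the subtorus {s_w(t) : t ∈ ℂ*} acts on H(X,H) with isolated (finitely many) fixed points. -/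
/-- Upper-triangular: all entries strictly below the diagonal vanish.  A coset `gB`
equals `fB` exactly when `g⁻¹ * f` is (invertible and) upper-triangular. -/
def UT {n : ℕ} (M : Matrix (Fin n) (Fin n) ℂ) : Prop :=
  ∀ i j : Fin n, j < i → M i j = 0

open Matrix Polynomial in
theorem stmt3' {n : ℕ}
    (w : Equiv.Perm (Fin n)) :
    ∃ F : Finset (Matrix (Fin n) (Fin n) ℂ),
      ∀ g : Matrix (Fin n) (Fin n) ℂ, IsUnit g →
        (∀ t : ℂ, t ≠ 0 →
          ∀ i j : Fin n, j < i → (g⁻¹ * (Matrix.diagonal fun i => t ^ ((w i : ℕ) + 1)) * g) i j = 0) →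
        ∃ f ∈ F, IsUnit f ∧ ∀ i j : Fin n, j < i → (g⁻¹ * f) i j = 0 := by
  classical
  refine ⟨Finset.univ.image (fun σ : Equiv.Perm (Fin n) =>
    (σ.toPEquiv.toMatrix : Matrix (Fin n) (Fin n) ℂ)), ?_⟩
  intro g hg hfix
  have hdet : IsUnit g.det := (Matrix.isUnit_iff_isUnit_det g).mp hg
  have hgg : g⁻¹ * g = 1 := Matrix.nonsing_inv_mul g hdet
  have hgg' : g * g⁻¹ = 1 := Matrix.mul_nonsing_inv g hdet
  -- Step 1: rank-one pieces are upper triangular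
  have step1 : ∀ i j k : Fin n, j < i → g⁻¹ i k * g k j = 0 := by
    intro i j k hji
    set c : Fin n → ℂ := fun k => g⁻¹ i k * g k j with hc
    have hsum : ∀ t : ℂ, t ≠ 0 → ∑ k, c k * t ^ ((w k : ℕ) + 1) = 0 := by
      intro t ht
      have h1 := hfix t ht i j hji
      rw [Matrix.mul_apply] at h1
      simp only [Matrix.mul_diagonal] at h1
      rw [← h1]
      exact Finset.sum_congr rfl (fun k _ => by ring)
    have hp : (∑ k, (C (c k) * X ^ ((w k : ℕ) + 1)) : ℂ[X]) = 0 := by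
      apply Polynomial.eq_zero_of_infinite_isRoot
      apply Set.Infinite.mono ?_ ((Set.finite_singleton (0:ℂ)).infinite_compl)
      intro t ht
      have ht' : t ≠ 0 := ht
      simp only [Set.mem_setOf_eq, IsRoot, eval_finset_sum, eval_mul, eval_C, eval_pow, eval_X]
      exact hsum t ht'
    have h2 := congrArg (fun p : ℂ[X] => p.coeff ((w k : ℕ) + 1)) hp
    simp only [Polynomial.finset_sum_coeff, Polynomial.coeff_C_mul,
      Polynomial.coeff_X_pow, Polynomial.coeff_zero] at h2
    rw [Finset.sum_eq_single k] at h2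
    · have h3 : c k = 0 := by simpa using h2
      exact h3
    · intro b _ hb
      have : ¬ ((w k : ℕ) + 1 = (w b : ℕ) + 1) := by
        intro hcon
        exact hb (w.injective (Fin.val_injective (Nat.succ_injective hcon))).symm
      rw [if_neg this, mul_zero]
    · intro hk; exact absurd (Finset.mem_univ k) hk
  -- uniqueness of diagonal support
  have uniq : ∀ k i i' : Fin n, g⁻¹ i k * g k i ≠ 0 → g⁻¹ i' k * g k i' ≠ 0 → i = i' := by
    intro k i i' hi hi'
    by_contra hne
    rcases lt_or_gt_of_ne hne with hlt | hlt
    · exact (mul_ne_zero (left_ne_zero_of_mul hi') (right_ne_zero_of_mul hi))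
        (step1 i' i k hlt)
    · exact (mul_ne_zero (left_ne_zero_of_mul hi) (right_ne_zero_of_mul hi'))
        (step1 i i' k hlt)
  -- existence
  have hex : ∀ k : Fin n, ∃ i : Fin n, g⁻¹ i k * g k i ≠ 0 := by
    intro k
    have hsum : ∑ i, g⁻¹ i k * g k i = 1 := by
      have : ∑ i, g k i * g⁻¹ i k = (g * g⁻¹) k k := (Matrix.mul_apply).symm
      rw [hgg'] at this
      simp only [Matrix.one_apply_eq] at this
      rw [← this]
      exact Finset.sum_congr rfl (fun i _ => mul_comm _ _)
    by_contra hcon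
    push_neg at hcon
    rw [Finset.sum_eq_zero (fun i _ => hcon i)] at hsum
    exact one_ne_zero hsum.symm
  set φ : Fin n → Fin n := fun k => Classical.choose (hex k) with hφdef
  have hφ : ∀ k, g⁻¹ (φ k) k * g k (φ k) ≠ 0 := fun k => Classical.choose_spec (hex k)
  have hsurj : Function.Surjective φ := by
    intro i
    have hsum : ∑ k, g⁻¹ i k * g k i = 1 := by
      have : ∑ k, g⁻¹ i k * g k i = (g⁻¹ * g) i i := (Matrix.mul_apply).symm
      rw [hgg] at this; simpa using this
    have : ∃ k, g⁻¹ i k * g k i ≠ 0 := by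
      by_contra hcon
      push_neg at hcon
      rw [Finset.sum_eq_zero (fun k _ => hcon k)] at hsum
      exact one_ne_zero hsum.symm
    obtain ⟨k, hk⟩ := this
    exact ⟨k, uniq k (φ k) i (hφ k) hk⟩
  have hbij : Function.Bijective φ := ⟨Finite.injective_iff_surjective.mpr hsurj, hsurj⟩
  set σ : Equiv.Perm (Fin n) := Equiv.ofBijective φ hbij with hσdef
  refine ⟨(σ.toPEquiv.toMatrix : Matrix (Fin n) (Fin n) ℂ),
    Finset.mem_image.mpr ⟨σ, Finset.mem_univ σ, rfl⟩, ?_, ?_⟩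
  · rw [Matrix.isUnit_iff_isUnit_det, Matrix.det_permutation]
    rcases Int.units_eq_one_or (Equiv.Perm.sign σ) with hs | hs <;> simp [hs]
  · intro i j hji
    rw [Matrix.mul_apply]
    apply Finset.sum_eq_zero
    intro k _
    by_cases hk : σ k = j
    · have hgk : g k j ≠ 0 := by
        have := right_ne_zero_of_mul (hφ k)
        rwa [show φ k = j from hk] at this
      have : g⁻¹ i k = 0 := by
        have := step1 i j k hji
        exact (mul_eq_zero.mp this).resolve_right hgk
      rw [this, zero_mul]
    · have : (σ.toPEquiv.toMatrix : Matrix (Fin n) (Fin n) ℂ) k j = 0 := by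
        simp [PEquiv.toMatrix, Equiv.toPEquiv, Option.mem_def]
        intro hc; exact absurd hc hk
      rw [this, mul_zero]

/-- Let `X` be skeletal nilpotent and `w` a permutation with
`s_w(t)⁻¹ X s_w(t) = t • X` for all `t ∈ ℂ*`, where `s_w(t) = diag(t^{w(i)})_i`.
Then for every Hessenberg space the set of cosets `gB` with `g⁻¹ X g ∈ H` that are
fixed by the subtorus `{s_w(t)}` (i.e. `g⁻¹ s_w(t) g ∈ B` for all `t ∈ ℂ*`) is
finite: there is a finite set `F` of invertible matrices such that every such `g`
lies in the coset `fB` of some `f ∈ F`. -/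
theorem stmt3 {n : ℕ} (X : Matrix (Fin n) (Fin n) ℂ) (hX : Skeletal X)
    (w : Equiv.Perm (Fin n))
    (hw : ∀ t : ℂ, t ≠ 0 →
      (Matrix.diagonal fun i => t ^ ((w i : ℕ) + 1))⁻¹ * X *
        (Matrix.diagonal fun i => t ^ ((w i : ℕ) + 1)) = t • X)
    (h : Fin n → Fin n) (hh1 : ∀ i, i ≤ h i) (hh2 : Monotone h) :
    ∃ F : Finset (Matrix (Fin n) (Fin n) ℂ),
      ∀ g : Matrix (Fin n) (Fin n) ℂ, IsUnit g → g⁻¹ * X * g ∈ hessSpace h →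
        (∀ t : ℂ, t ≠ 0 →
          UT (g⁻¹ * (Matrix.diagonal fun i => t ^ ((w i : ℕ) + 1)) * g)) →
        ∃ f ∈ F, IsUnit f ∧ UT (g⁻¹ * f) := by
  obtain ⟨F, hF⟩ := stmt3' w
  refine ⟨F, fun g hg _ hfix => ?_⟩
  obtain ⟨f, hfF, hfu, hut⟩ := hF g hg (fun t ht i j hji => hfix t ht i j hji)
  exact ⟨f, hfF, hfu, fun i j hji => hut i j hji⟩
end

section
/- Let X be an n×n skeletal nilpotent matrix whose nonzero rows are exactly i_1 < i_2 < ⋯ < i_k. Let t = diag(t_1,…,t_n) ∈ T satisfy t_{i_1}⁻¹ t_{X(i_1)} = t_{i_2}⁻¹ t_{X(i_2)} = ⋯ = t_{i_k}⁻¹ t_{X(i_k)}. Then t⁻¹ X t = c·X, where c is the common value of these ratios; consequently, for every linear subspace H of Mat_n(ℂ) and every g ∈ GL(n,ℂ), g⁻¹ X g ∈ H if and only if (tg)⁻¹ X (tg) ∈ H. In particular the Hessenberg variety H(X,H) is K-stable for the subtorus K = {t ∈ T : t_{i_1}⁻¹ t_{X(i_1)} = ⋯ = t_{i_k}⁻¹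 t_{X(i_k)}}. -/
/-- Let `X` be skeletal nilpotent whose nonzero rows are exactly
`ι 0 < ι 1 < ⋯ < ι (k-1)`, and let `t = diag(t_1,…,t_n)` satisfy
`t_i⁻¹ t_{X(i)} = t_{i'}⁻¹ t_{X(i')}` over all nonzero rows `i, i'`.  Then
`t⁻¹ X t = c • X` where `c` is the common value of the ratios; consequently for
every linear subspace `H` and every `g ∈ GL(n,ℂ)`, `g⁻¹ X g ∈ H` iff
`(tg)⁻¹ X (tg) ∈ H`.  In particular `H(X,H)` is stable under the subtorus `K`
of such `t`. -/
theorem stmt4 {n k : ℕ} (X : Matrix (Fin n) (Fin n) ℂ) (hX : Skeletal X)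
    (ι : Fin k → Fin n) (hι : StrictMono ι)
    (hrows : ∀ i : Fin n, (∃ j, X i j ≠ 0) ↔ ∃ a, ι a = i)
    (t : Fin n → ℂ) (ht : ∀ i, t i ≠ 0)
    (hK : ∀ i i' j j' : Fin n, X i j ≠ 0 → X i' j' ≠ 0 →
      (t i)⁻¹ * t j = (t i')⁻¹ * t j') :
    (∃ c : ℂ, (∀ (a : Fin k) (j : Fin n), X (ι a) j ≠ 0 → c = (t (ι a))⁻¹ * t j) ∧
      (Matrix.diagonal t)⁻¹ * X * Matrix.diagonal t = c • X) ∧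
    ∀ (H : Submodule ℂ (Matrix (Fin n) (Fin n) ℂ)) (g : Matrix (Fin n) (Fin n) ℂ),
      IsUnit g →
      (g⁻¹ * X * g ∈ H ↔
        (Matrix.diagonal t * g)⁻¹ * X * (Matrix.diagonal t * g) ∈ H) := by
  classical
  have hDinv : (Matrix.diagonal t)⁻¹ = Matrix.diagonal (fun i => (t i)⁻¹) := by
    refine Matrix.inv_eq_left_inv ?_
    rw [Matrix.diagonal_mul_diagonal]
    have : (fun i => (t i)⁻¹ * t i) = fun _ => (1 : ℂ) := by
      funext i; exact inv_mul_cancel₀ (ht i)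
    rw [this, Matrix.diagonal_one]
  obtain ⟨c, hcne, hcond, hmain⟩ : ∃ c : ℂ, c ≠ 0 ∧
      (∀ (a : Fin k) (j : Fin n), X (ι a) j ≠ 0 → c = (t (ι a))⁻¹ * t j) ∧
      (Matrix.diagonal t)⁻¹ * X * Matrix.diagonal t = c • X := by
    by_cases hex : ∃ i j, X i j ≠ 0
    · obtain ⟨i0, j0, h0⟩ := hex
      refine ⟨(t i0)⁻¹ * t j0, mul_ne_zero (inv_ne_zero (ht i0)) (ht j0),
        fun a j hne => (hK (ι a) i0 j j0 hne h0).symm, ?_⟩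
      ext i j
      simp only [hDinv, Matrix.diagonal_mul, Matrix.mul_diagonal,
        Matrix.smul_apply, smul_eq_mul]
      by_cases h : X i j = 0
      · simp [h]
      · have := hK i i0 j j0 h h0
        rw [← this]; ring
    · push_neg at hex
      have hX0 : X = 0 := by ext i j; exact hex i j
      refine ⟨1, one_ne_zero, fun a j hne => absurd (hex _ _) hne, ?_⟩
      simp [hX0]
  refine ⟨⟨c, hcond, hmain⟩, ?_⟩
  intro H g hg
  have key : (Matrix.diagonal t * g)⁻¹ * X * (Matrix.diagonal t * g)
      = c • (g⁻¹ * X * g) := by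
    rw [Matrix.mul_inv_rev]
    calc g⁻¹ * (Matrix.diagonal t)⁻¹ * X * (Matrix.diagonal t * g)
        = g⁻¹ * ((Matrix.diagonal t)⁻¹ * X * Matrix.diagonal t) * g := by
          noncomm_ring
      _ = c • (g⁻¹ * X * g) := by
          rw [hmain]
          simp [Matrix.mul_smul, Matrix.smul_mul, mul_assoc]
  constructor
  · intro hmem
    rw [key]
    exact H.smul_mem c hmem
  · intro hmem
    have := H.smul_mem c⁻¹ (key ▸ hmem)
    rwa [smul_smul, inv_mul_cancel₀ hcne, one_smul] at this
end

section
/- For every Hessenberg space H, the Hessenberg variety H(F_k, H) is K-stable for the subtorus K = {t = diag(t_1,…,t_n) ∈ T : t_{1+(n−k)}/t_1 = t_{2+(n−k)}/t_2 = ⋯ = t_n/t_k}; that is, if t ∈ K and g⁻¹ F_k g ∈ H then (tg)⁻¹ F_k (tg) ∈ H. In particular, the Hessenberg variety H(F_1, H) is T-stable for every Hessenberg space H. -/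
lemma key {n k : ℕ} (hk1 : 1 ≤ k) (hk2 : k ≤ n - 1)
    (h : Fin n → Fin n) (t : Fin n → ℂ) (ht : ∀ i, t i ≠ 0)
    (hc : ∀ i i' j j' : Fin n, (i : ℕ) < k → (i' : ℕ) < k →
        (j : ℕ) = (i : ℕ) + (n - k) → (j' : ℕ) = (i' : ℕ) + (n - k) →
        t j * (t i)⁻¹ = t j' * (t i')⁻¹)
    (g : Matrix (Fin n) (Fin n) ℂ)
    (hmem : g⁻¹ * Fmat n k * g ∈ hessSpace h) :
    (Matrix.diagonal t * g)⁻¹ * Fmat n k * (Matrix.diagonal t * g) ∈ hessSpace h := by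
  have hn2 : 2 ≤ n := by omega
  have h0 : (0 : ℕ) < n := by omega
  have hnk : n - k < n := by omega
  set i0 : Fin n := ⟨0, h0⟩
  set j0 : Fin n := ⟨n - k, hnk⟩
  set c : ℂ := t j0 * (t i0)⁻¹
  have hD : (Matrix.diagonal t)⁻¹ = Matrix.diagonal (fun i => (t i)⁻¹) := by
    apply Matrix.inv_eq_left_inv
    rw [Matrix.diagonal_mul_diagonal]
    have e : (fun i => (t i)⁻¹ * t i) = fun _ : Fin n => (1 : ℂ) := by
      funext i; exact inv_mul_cancel₀ (ht i)
    rw [e, Matrix.diagonal_one]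
  have hmid : Matrix.diagonal (fun i => (t i)⁻¹) * Fmat n k * Matrix.diagonal t
      = c • Fmat n k := by
    ext i j
    simp only [Matrix.diagonal_mul, Matrix.mul_diagonal, Matrix.smul_apply, Fmat, Matrix.of_apply,
      smul_eq_mul]
    by_cases hij : (i : ℕ) < k ∧ (j : ℕ) = n - k + (i : ℕ)
    · have := hc i i0 j j0 hij.1 hk1 (by omega) (by simp [j0, i0])
      have cdef : c = t j0 * (t i0)⁻¹ := rfl
      simp only [hij, and_self, if_true, mul_one, cdef, ← this]
      ring
    · simp [hij]
  have hrw : (Matrix.diagonal t * g)⁻¹ * Fmat n k * (Matrix.diagonal t * g)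
      = c • (g⁻¹ * Fmat n k * g) := by
    rw [Matrix.mul_inv_rev, hD]
    calc g⁻¹ * Matrix.diagonal (fun i => (t i)⁻¹) * Fmat n k * (Matrix.diagonal t * g)
        = g⁻¹ * (Matrix.diagonal (fun i => (t i)⁻¹) * Fmat n k * Matrix.diagonal t) * g := by
          simp only [Matrix.mul_assoc]
      _ = c • (g⁻¹ * Fmat n k * g) := by
          rw [hmid, Matrix.mul_smul, Matrix.smul_mul]
  rw [hrw]
  intro i j hij
  simp [Matrix.smul_apply, hmem i j hij]

/-- For every Hessenberg space `H`, `H(F_k, H)` is stable under the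
subtorus `K = {t ∈ T : t_{1+(n-k)}/t_1 = ⋯ = t_n/t_k}`; in particular `H(F_1, H)`
is `T`-stable. -/
theorem stmt5 {n k : ℕ} (hk1 : 1 ≤ k) (hk2 : k ≤ n - 1)
    (h : Fin n → Fin n) (hh1 : ∀ i, i ≤ h i) (hh2 : Monotone h) :
    (∀ t : Fin n → ℂ, (∀ i, t i ≠ 0) →
      (∀ i i' j j' : Fin n, (i : ℕ) < k → (i' : ℕ) < k →
        (j : ℕ) = (i : ℕ) + (n - k) → (j' : ℕ) = (i' : ℕ) + (n - k) →
        t j * (t i)⁻¹ = t j' * (t i')⁻¹) →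
      ∀ g : Matrix (Fin n) (Fin n) ℂ, IsUnit g →
        g⁻¹ * Fmat n k * g ∈ hessSpace h →
        (Matrix.diagonal t * g)⁻¹ * Fmat n k * (Matrix.diagonal t * g) ∈ hessSpace h) ∧
    (∀ t : Fin n → ℂ, (∀ i, t i ≠ 0) →
      ∀ g : Matrix (Fin n) (Fin n) ℂ, IsUnit g →
        g⁻¹ * Fmat n 1 * g ∈ hessSpace h →
        (Matrix.diagonal t * g)⁻¹ * Fmat n 1 * (Matrix.diagonal t * g) ∈ hessSpace h) := by
  constructor
  · intro t ht hc g _ hmem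
    exact key hk1 hk2 h t ht hc g hmem
  · intro t ht g _ hmem
    refine key le_rfl (by omega) h t ht ?_ g hmem
    intro i i' j j' hi hi' hj hj'
    have : j = j' := by
      apply Fin.ext; omega
    have hii : i = i' := by
      apply Fin.ext; omega
    rw [this, hii]
end

section
/- Let 1 ≤ k ≤ n−1 and let H be the Hessenberg space of the Hessenberg function with h(j) = n−1 for all j < n and h(n) = n. Then the Hessenberg variety H(F_k, H) is T-stable: for every invertible diagonal matrix t and every g ∈ GL(n,ℂ), if g⁻¹ F_k g ∈ H then (tg)⁻¹ F_k (tg) ∈ H. -/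
/-- The Hessenberg space for the Hessenberg function with `h(j) = n-1` for `j < n`
and `h(n) = n` (1-based): the only vanishing conditions are `M_{n,j} = 0` for
`j < n`, i.e. (0-based) `M i j = 0` for `i = n-1` and `j < n-1`. -/
def Hlast (n : ℕ) : Set (Matrix (Fin n) (Fin n) ℂ) :=
  {M | ∀ i j : Fin n, (i : ℕ) = n - 1 → (j : ℕ) < n - 1 → M i j = 0}

/-- For `1 ≤ k ≤ n-1` and `H` the Hessenberg space with `h(j) = n-1`
for `j < n` and `h(n) = n`, the Hessenberg variety `H(F_k, H)` is `T`-stable. -/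
theorem stmt6 {n k : ℕ} (hn : 2 ≤ n) (hk1 : 1 ≤ k) (hk2 : k ≤ n - 1)
    (t : Fin n → ℂ) (ht : ∀ i, t i ≠ 0)
    (g : Matrix (Fin n) (Fin n) ℂ) (hg : IsUnit g)
    (hmem : g⁻¹ * Fmat n k * g ∈ Hlast n) :
    (Matrix.diagonal t * g)⁻¹ * Fmat n k * (Matrix.diagonal t * g) ∈ Hlast n := by
  have hgd : IsUnit g.det := (Matrix.isUnit_iff_isUnit_det g).mp hg
  have hgi : g⁻¹ * g = 1 := Matrix.nonsing_inv_mul g hgd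
  have hgi' : g * g⁻¹ = 1 := Matrix.mul_nonsing_inv g hgd
  have hnk : 1 ≤ n - k := by omega
  set iN : Fin n := ⟨n - 1, by omega⟩ with hiNdef
  set v : Fin n → ℂ := fun j => g⁻¹ iN j with hvdef
  set w : Fin n → ℂ := fun j => ∑ i, v i * Fmat n k i j with hwdef
  have hFmat : ∀ (i j : Fin n),
      Fmat n k i j = if (i : ℕ) < k ∧ (j : ℕ) = n - k + (i : ℕ) then 1 else 0 :=
    fun i j => rfl
  have hw : ∀ j, w j = (g⁻¹ * Fmat n k) iN j := by
    intro j; rw [Matrix.mul_apply]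
  have hrow : ∀ j : Fin n, (j : ℕ) < n - 1 → ((g⁻¹ * Fmat n k) * g) iN j = 0 :=
    fun j hj => hmem iN j rfl hj
  set c : ℂ := ((g⁻¹ * Fmat n k) * g) iN iN with hcdef
  -- w = c • v
  have hwc : ∀ j, w j = c * v j := by
    intro j
    have h1 : w j = (((g⁻¹ * Fmat n k) * g) * g⁻¹) iN j := by
      rw [mul_assoc, hgi', mul_one]; exact hw j
    have h2 : (((g⁻¹ * Fmat n k) * g) * g⁻¹) iN j
        = ∑ l, ((g⁻¹ * Fmat n k) * g) iN l * g⁻¹ l j := Matrix.mul_apply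
    have h3 : ∑ l, ((g⁻¹ * Fmat n k) * g) iN l * g⁻¹ l j
        = ((g⁻¹ * Fmat n k) * g) iN iN * g⁻¹ iN j := by
      apply Finset.sum_eq_single
      · intro l _ hne
        have hl : (l : ℕ) < n - 1 := by
          have h4 := l.isLt
          have h5 : (l : ℕ) ≠ n - 1 := fun h => hne (Fin.ext h)
          omega
        rw [hrow l hl, zero_mul]
      · intro h; exact absurd (Finset.mem_univ iN) h
    rw [h1, h2, h3]
  -- explicit form of w
  have hwval : ∀ (j : Fin n), n - k ≤ (j : ℕ) → (j : ℕ) - (n - k) < k →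
      w j = v ⟨(j : ℕ) - (n - k), by have := j.isLt; omega⟩ := by
    intro j hj1 hj2
    set i0 : Fin n := ⟨(j : ℕ) - (n - k), by have := j.isLt; omega⟩ with hi0def
    have h3 : ∑ i, v i * Fmat n k i j = v i0 * Fmat n k i0 j := by
      apply Finset.sum_eq_single
      · intro i' _ hne
        rw [hFmat, if_neg, mul_zero]
        rintro ⟨ha, hb⟩
        exact hne (Fin.ext (show (i' : ℕ) = (j : ℕ) - (n - k) by omega))
      · intro h; exact absurd (Finset.mem_univ i0) h
    have h4 : Fmat n k i0 j = 1 := by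
      rw [hFmat, if_pos]
      exact ⟨hj2, show (j : ℕ) = n - k + ((j : ℕ) - (n - k)) by omega⟩
    calc w j = v i0 * Fmat n k i0 j := h3
      _ = v i0 := by rw [h4, mul_one]
  have hwzero : ∀ j : Fin n, ¬(n - k ≤ (j : ℕ) ∧ (j : ℕ) - (n - k) < k) → w j = 0 := by
    intro j hj
    apply Finset.sum_eq_zero
    intro i _
    rw [hFmat, if_neg, mul_zero]
    rintro ⟨ha, hb⟩
    omega
  -- c = 0 by nilpotency
  have hc : c = 0 := by
    by_contra hc
    have hv0 : ∀ m : ℕ, ∀ j : Fin n, (j : ℕ) = m → v j = 0 := by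
      intro m
      induction m using Nat.strong_induction_on with
      | _ m ih =>
        intro j hj
        by_cases h : n - k ≤ (j : ℕ) ∧ (j : ℕ) - (n - k) < k
        · have hwj := hwval j h.1 h.2
          have hvi : v ⟨(j : ℕ) - (n - k), by have := j.isLt; omega⟩ = 0 := by
            apply ih ((j : ℕ) - (n - k)) (by omega)
            rfl
          rw [hvi] at hwj
          have h3 := hwc j
          rw [hwj] at h3
          exact (mul_eq_zero.mp h3.symm).resolve_left hc
        · have hwj := hwzero j h
          have h3 := hwc j
          rw [hwj] at h3
          exact (mul_eq_zero.mp h3.symm).resolve_left hc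
    have h1 : (g⁻¹ * g) iN iN = 1 := by rw [hgi]; simp [Matrix.one_apply]
    rw [Matrix.mul_apply] at h1
    have h0 : ∑ l, g⁻¹ iN l * g l iN = 0 := by
      apply Finset.sum_eq_zero
      intro l _
      rw [show g⁻¹ iN l = v l from rfl, hv0 (l : ℕ) l rfl, zero_mul]
    rw [h0] at h1
    exact one_ne_zero h1.symm
  -- hence v vanishes on the first k coordinates
  have hvk : ∀ i : Fin n, (i : ℕ) < k → v i = 0 := by
    intro i hi
    have hlt : n - k + (i : ℕ) < n := by have := i.isLt; omega
    set j0 : Fin n := ⟨n - k + (i : ℕ), hlt⟩ with hj0def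
    have hj1 : n - k ≤ (j0 : ℕ) := by show n - k ≤ n - k + (i : ℕ); omega
    have hj2 : (j0 : ℕ) - (n - k) < k := by
      show n - k + (i : ℕ) - (n - k) < k; omega
    have h1 := hwval j0 hj1 hj2
    have h2 : (⟨(j0 : ℕ) - (n - k), by have := j0.isLt; omega⟩ : Fin n) = i :=
      Fin.ext (show n - k + (i : ℕ) - (n - k) = (i : ℕ) by omega)
    rw [h2] at h1
    have h3 := hwc j0
    rw [h1, hc, zero_mul] at h3
    exact h3
  -- now the conclusion
  have hinv : (Matrix.diagonal t * g)⁻¹ = g⁻¹ * Matrix.diagonal (Ring.inverse t) := by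
    rw [Matrix.mul_inv_rev, Matrix.inv_diagonal]
  intro i j hi hj
  have hiN : i = iN := Fin.ext hi
  subst hiN
  rw [hinv]
  have hrow0 : ∀ l : Fin n, (g⁻¹ * Matrix.diagonal (Ring.inverse t) * Fmat n k) iN l = 0 := by
    intro l
    rw [Matrix.mul_apply]
    apply Finset.sum_eq_zero
    intro x _
    rw [Matrix.mul_diagonal]
    by_cases hx : (x : ℕ) < k
    · rw [show g⁻¹ iN x = v x from rfl, hvk x hx, zero_mul, zero_mul]
    · rw [hFmat, if_neg (fun h => hx h.1), mul_zero]
  rw [Matrix.mul_apply]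
  apply Finset.sum_eq_zero
  intro l _
  rw [hrow0 l, zero_mul]
end

section
/- Let 1 ≤ k ≤ n−1 and let H be the Hessenberg space of the Hessenberg function with h(j) = n−1 for all j < n and h(n) = n. If g, g' ∈ GL(n,ℂ) lie in the same double coset of B, i.e. g' ∈ B g B, and g⁻¹ F_k g ∈ H, then also g'⁻¹ F_k g' ∈ H. Hence the Hessenberg variety H(F_k, H) is a union of Schubert cells BwB/B. -/
lemma ut_inv {n : ℕ} (M : Matrix (Fin n) (Fin n) ℂ) (hM : IsUnit M) (hu : UT M) :
    UT M⁻¹ := by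
  have hdet : IsUnit M.det := (Matrix.isUnit_iff_isUnit_det M).mp hM
  haveI : Invertible M := Matrix.invertibleOfIsUnitDet M hdet
  have hbt : M.BlockTriangular (id : Fin n → Fin n) := fun i j h => hu i j h
  have := Matrix.blockTriangular_inv_of_blockTriangular hbt
  intro i j h
  exact this h

/-- row-vector times `Fmat`. -/
lemma row_mul_F {n k : ℕ} (hk1 : 1 ≤ k) (hk2 : k ≤ n - 1)
    (v : Fin n → ℂ) (j : Fin n) :
    (∑ m, v m * Fmat n k m j) =
      if h : n - k ≤ (j : ℕ) then
        v ⟨(j : ℕ) - (n - k), lt_of_le_of_lt (Nat.sub_le _ _) j.isLt⟩ else 0 := by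
  have hjn := j.isLt
  split_ifs with h
  · rw [Finset.sum_eq_single (⟨(j : ℕ) - (n - k),
      lt_of_le_of_lt (Nat.sub_le _ _) j.isLt⟩ : Fin n)
      (fun m _ hm => ?_) (fun h' => absurd (Finset.mem_univ _) h')]
    · have hcond : ((⟨(j : ℕ) - (n - k),
          lt_of_le_of_lt (Nat.sub_le _ _) j.isLt⟩ : Fin n) : ℕ) < k ∧
          (j : ℕ) = n - k + ((⟨(j : ℕ) - (n - k),
          lt_of_le_of_lt (Nat.sub_le _ _) j.isLt⟩ : Fin n) : ℕ) := by
        simp only [Fin.val_mk]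
        omega
      simp only [Fmat, Matrix.of_apply, if_pos hcond, mul_one]
    · have hncond : ¬ ((m : ℕ) < k ∧ (j : ℕ) = n - k + (m : ℕ)) := by
        intro hc
        exact hm (Fin.ext (by simp only [Fin.val_mk]; omega))
      simp only [Fmat, Matrix.of_apply, if_neg hncond, mul_zero]
  · apply Finset.sum_eq_zero
    intro m _
    have : ¬ ((m : ℕ) < k ∧ (j : ℕ) = n - k + (m : ℕ)) := by omega
    simp [Fmat, this]

/-- Key characterization: `g⁻¹ Fₖ g ∈ Hlast n` iff the last row of `g⁻¹` vanishes
in the first `k` columns. -/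
lemma key_s7 {n k : ℕ} (hn : 2 ≤ n) (hk1 : 1 ≤ k) (hk2 : k ≤ n - 1)
    (g : Matrix (Fin n) (Fin n) ℂ) (hg : IsUnit g) :
    g⁻¹ * Fmat n k * g ∈ Hlast n ↔
      ∀ i : Fin n, (i : ℕ) < k → g⁻¹ ⟨n - 1, by omega⟩ i = 0 := by
  have hdet : IsUnit g.det := (Matrix.isUnit_iff_isUnit_det g).mp hg
  set e : Fin n := ⟨n - 1, by omega⟩ with he
  have hev : (e : ℕ) = n - 1 := rfl
  set u : Fin n → ℂ := fun j => g⁻¹ e j with hu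
  have hgF : ∀ j : Fin n, (g⁻¹ * Fmat n k) e j =
      (if h : n - k ≤ (j : ℕ) then
        u ⟨(j : ℕ) - (n - k), lt_of_le_of_lt (Nat.sub_le _ _) j.isLt⟩ else 0) := by
    intro j
    rw [Matrix.mul_apply]
    exact row_mul_F hk1 hk2 u j
  constructor
  · intro hmem
    set c : ℂ := (g⁻¹ * Fmat n k * g) e e with hc
    have hrow : ∀ j : Fin n, (g⁻¹ * Fmat n k * g) e j = if j = e then c else 0 := by
      intro j
      by_cases hje : j = e
      · simp [hje, hc]
      · have hj : (j : ℕ) < n - 1 := by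
          have h1 := j.isLt
          have h2 : (j : ℕ) ≠ n - 1 := fun h => hje (Fin.ext (h.trans hev.symm))
          omega
        simp [hje, hmem e j hev hj]
    have hstep : ∀ m : Fin n, (g⁻¹ * Fmat n k) e m = c * u m := by
      intro m
      have h1 : (g⁻¹ * Fmat n k) = (g⁻¹ * Fmat n k * g) * g⁻¹ := by
        rw [mul_assoc, Matrix.mul_nonsing_inv g hdet, mul_one]
      rw [h1, Matrix.mul_apply,
        Finset.sum_eq_single e (fun b _ hb => by rw [hrow b, if_neg hb, zero_mul])
          (fun h => absurd (Finset.mem_univ _) h), hrow e, if_pos rfl]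
    have heq : ∀ j : Fin n,
        (if h : n - k ≤ (j : ℕ) then
          u ⟨(j : ℕ) - (n - k), lt_of_le_of_lt (Nat.sub_le _ _) j.isLt⟩ else 0)
        = c * u j := fun j => (hgF j).symm.trans (hstep j)
    by_cases hc0 : c = 0
    · intro i hi
      have hik := i.isLt
      have hjlt : n - k + (i : ℕ) < n := by omega
      have h := heq ⟨n - k + (i : ℕ), hjlt⟩
      rw [dif_pos (by simp only [Fin.val_mk]; omega), hc0, zero_mul] at h
      convert h using 2
      exact Fin.ext (by simp only [Fin.val_mk]; omega)
    · exfalso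
      have hz : ∀ m : ℕ, ∀ j : Fin n, (j : ℕ) = m → u j = 0 := by
        intro m
        induction m using Nat.strong_induction_on with
        | _ m ih =>
          intro j hj
          have h := heq j
          by_cases hle : n - k ≤ (j : ℕ)
          · rw [dif_pos hle] at h
            have hlt : (j : ℕ) - (n - k) < m := by omega
            rw [ih _ hlt _ rfl] at h
            exact (mul_eq_zero.mp h.symm).resolve_left hc0
          · rw [dif_neg hle] at h
            exact (mul_eq_zero.mp h.symm).resolve_left hc0
      have h1 : (g⁻¹ * g) e e = 1 := by
        rw [Matrix.nonsing_inv_mul g hdet]; simp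
      rw [Matrix.mul_apply] at h1
      rw [Finset.sum_eq_zero
        (fun (m : Fin n) _ => mul_eq_zero_of_left (hz (m : ℕ) m rfl) (g m e))] at h1
      exact one_ne_zero h1.symm
  · intro hzero i j hi hj
    have hie : i = e := Fin.ext (hi.trans hev.symm)
    subst hie
    rw [Matrix.mul_apply]
    apply Finset.sum_eq_zero
    intro m _
    rw [hgF m]
    split_ifs with h
    · exact mul_eq_zero_of_left (hzero _ (by simp only [Fin.val_mk]; omega)) _
    · rw [zero_mul]

/-- With `H` the Hessenberg space for `h(j) = n-1` (`j < n`), `h(n) = n`: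
if `g' ∈ B g B` (i.e. `g' = b₁ g b₂` with `b₁, b₂` invertible upper-triangular) and
`g⁻¹ F_k g ∈ H`, then `g'⁻¹ F_k g' ∈ H`.  Hence `H(F_k, H)` is a union of Schubert
cells `BwB/B`. -/
theorem stmt7 {n k : ℕ} (hn : 2 ≤ n) (hk1 : 1 ≤ k) (hk2 : k ≤ n - 1)
    (g g' b₁ b₂ : Matrix (Fin n) (Fin n) ℂ)
    (hg : IsUnit g) (hb₁ : IsUnit b₁) (hb₂ : IsUnit b₂)
    (hb₁u : UT b₁) (hb₂u : UT b₂)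
    (hg' : g' = b₁ * g * b₂)
    (hmem : g⁻¹ * Fmat n k * g ∈ Hlast n) :
    g'⁻¹ * Fmat n k * g' ∈ Hlast n := by
  have hg'unit : IsUnit g' := by rw [hg']; exact (hb₁.mul hg).mul hb₂
  set e : Fin n := ⟨n - 1, by omega⟩ with he
  have hev : (e : ℕ) = n - 1 := rfl
  rw [key_s7 hn hk1 hk2 g hg] at hmem
  rw [key_s7 hn hk1 hk2 g' hg'unit]
  intro i hi
  have hb₁i : UT b₁⁻¹ := ut_inv b₁ hb₁ hb₁u
  have hb₂i : UT b₂⁻¹ := ut_inv b₂ hb₂ hb₂u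
  have hinv : g'⁻¹ = b₂⁻¹ * (g⁻¹ * b₁⁻¹) := by
    rw [hg', Matrix.mul_inv_rev, Matrix.mul_inv_rev]
  show g'⁻¹ e i = 0
  rw [hinv, Matrix.mul_apply]
  apply Finset.sum_eq_zero
  intro a _
  by_cases hae : a = e
  · subst hae
    rw [Matrix.mul_apply, Finset.sum_eq_zero (fun m _ => ?_), mul_zero]
    by_cases hm : (m : ℕ) < k
    · exact mul_eq_zero_of_left (hmem m hm) _
    · exact mul_eq_zero_of_right _ (hb₁i m i (by rw [Fin.lt_def]; omega))
  · refine mul_eq_zero_of_left (hb₂i e a ?_) _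
    have h1 := a.isLt
    have h2 : (a : ℕ) ≠ n - 1 := fun h => hae (Fin.ext (h.trans hev.symm))
    rw [Fin.lt_def, hev]
    omega
end

section
/- Let 1 ≤ k ≤ n−1 and let H be the Hessenberg space of the Hessenberg function with h(j) = n−1 for all j < n and h(n) = n. If g ∈ GL(n,ℂ) satisfies g⁻¹ F_k g ∈ H, then each standard basis vector e_1, …, e_k of ℂⁿ lies in the span of the first n−1 columns of g. In particular H(F_k, H) is a proper subset of G/B: there exists g ∈ GL(n,ℂ) with g⁻¹ F_k g ∉ H. -/
lemma nilpAux {n : ℕ} (M : Matrix (Fin n) (Fin n) ℂ)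
    (h : ∀ i j : Fin n, (j : ℕ) ≤ (i : ℕ) → M i j = 0) :
    ∀ m : ℕ, ∀ i j : Fin n, (j : ℕ) < (i : ℕ) + m → (M ^ m) i j = 0 := by
  intro m
  induction m with
  | zero =>
    intro i j hij
    simp only [pow_zero, Matrix.one_apply]
    exact if_neg (fun e => by subst e; omega)
  | succ m ih =>
    intro i j hij
    rw [pow_succ', Matrix.mul_apply]
    apply Finset.sum_eq_zero
    intro l _
    by_cases hl : (l : ℕ) ≤ (i : ℕ)
    · rw [h i l hl, zero_mul]
    · rw [ih l j (by omega), mul_zero]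

lemma conjPow {n : ℕ} (g F : Matrix (Fin n) (Fin n) ℂ)
    (h1 : g⁻¹ * g = 1) (h2 : g * g⁻¹ = 1) :
    ∀ m : ℕ, (g⁻¹ * F * g) ^ m = g⁻¹ * F ^ m * g := by
  intro m
  induction m with
  | zero => rw [pow_zero, pow_zero, Matrix.mul_one, h1]
  | succ m ih =>
    rw [pow_succ, ih]
    conv_rhs => rw [pow_succ]
    simp only [Matrix.mul_assoc]
    rw [← Matrix.mul_assoc g g⁻¹, h2, Matrix.one_mul]

/-- With `H` the Hessenberg space for `h(j) = n-1` (`j < n`), `h(n) = n`: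
if `g⁻¹ F_k g ∈ H` then each standard basis vector `e_1, …, e_k` lies in the span of
the first `n-1` columns of `g`.  In particular `H(F_k, H)` is a proper subset of
`G/B`: there is an invertible `g` with `g⁻¹ F_k g ∉ H`. -/
theorem stmt8 {n k : ℕ} (hn : 2 ≤ n) (hk1 : 1 ≤ k) (hk2 : k ≤ n - 1) :
    (∀ g : Matrix (Fin n) (Fin n) ℂ, IsUnit g → g⁻¹ * Fmat n k * g ∈ Hlast n →
      ∀ i : Fin n, (i : ℕ) < k →
        (Pi.single i 1 : Fin n → ℂ) ∈ Submodule.span ℂ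
          {v : Fin n → ℂ | ∃ c : Fin n, (c : ℕ) < n - 1 ∧ v = fun r => g r c}) ∧
    ∃ g : Matrix (Fin n) (Fin n) ℂ, IsUnit g ∧ g⁻¹ * Fmat n k * g ∉ Hlast n := by
  constructor
  · intro g hg hH i hi
    have hdet := (Matrix.isUnit_iff_isUnit_det g).mp hg
    have h1 : g⁻¹ * g = 1 := Matrix.nonsing_inv_mul g hdet
    have h2 : g * g⁻¹ = 1 := Matrix.mul_nonsing_inv g hdet
    set M := g⁻¹ * Fmat n k * g with hM
    have hlastlt : n - 1 < n := by omega
    set last : Fin n := ⟨n - 1, hlastlt⟩ with hlastdef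
    have hrow : ∀ j : Fin n, j ≠ last → M last j = 0 := by
      intro j hj
      apply hH last j rfl
      have hjn := j.isLt
      have : (j : ℕ) ≠ n - 1 := fun e => hj (Fin.ext e)
      omega
    set c := M last last with hc
    have hpow : ∀ m : ℕ, ∀ j : Fin n,
        (M ^ m) last j = c ^ m * (if j = last then 1 else 0) := by
      intro m
      induction m with
      | zero =>
        intro j
        simp only [pow_zero, Matrix.one_apply]
        by_cases hj : j = last
        · simp [hj]
        · rw [if_neg (fun e => hj e.symm), if_neg hj, mul_zero]
      | succ m ih =>
        intro j
        rw [pow_succ, Matrix.mul_apply]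
        rw [Finset.sum_eq_single last
          (fun l _ hl => by rw [ih l, if_neg hl, mul_zero, zero_mul])
          (fun h => absurd (Finset.mem_univ last) h)]
        rw [ih last, if_pos rfl, mul_one]
        by_cases hj : j = last
        · subst hj
          rw [if_pos rfl, mul_one, ← hc, pow_succ]
        · rw [hrow j hj, mul_zero, if_neg hj, mul_zero]
    have hFn : (Fmat n k) ^ n = 0 := by
      ext i' j'
      rw [Matrix.zero_apply]
      exact nilpAux _ (fun a b hab => by
        simp only [Fmat, Matrix.of_apply]
        rw [if_neg]
        rintro ⟨ha, hb⟩
        omega) n i' j' (by have := j'.isLt; omega)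
    have hMn : M ^ n = 0 := by
      rw [hM, conjPow g _ h1 h2, hFn, Matrix.mul_zero, Matrix.zero_mul]
    have hc0 : c = 0 := by
      have h' := hpow n last
      rw [hMn, if_pos rfl, mul_one, Matrix.zero_apply] at h'
      exact (pow_eq_zero_iff (by omega : n ≠ 0)).mp h'.symm
    have hrowall : ∀ j, M last j = 0 := by
      intro j
      by_cases hj : j = last
      · rw [hj, ← hc, hc0]
      · exact hrow j hj
    have hGF : g⁻¹ * Fmat n k = M * g⁻¹ := by
      rw [hM, Matrix.mul_assoc (g⁻¹ * Fmat n k) g g⁻¹, h2, Matrix.mul_one]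
    have hGF0 : ∀ j, (g⁻¹ * Fmat n k) last j = 0 := by
      intro j
      rw [hGF, Matrix.mul_apply]
      exact Finset.sum_eq_zero fun l _ => by rw [hrowall l, zero_mul]
    have hcol : g⁻¹ last i = 0 := by
      have hjlt : n - k + (i : ℕ) < n := by omega
      have h' := hGF0 ⟨n - k + i, hjlt⟩
      rw [Matrix.mul_apply] at h'
      rw [Finset.sum_eq_single i
        (fun l _ hl => by
          simp only [Fmat, Matrix.of_apply]
          rw [if_neg, mul_zero]
          rintro ⟨hl1, hl2⟩
          exact hl (Fin.ext (by omega)))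
        (fun h => absurd (Finset.mem_univ i) h)] at h'
      simp only [Fmat, Matrix.of_apply] at h'
      rw [if_pos ⟨hi, trivial⟩, mul_one] at h'
      exact h'
    have key : (Pi.single i 1 : Fin n → ℂ)
        = ∑ cc : Fin n, g⁻¹ cc i • (fun r => g r cc) := by
      funext r
      have h1r : (g * g⁻¹) r i = (1 : Matrix (Fin n) (Fin n) ℂ) r i := by rw [h2]
      rw [Matrix.mul_apply, Matrix.one_apply] at h1r
      simp only [Finset.sum_apply, Pi.smul_apply, smul_eq_mul]
      rw [Pi.single_apply, ← h1r]
      exact Finset.sum_congr rfl fun cc _ => mul_comm _ _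
    rw [key]
    apply Submodule.sum_mem
    intro cc _
    by_cases hcc : (cc : ℕ) < n - 1
    · exact Submodule.smul_mem _ _ (Submodule.subset_span ⟨cc, hcc, rfl⟩)
    · have hcl : cc = last := by
        apply Fin.ext
        show (cc : ℕ) = n - 1
        have := cc.isLt
        omega
      rw [hcl, hcol, zero_smul]
      exact Submodule.zero_mem _
  · have h0n : 0 < n := by omega
    have hlastlt : n - 1 < n := by omega
    set a : Fin n := ⟨0, h0n⟩ with ha
    set b : Fin n := ⟨n - 1, hlastlt⟩ with hb
    set τ := Equiv.swap a b with hτ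
    set P : Matrix (Fin n) (Fin n) ℂ :=
      Matrix.of fun i j => if i = τ j then 1 else 0 with hP
    have hPP : P * P = 1 := by
      ext i j
      rw [Matrix.mul_apply, Matrix.one_apply]
      rw [Finset.sum_eq_single (τ j)
        (fun l _ hl => by
          simp only [hP, Matrix.of_apply]
          rw [if_neg hl, mul_zero])
        (fun h => absurd (Finset.mem_univ _) h)]
      simp only [hP, Matrix.of_apply]
      rw [if_pos trivial, mul_one, Equiv.swap_apply_self]
    have hPinv : P⁻¹ = P := Matrix.inv_eq_left_inv hPP
    have hPF : ∀ i j : Fin n, (P * Fmat n k * P) i j = Fmat n k (τ i) (τ j) := by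
      intro i j
      rw [Matrix.mul_apply]
      rw [Finset.sum_eq_single (τ j)
        (fun l _ hl => by
          simp only [hP, Matrix.of_apply]
          rw [if_neg hl, mul_zero])
        (fun h => absurd (Finset.mem_univ _) h)]
      simp only [hP, Matrix.of_apply]
      rw [if_pos trivial, mul_one, Matrix.mul_apply]
      rw [Finset.sum_eq_single (τ i)
        (fun l _ hl => by
          simp only [hP, Matrix.of_apply]
          rw [if_neg (fun e => hl (by rw [e, Equiv.swap_apply_self])), zero_mul])
        (fun h => absurd (Finset.mem_univ _) h)]
      simp only [hP, Matrix.of_apply]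
      rw [if_pos (Equiv.swap_apply_self _ _ _).symm, one_mul]
    refine ⟨P, ⟨⟨P, P, hPP, hPP⟩, rfl⟩, ?_⟩
    intro hmem
    have hjn : n - k < n := by omega
    set j0 : Fin n := τ ⟨n - k, hjn⟩ with hj0
    have hj0lt : (j0 : ℕ) < n - 1 := by
      by_cases hk : k = 1
      · have hbb : (⟨n - k, hjn⟩ : Fin n) = b := Fin.ext (by simp [hb]; omega)
        rw [hj0, hbb, hτ, Equiv.swap_apply_right]
        simp [ha]
        omega
      · have hne1 : (⟨n - k, hjn⟩ : Fin n) ≠ a := by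
          intro e
          have := congrArg Fin.val e
          simp [ha] at this
          omega
        have hne2 : (⟨n - k, hjn⟩ : Fin n) ≠ b := by
          intro e
          have := congrArg Fin.val e
          simp [hb] at this
          omega
        rw [hj0, hτ, Equiv.swap_apply_of_ne_of_ne hne1 hne2]
        simp
        omega
    have hval : (P⁻¹ * Fmat n k * P) b j0 = 1 := by
      rw [hPinv, hPF, hj0, Equiv.swap_apply_self, hτ, Equiv.swap_apply_right]
      simp only [Fmat, Matrix.of_apply]
      rw [if_pos ⟨by simp [ha]; omega, by simp [ha]⟩]
    have h0 := hmem b j0 rfl hj0lt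
    rw [hval] at h0
    exact one_ne_zero h0
end

section
/- Let M be an n×m complex matrix whose columns are all nonzero, whose pivot rows piv(M_1), …, piv(M_m) are pairwise distinct, and such that for each column j with pivot row r = piv(M_j), M_{r,j'} = 0 for every column j' > j. Let y ∈ ℂⁿ be nonzero with ℓ = piv(y), and let A, B, v, v' be the pivot matrix, dependent matrix, solution vector and constraint vector of the system (M | y). Then: (1) the pivot matrix A is invertible; (2) the linear system Mx = y has at most one solution x ∈ ℂᵐ; and (3) if Mx = y has a solution, then that solution satisfies x_j = 0 for all columns j ∉ C and (x_j)_{j∈C} = A⁻¹v, and moreover B A⁻¹ v = v'. -/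
/-- The pivot matrix of the system `(M | y)`: rows and columns are indexed by the
set `C` of columns of `M` whose pivot row `pr j` satisfies `pr j ≤ ℓ`; the row
indexed by `j ∈ C` is the row of `M` with index the pivot row `pr j` (so the rows
are exactly the pivot rows `R = pr '' C`, enumerated via the bijection `pr : C ≃ R`). -/
def pivotMat {n m : ℕ} (M : Matrix (Fin n) (Fin m) ℂ) (pr : Fin m → Fin n) (ℓ : Fin n) :
    Matrix {j : Fin m // pr j ≤ ℓ} {j : Fin m // pr j ≤ ℓ} ℂ :=
  Matrix.of fun j j' => M (pr j.1) j'.1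

/-- The dependent matrix of the system `(M | y)`: rows indexed by the rows `i ≤ ℓ`
that are not pivot rows of columns in `C`, columns indexed by `C`. -/
def depMat {n m : ℕ} (M : Matrix (Fin n) (Fin m) ℂ) (pr : Fin m → Fin n) (ℓ : Fin n) :
    Matrix {i : Fin n // i ≤ ℓ ∧ ∀ j : Fin m, pr j ≤ ℓ → pr j ≠ i}
           {j : Fin m // pr j ≤ ℓ} ℂ :=
  Matrix.of fun i j => M i.1 j.1

/-- Let `M` be an `n × m` matrix with nonzero columns, pairwise distinct
pivot rows `pr j` (so `M (pr j) j ≠ 0` and `M i j = 0` for `i > pr j`), vanishing in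
each pivot row to the right of the pivot, and let `y ≠ 0` have pivot row `ℓ`.  Then:
(1) the pivot matrix `A` is invertible; (2) the system `M x = y` has at most one
solution; (3) any solution `x` vanishes outside `C`, restricts on `C` to `A⁻¹ v`
where `v = (y_{pr j})_{j ∈ C}` is the solution vector, and `B A⁻¹ v = v'` where
`v' = (y_i)_{i ≤ ℓ, i ∉ R}` is the constraint vector. -/
theorem stmt9 {n m : ℕ} (M : Matrix (Fin n) (Fin m) ℂ) (pr : Fin m → Fin n)
    (hpiv : ∀ j, M (pr j) j ≠ 0) (hbelow : ∀ j i, pr j < i → M i j = 0)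
    (hinj : Function.Injective pr)
    (hright : ∀ j j' : Fin m, j < j' → M (pr j) j' = 0)
    (y : Fin n → ℂ) (ℓ : Fin n) (hy : y ℓ ≠ 0) (hybelow : ∀ i, ℓ < i → y i = 0) :
    IsUnit (pivotMat M pr ℓ) ∧
    (∀ x x' : Fin m → ℂ, M.mulVec x = y → M.mulVec x' = y → x = x') ∧
    (∀ x : Fin m → ℂ, M.mulVec x = y →
      (∀ j : Fin m, ¬ pr j ≤ ℓ → x j = 0) ∧
      ((fun j : {j : Fin m // pr j ≤ ℓ} => x j.1) =
        (pivotMat M pr ℓ)⁻¹.mulVec (fun j => y (pr j.1))) ∧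
      ((depMat M pr ℓ).mulVec ((pivotMat M pr ℓ)⁻¹.mulVec (fun j => y (pr j.1))) =
        fun i => y i.1)) := by
  classical
  -- (1) invertibility of the pivot matrix
  have hdet : (pivotMat M pr ℓ).det = ∏ j : {j : Fin m // pr j ≤ ℓ}, M (pr j.1) j.1 := by
    apply Matrix.det_of_lowerTriangular
    intro j j' hlt
    exact hright j.1 j'.1 (Subtype.coe_lt_coe.2 (OrderDual.toDual_lt_toDual.1 hlt))
  have hAunit : IsUnit (pivotMat M pr ℓ) := by
    rw [Matrix.isUnit_iff_isUnit_det, hdet, isUnit_iff_ne_zero]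
    exact Finset.prod_ne_zero_iff.2 fun j _ => hpiv j.1
  have hAdet : IsUnit (pivotMat M pr ℓ).det := (Matrix.isUnit_iff_isUnit_det _).1 hAunit
  -- kernel of M is trivial
  have hker : ∀ x : Fin m → ℂ, M.mulVec x = 0 → x = 0 := by
    intro x hx
    by_contra hne
    have hS : (Finset.univ.filter fun j => x j ≠ 0).Nonempty := by
      obtain ⟨j, hj⟩ := Function.ne_iff.1 hne
      exact ⟨j, Finset.mem_filter.2 ⟨Finset.mem_univ _, hj⟩⟩
    set j := (Finset.univ.filter fun j => x j ≠ 0).min' hS with hj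
    have hjx : x j ≠ 0 := (Finset.mem_filter.1 (Finset.min'_mem _ hS)).2
    have hsum : M.mulVec x (pr j) = M (pr j) j * x j := by
      simp only [Matrix.mulVec, dotProduct]
      apply Finset.sum_eq_single j
      · intro j' _ hj'
        rcases lt_or_gt_of_ne hj' with h | h
        · by_cases hx' : x j' = 0
          · rw [hx', mul_zero]
          · exact absurd (Finset.min'_le _ j' (Finset.mem_filter.2 ⟨Finset.mem_univ _, hx'⟩)) (not_le.2 h)
        · rw [hright j j' h, zero_mul]
      · intro h; exact absurd (Finset.mem_univ j) h
    rw [hx] at hsum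
    exact mul_ne_zero (hpiv j) hjx hsum.symm
  have huniq : ∀ x x' : Fin m → ℂ, M.mulVec x = y → M.mulVec x' = y → x = x' := by
    intro x x' hx hx'
    have : M.mulVec (x - x') = 0 := by
      rw [Matrix.mulVec_sub, hx, hx', sub_self]
    have := hker _ this
    exact sub_eq_zero.1 this
  refine ⟨hAunit, huniq, ?_⟩
  intro x hMx
  -- (a) x vanishes outside C
  have ha : ∀ j : Fin m, ¬ pr j ≤ ℓ → x j = 0 := by
    by_contra hne
    push_neg at hne
    have hS : (Finset.univ.filter fun j => ¬ pr j ≤ ℓ ∧ x j ≠ 0).Nonempty := by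
      obtain ⟨j, h1, h2⟩ := hne
      exact ⟨j, Finset.mem_filter.2 ⟨Finset.mem_univ _, not_le.2 h1, h2⟩⟩
    set j := (Finset.univ.filter fun j => ¬ pr j ≤ ℓ ∧ x j ≠ 0).min' hS with hj
    have hjmem : ¬ pr j ≤ ℓ ∧ x j ≠ 0 := (Finset.mem_filter.1 (Finset.min'_mem _ hS)).2
    have hℓ : ℓ < pr j := not_le.1 hjmem.1
    have hsum : M.mulVec x (pr j) = M (pr j) j * x j := by
      simp only [Matrix.mulVec, dotProduct]
      apply Finset.sum_eq_single j
      · intro j' _ hj'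
        rcases lt_or_gt_of_ne hj' with h | h
        · by_cases hx' : x j' = 0
          · rw [hx', mul_zero]
          · by_cases hp : pr j' ≤ ℓ
            · rw [hbelow j' (pr j) (lt_of_le_of_lt hp hℓ), zero_mul]
            · exact absurd (Finset.min'_le _ j' (Finset.mem_filter.2 ⟨Finset.mem_univ _, hp, hx'⟩)) (not_le.2 h)
        · rw [hright j j' h, zero_mul]
      · intro h; exact absurd (Finset.mem_univ j) h
    rw [hMx, hybelow _ hℓ] at hsum
    exact mul_ne_zero (hpiv j) hjmem.2 hsum.symm
  -- key sum computation: for any row i, the C-restricted sum equals the full sum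
  have hsumC : ∀ i : Fin n, (∑ j : {j : Fin m // pr j ≤ ℓ}, M i j.1 * x j.1) = y i := by
    intro i
    have h1 : (∑ j : {j : Fin m // pr j ≤ ℓ}, M i j.1 * x j.1)
        = ∑ j ∈ Finset.univ.filter (fun j => pr j ≤ ℓ), M i j * x j :=
      (Finset.sum_subtype (Finset.univ.filter fun j => pr j ≤ ℓ)
        (fun j => by simp) (fun j => M i j * x j)).symm
    have h2 : (∑ j ∈ Finset.univ.filter (fun j => pr j ≤ ℓ), M i j * x j)
        = ∑ j : Fin m, M i j * x j := by
      apply Finset.sum_subset (Finset.filter_subset _ _)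
      intro j _ hjn
      rw [ha j (by simpa using hjn), mul_zero]
    rw [h1, h2, ← hMx]
    rfl
  have hAx : (pivotMat M pr ℓ).mulVec (fun j => x j.1) = fun j => y (pr j.1) := by
    funext j
    exact hsumC (pr j.1)
  have hxC : (fun j : {j : Fin m // pr j ≤ ℓ} => x j.1) =
      (pivotMat M pr ℓ)⁻¹.mulVec (fun j => y (pr j.1)) := by
    rw [← hAx, Matrix.mulVec_mulVec, Matrix.nonsing_inv_mul _ hAdet, Matrix.one_mulVec]
  refine ⟨ha, hxC, ?_⟩
  rw [← hxC]
  funext i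
  exact hsumC i.1
end

section
/- Let X be an n×n skeletal nilpotent matrix, H a Hessenberg space, g ∈ GL(n,ℂ) in normalized Schubert form with g⁻¹ X g ∈ H, and t = diag(t_1,…,t_n) ∈ T with (tg)⁻¹ X (tg) ∈ H. Then for every column index j with X g_j ≠ 0 the following equation holds. Let ℓ = piv(X g_j); among the first h(j) columns of g, let C_j be the set of columns with pivot row ≤ ℓ and R_j ⊆ {1,…,ℓ} the set of their pivot rows; let A_j = (g_{ic})_{i∈R_j, c∈C_j}, B_j = (g_{ic})_{i≤ℓ, i∉R_j, c∈C_j}, and v_j = ((X g_j)_i)_{i∈R_j}. With the conventions t_0 = 1 and X(i) = 0 when row i of X is zero, let s_j be the diagonal matrix with entries t_{X(i)}/t_i for i ∈ R_j, and s'_j the diagonal matrix with entries t_{X(i)}/t_i for i ≤ ℓ, i ∉ R_j. Then B_j A_j⁻¹ s_j v_j = s'_j B_j A_j⁻¹ v_j. -/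
/-- For `g` in normalized Schubert form with pivot permutation `w` (the pivot row of
column `c` is `w c`), `hj` the last admissible column (0-based `h j`) and `ℓ` the
pivot row of `X g_j`: the pivot matrix `A_j`, square, with rows and columns indexed
by the set `C_j` of admissible columns `c ≤ hj` whose pivot row `w c` is `≤ ℓ`
(rows enumerated via the bijection `c ↦ w c` from `C_j` onto `R_j`). -/
def schubPivot {n : ℕ} (g : Matrix (Fin n) (Fin n) ℂ) (w : Equiv.Perm (Fin n))
    (hj ℓ : Fin n) :
    Matrix {c : Fin n // c ≤ hj ∧ w c ≤ ℓ} {c : Fin n // c ≤ hj ∧ w c ≤ ℓ} ℂ :=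
  Matrix.of fun c c' => g (w c.1) c'.1

/-- The dependent matrix `B_j`: rows indexed by rows `i ≤ ℓ` not in `R_j`, columns
indexed by `C_j`. -/
def schubDep {n : ℕ} (g : Matrix (Fin n) (Fin n) ℂ) (w : Equiv.Perm (Fin n))
    (hj ℓ : Fin n) :
    Matrix {i : Fin n // i ≤ ℓ ∧ ∀ c : Fin n, c ≤ hj → w c ≤ ℓ → w c ≠ i}
           {c : Fin n // c ≤ hj ∧ w c ≤ ℓ} ℂ :=
  Matrix.of fun i c => g i.1 c.1

/-- Key support lemma: if `g` is in normalized Schubert form with pivot permutation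
`w` and `g.mulVec b` vanishes in all rows below `ℓ`, then the coefficient `b c`
vanishes for every column `c` whose pivot row `w c` lies below `ℓ`. -/
lemma schub_support {n : ℕ} (g : Matrix (Fin n) (Fin n) ℂ) (w : Equiv.Perm (Fin n))
    (hw1 : ∀ i : Fin n, g (w i) i = 1)
    (hw2 : ∀ i i' : Fin n, w i < i' → g i' i = 0)
    (b : Fin n → ℂ) (ℓ : Fin n)
    (hu : ∀ i, ℓ < i → g.mulVec b i = 0) :
    ∀ c, ℓ < w c → b c = 0 := by
  classical
  by_contra hcon
  push_neg at hcon
  obtain ⟨c₀, hc₀, hb₀⟩ := hcon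
  have hS : (Finset.univ.filter fun c => ℓ < w c ∧ b c ≠ 0).Nonempty :=
    ⟨c₀, by simp [hc₀, hb₀]⟩
  obtain ⟨c, hcmem, hmax⟩ := Finset.exists_max_image _ w hS
  simp only [Finset.mem_filter, Finset.mem_univ, true_and] at hcmem
  have h0 : g.mulVec b (w c) = 0 := hu _ hcmem.1
  rw [Matrix.mulVec, dotProduct] at h0
  rw [Finset.sum_eq_single c (fun c' _ hne => ?_) (by simp)] at h0
  · rw [hw1] at h0
    exact hcmem.2 (by simpa using h0)
  · by_cases hb : b c' = 0
    · simp [hb]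
    · have hlt : w c' < w c := by
        by_cases hc' : ℓ < w c'
        · have := hmax c' (by simp [hc', hb])
          exact lt_of_le_of_ne this (fun he => hne (w.injective he))
        · exact lt_of_le_of_lt (not_lt.mp hc') hcmem.1
      simp [hw2 c' (w c) hlt]

/-- Theorem: main column test: Let `X` be skeletal nilpotent, `H` a
Hessenberg space, `g ∈ GL(n,ℂ)` in normalized Schubert form (pivot permutation `w`)
with `g⁻¹ X g ∈ H`, and `t ∈ T` with `(tg)⁻¹ X (tg) ∈ H`.  Let `r i = t_{X(i)}/t_i`
(with the conventions `t_0 = 1` and `X(i) = 0` when row `i` of `X` vanishes).  Then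
for every column `j` with `X g_j ≠ 0`, with `ℓ = piv(X g_j)`:
`B_j A_j⁻¹ s_j v_j = s'_j B_j A_j⁻¹ v_j`, where `v_j = ((Xg_j)_{w c})_{c ∈ C_j}`,
`s_j = diag(r (w c))_{c ∈ C_j}` and `s'_j = diag(r i)_{i ≤ ℓ, i ∉ R_j}`. -/
theorem stmt10 {n : ℕ} (X : Matrix (Fin n) (Fin n) ℂ) (hX : Skeletal X)
    (h : Fin n → Fin n) (hh1 : ∀ i, i ≤ h i) (hh2 : Monotone h)
    (g : Matrix (Fin n) (Fin n) ℂ) (hg : IsUnit g)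
    (w : Equiv.Perm (Fin n))
    (hw1 : ∀ i : Fin n, g (w i) i = 1)
    (hw2 : ∀ i i' : Fin n, w i < i' → g i' i = 0)
    (hw3 : ∀ i j : Fin n, i < j → g (w i) j = 0)
    (hmem : g⁻¹ * X * g ∈ hessSpace h)
    (t : Fin n → ℂ) (ht : ∀ i, t i ≠ 0)
    (hmem' : (Matrix.diagonal t * g)⁻¹ * X * (Matrix.diagonal t * g) ∈ hessSpace h)
    (r : Fin n → ℂ)
    (hr1 : ∀ i j : Fin n, X i j ≠ 0 → r i = t j * (t i)⁻¹)
    (hr2 : ∀ i : Fin n, (∀ j, X i j = 0) → r i = (t i)⁻¹)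
    (j ℓ : Fin n)
    (hℓ1 : (X * g) ℓ j ≠ 0) (hℓ2 : ∀ i : Fin n, ℓ < i → (X * g) i j = 0) :
    (schubDep g w (h j) ℓ).mulVec ((schubPivot g w (h j) ℓ)⁻¹.mulVec
        (fun c => r (w c.1) * (X * g) (w c.1) j)) =
      fun i => r i.1 * ((schubDep g w (h j) ℓ).mulVec
        ((schubPivot g w (h j) ℓ)⁻¹.mulVec (fun c => (X * g) (w c.1) j))) i := by
  classical
  set hj := h j with hjdef
  set D := Matrix.diagonal t with hD
  -- basic invertibility facts
  have hgd : IsUnit g.det := (Matrix.isUnit_iff_isUnit_det g).mp hg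
  have hgg : g * g⁻¹ = 1 := Matrix.mul_nonsing_inv g hgd
  have hDd : IsUnit D.det := by
    rw [hD, Matrix.det_diagonal]
    exact isUnit_iff_ne_zero.mpr (Finset.prod_ne_zero_iff.mpr fun i _ => ht i)
  -- vectors and coefficient vectors
  set u : Fin n → ℂ := fun i => (X * g) i j with hu
  set u' : Fin n → ℂ := fun i => r i * (X * g) i j with hu'
  set b : Fin n → ℂ := fun c => (g⁻¹ * X * g) c j with hb
  set b' : Fin n → ℂ := fun c => ((D * g)⁻¹ * X * (D * g)) c j with hb'
  have hub : g.mulVec b = u := by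
    funext i
    have e : g * (g⁻¹ * X * g) = X * g := by
      rw [← Matrix.mul_assoc, ← Matrix.mul_assoc, hgg, Matrix.one_mul]
    calc g.mulVec b i = (g * (g⁻¹ * X * g)) i j := by
          simp [Matrix.mulVec, dotProduct, Matrix.mul_apply, hb]
      _ = u i := by rw [e]
  have hDinv : D⁻¹ = Matrix.diagonal (fun i => (t i)⁻¹) := by
    refine Matrix.inv_eq_right_inv ?_
    rw [hD, Matrix.diagonal_mul_diagonal, ← Matrix.diagonal_one]
    have e : (fun i => t i * (t i)⁻¹) = fun _ : Fin n => (1 : ℂ) :=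
      funext fun i => mul_inv_cancel₀ (ht i)
    rw [e]
  have hDXD : D⁻¹ * X * D = Matrix.of (fun i k => r i * X i k) := by
    funext i k
    rw [hDinv, hD]
    simp only [Matrix.mul_diagonal, Matrix.diagonal_mul, Matrix.of_apply]
    by_cases hXik : X i k = 0
    · simp [hXik]
    · rw [hr1 i k hXik]; ring
  have hub' : g.mulVec b' = u' := by
    funext i
    have e : g * ((D * g)⁻¹ * X * (D * g)) = D⁻¹ * X * D * g := by
      rw [Matrix.mul_inv_rev]
      calc g * (g⁻¹ * D⁻¹ * X * (D * g))
          = (g * g⁻¹) * (D⁻¹ * X * D * g) := by noncomm_ring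
        _ = D⁻¹ * X * D * g := by rw [hgg, Matrix.one_mul]
    calc g.mulVec b' i = (g * ((D * g)⁻¹ * X * (D * g))) i j := by
          simp [Matrix.mulVec, dotProduct, Matrix.mul_apply, hb']
      _ = (D⁻¹ * X * D * g) i j := by rw [e]
      _ = u' i := by
          rw [hDXD]
          simp only [Matrix.mul_apply, Matrix.of_apply, hu', Finset.mul_sum]
          exact Finset.sum_congr rfl fun k _ => by ring
  -- support of the coefficient vectors
  have hbsupp : ∀ c, ¬(c ≤ hj ∧ w c ≤ ℓ) → b c = 0 := by
    intro c hc
    by_cases h1 : c ≤ hj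
    · have h2 : ℓ < w c := not_le.mp (fun hle => hc ⟨h1, hle⟩)
      exact schub_support g w hw1 hw2 b ℓ
        (fun i hi => by rw [hub]; exact hℓ2 i hi) c h2
    · exact hmem c j (not_le.mp h1)
  have hbsupp' : ∀ c, ¬(c ≤ hj ∧ w c ≤ ℓ) → b' c = 0 := by
    intro c hc
    by_cases h1 : c ≤ hj
    · have h2 : ℓ < w c := not_le.mp (fun hle => hc ⟨h1, hle⟩)
      refine schub_support g w hw1 hw2 b' ℓ (fun i hi => ?_) c h2
      rw [hub']
      simp [hu', hℓ2 i hi]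
    · exact hmem' c j (not_le.mp h1)
  -- sums over the subtype
  set p : Fin n → Prop := fun c => c ≤ hj ∧ w c ≤ ℓ with hp
  have hsum : ∀ (b : Fin n → ℂ), (∀ c, ¬ p c → b c = 0) →
      ∀ i : Fin n, ∑ c : {c : Fin n // p c}, g i c.1 * b c.1 = g.mulVec b i := by
    intro b hbs i
    rw [Matrix.mulVec, dotProduct]
    rw [← Finset.sum_subtype (Finset.univ.filter p) (by simp) (fun c => g i c * b c)]
    exact Finset.sum_filter_of_ne fun c _ hne => by
      by_contra hpc
      exact hne (by rw [hbs c hpc, mul_zero])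
  -- invertibility of the pivot matrix
  set A := schubPivot g w hj ℓ with hA
  have hAtri : A.BlockTriangular OrderDual.toDual := by
    intro c c' hlt
    exact hw3 c.1 c'.1 (Subtype.coe_lt_coe.mpr hlt)
  have hAdet : A.det = 1 := by
    rw [Matrix.det_of_lowerTriangular A hAtri]
    have : ∀ c : {c : Fin n // p c}, A c c = 1 := fun c => hw1 c.1
    simp [this]
  have hAunit : IsUnit A.det := by rw [hAdet]; exact isUnit_one
  have hAA : A⁻¹ * A = 1 := Matrix.nonsing_inv_mul A hAunit
  -- A applied to restricted coefficients gives the restricted vector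
  have hkey : ∀ (b u : Fin n → ℂ), g.mulVec b = u → (∀ c, ¬ p c → b c = 0) →
      (A⁻¹.mulVec (fun c : {c : Fin n // p c} => u (w c.1)))
        = fun c => b c.1 := by
    intro b u hgb hbs
    have hAmul : A.mulVec (fun c => b c.1) = fun c : {c : Fin n // p c} => u (w c.1) := by
      funext c
      rw [Matrix.mulVec, dotProduct]
      calc ∑ c' : {c : Fin n // p c}, A c c' * b c'.1
          = ∑ c' : {c : Fin n // p c}, g (w c.1) c'.1 * b c'.1 := rfl
        _ = g.mulVec b (w c.1) := hsum b hbs (w c.1)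
        _ = u (w c.1) := by rw [hgb]
    rw [← hAmul, Matrix.mulVec_mulVec, hAA, Matrix.one_mulVec]
  have hkeyB : ∀ (b u : Fin n → ℂ), g.mulVec b = u → (∀ c, ¬ p c → b c = 0) →
      (schubDep g w hj ℓ).mulVec (fun c : {c : Fin n // p c} => b c.1)
        = fun i => u i.1 := by
    intro b u hgb hbs
    funext i
    rw [Matrix.mulVec, dotProduct]
    calc ∑ c : {c : Fin n // p c}, schubDep g w hj ℓ i c * b c.1
        = ∑ c : {c : Fin n // p c}, g i.1 c.1 * b c.1 := rfl
      _ = g.mulVec b i.1 := hsum b hbs i.1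
      _ = u i.1 := by rw [hgb]
  -- put everything together
  have e1 : (fun c : {c : Fin n // p c} => r (w c.1) * (X * g) (w c.1) j)
      = fun c => u' (w c.1) := rfl
  have e2 : (fun c : {c : Fin n // p c} => (X * g) (w c.1) j)
      = fun c => u (w c.1) := rfl
  rw [e1, e2, hkey b' u' hub' hbsupp', hkey b u hub hbsupp,
    hkeyB b' u' hub' hbsupp', hkeyB b u hub hbsupp]
end

section
/- Let X be an n×n skeletal nilpotent matrix and H a Hessenberg space. Suppose there exists g ∈ GL(n,ℂ) in normalized Schubert form with g⁻¹ X g ∈ H and a column j such that X g_j ≠ 0 and exactly one of the first h(j) columns of g has pivot row ≤ ℓ := piv(X g_j) (i.e., the pivot matrix A_j of the system (g_1 ⋯ g_{h(j)} | X g_j) is 1×1). Then every t = diag(t_1,…,t_n) ∈ T such that H(X,H) is {t}-stable satisfies t_{X(i)}/t_i = t_{X(ℓ)}/t_ℓ for every row i with (X g_j)_i ≠ 0. -/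
private lemma pivot_zero {n : ℕ} (g : Matrix (Fin n) (Fin n) ℂ)
    (w : Equiv.Perm (Fin n))
    (hw1 : ∀ i : Fin n, g (w i) i = 1)
    (hw2 : ∀ i i' : Fin n, w i < i' → g i' i = 0)
    (hw3 : ∀ i j : Fin n, i < j → g (w i) j = 0)
    (ℓ : Fin n) (γ : Fin n → ℂ)
    (hvec : ∀ i : Fin n, ℓ < i → ∑ c : Fin n, g i c * γ c = 0) :
    ∀ c : Fin n, ℓ < w c → γ c = 0 := by
  suffices H : ∀ m : ℕ, ∀ c : Fin n, ℓ < w c → n ≤ m + (w c : ℕ) → γ c = 0 by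
    intro c hc
    exact H n c hc (by omega)
  intro m
  induction m with
  | zero =>
    intro c hc hn
    exact absurd (w c).isLt (by omega)
  | succ m ih =>
    intro c hc hn
    have h0 := hvec (w c) hc
    rw [Finset.sum_eq_single c (fun c' _ hne => ?_) (by simp)] at h0
    · rw [hw1 c, one_mul] at h0
      exact h0
    · rcases lt_trichotomy c c' with h1 | h1 | h1
      · rw [hw3 c c' h1, zero_mul]
      · exact absurd h1.symm hne
      · rcases lt_trichotomy (w c') (w c) with h2 | h2 | h2
        · rw [hw2 c' (w c) h2, zero_mul]
        · exact absurd (w.injective h2) hne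
        · have h2' : (w c : ℕ) < (w c' : ℕ) := h2
          have : γ c' = 0 := ih c' (hc.trans h2) (by omega)
          rw [this, mul_zero]

/-- Let `X` be skeletal nilpotent, `H` a Hessenberg space, and suppose
there is `g ∈ GL(n,ℂ)` in normalized Schubert form (pivot permutation `w`) with
`g⁻¹ X g ∈ H` and a column `j` with `X g_j ≠ 0`, pivot row `ℓ`, such that exactly
one of the first `h(j)` columns of `g` has pivot row `≤ ℓ` (the pivot matrix `A_j`
is `1 × 1`).  Then every `t ∈ T` for which `H(X,H)` is `{t}`-stable satisfies
`t_{X(i)}/t_i = t_{X(ℓ)}/t_ℓ` for every row `i` with `(X g_j)_i ≠ 0` (stated here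
via `X i a ≠ 0` and `X ℓ b ≠ 0` identifying `a = X(i)`, `b = X(ℓ)`). -/
theorem stmt11 {n : ℕ} (X : Matrix (Fin n) (Fin n) ℂ) (hX : Skeletal X)
    (h : Fin n → Fin n) (hh1 : ∀ i, i ≤ h i) (hh2 : Monotone h)
    (g : Matrix (Fin n) (Fin n) ℂ) (hg : IsUnit g)
    (w : Equiv.Perm (Fin n))
    (hw1 : ∀ i : Fin n, g (w i) i = 1)
    (hw2 : ∀ i i' : Fin n, w i < i' → g i' i = 0)
    (hw3 : ∀ i j : Fin n, i < j → g (w i) j = 0)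
    (hmem : g⁻¹ * X * g ∈ hessSpace h)
    (j ℓ : Fin n)
    (hℓ1 : (X * g) ℓ j ≠ 0) (hℓ2 : ∀ i : Fin n, ℓ < i → (X * g) i j = 0)
    (hone : ∃! c : Fin n, c ≤ h j ∧ w c ≤ ℓ) :
    ∀ t : Fin n → ℂ, (∀ i, t i ≠ 0) →
      (∀ g' : Matrix (Fin n) (Fin n) ℂ, IsUnit g' → g'⁻¹ * X * g' ∈ hessSpace h →
        (Matrix.diagonal t * g')⁻¹ * X * (Matrix.diagonal t * g') ∈ hessSpace h) →
      ∀ i a b : Fin n, (X * g) i j ≠ 0 → X i a ≠ 0 → X ℓ b ≠ 0 →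
        t a * (t i)⁻¹ = t b * (t ℓ)⁻¹ := by
  classical
  intro t ht hstab i a b hvi hXia hXlb
  obtain ⟨c₀, ⟨hc₀1, hc₀2⟩, hc₀u⟩ := hone
  have hgdet : IsUnit g.det := (Matrix.isUnit_iff_isUnit_det g).mp hg
  set D : Matrix (Fin n) (Fin n) ℂ := Matrix.diagonal t with hDdef
  have hDgdet : IsUnit (D * g).det := by
    rw [Matrix.det_mul, hDdef, Matrix.det_diagonal]
    exact (isUnit_iff_ne_zero.mpr (Finset.prod_ne_zero_iff.mpr fun k _ => ht k)).mul hgdet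
  have hmem' : (D * g)⁻¹ * X * (D * g) ∈ hessSpace h := hstab g hg hmem
  have hrowu : ∀ (i' k m : Fin n), X i' k ≠ 0 → m ≠ k → X i' m = 0 := by
    intro i' k m hk hm
    by_contra hm'
    exact hm (hX.2.1 i' m k hm' hk)
  set β : Fin n → ℂ := fun c => (g⁻¹ * X * g) c j with hβdef
  set β' : Fin n → ℂ := fun c => ((D * g)⁻¹ * X * (D * g)) c j with hβ'def
  have hgβ : ∀ i' : Fin n, ∑ c : Fin n, g i' c * β c = (X * g) i' j := by
    intro i'
    have e : g * (g⁻¹ * X * g) = X * g := by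
      rw [← mul_assoc, ← mul_assoc, Matrix.mul_nonsing_inv g hgdet, one_mul]
    calc ∑ c : Fin n, g i' c * β c = (g * (g⁻¹ * X * g)) i' j := by
          rw [Matrix.mul_apply]
      _ = (X * g) i' j := by rw [e]
  have hgβ' : ∀ i' : Fin n, t i' * ∑ c : Fin n, g i' c * β' c = (X * (D * g)) i' j := by
    intro i'
    have e : (D * g) * ((D * g)⁻¹ * X * (D * g)) = X * (D * g) := by
      calc (D * g) * ((D * g)⁻¹ * X * (D * g))
          = ((D * g) * (D * g)⁻¹) * (X * (D * g)) := by simp only [mul_assoc]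
        _ = X * (D * g) := by rw [Matrix.mul_nonsing_inv _ hDgdet, one_mul]
    calc t i' * ∑ c : Fin n, g i' c * β' c
        = ∑ c : Fin n, (D * g) i' c * β' c := by
          rw [Finset.mul_sum]
          refine Finset.sum_congr rfl fun c _ => ?_
          rw [hDdef, Matrix.diagonal_mul, mul_assoc]
      _ = ((D * g) * ((D * g)⁻¹ * X * (D * g))) i' j := by rw [Matrix.mul_apply]
      _ = (X * (D * g)) i' j := by rw [e]
  -- each term of (X*g) row > ℓ vanishes
  have hterm : ∀ i' : Fin n, ℓ < i' → ∀ k : Fin n, X i' k * g k j = 0 := by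
    intro i' hi' k
    by_cases hk : X i' k = 0
    · rw [hk, zero_mul]
    · have hs := hℓ2 i' hi'
      rw [Matrix.mul_apply, Finset.sum_eq_single k
        (fun m _ hm => by rw [hrowu i' k m hk hm, zero_mul]) (by simp)] at hs
      exact hs
  have hXDg0 : ∀ i' : Fin n, ℓ < i' → (X * (D * g)) i' j = 0 := by
    intro i' hi'
    rw [Matrix.mul_apply]
    refine Finset.sum_eq_zero fun k _ => ?_
    rw [hDdef, Matrix.diagonal_mul]
    calc X i' k * (t k * g k j) = t k * (X i' k * g k j) := by ring
      _ = 0 := by rw [hterm i' hi' k, mul_zero]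
  have hpivβ : ∀ c : Fin n, ℓ < w c → β c = 0 :=
    pivot_zero g w hw1 hw2 hw3 ℓ β (fun i' hi' => by rw [hgβ i']; exact hℓ2 i' hi')
  have hpivβ' : ∀ c : Fin n, ℓ < w c → β' c = 0 := by
    refine pivot_zero g w hw1 hw2 hw3 ℓ β' (fun i' hi' => ?_)
    have := hgβ' i'
    rw [hXDg0 i' hi'] at this
    exact (mul_eq_zero.mp this).resolve_left (ht i')
  have hβzero : ∀ c : Fin n, c ≠ c₀ → β c = 0 := by
    intro c hc
    by_cases h1 : h j < c
    · exact hmem c j h1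
    · refine hpivβ c ?_
      by_contra h2
      exact hc (hc₀u c ⟨not_lt.mp h1, not_lt.mp h2⟩)
  have hβ'zero : ∀ c : Fin n, c ≠ c₀ → β' c = 0 := by
    intro c hc
    by_cases h1 : h j < c
    · exact hmem' c j h1
    · refine hpivβ' c ?_
      by_contra h2
      exact hc (hc₀u c ⟨not_lt.mp h1, not_lt.mp h2⟩)
  have hcol : ∀ i' : Fin n, (X * g) i' j = g i' c₀ * β c₀ := by
    intro i'
    rw [← hgβ i', Finset.sum_eq_single c₀
      (fun c _ hc => by rw [hβzero c hc, mul_zero]) (by simp)]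
  have hcol' : ∀ i' : Fin n, (X * (D * g)) i' j = t i' * (g i' c₀ * β' c₀) := by
    intro i'
    rw [← hgβ' i', Finset.sum_eq_single c₀
      (fun c _ hc => by rw [hβ'zero c hc, mul_zero]) (by simp)]
  -- entrywise formulas at rows i and ℓ
  have hvi_eq : (X * g) i j = X i a * g a j := by
    rw [Matrix.mul_apply, Finset.sum_eq_single a
      (fun k _ hk => by rw [hrowu i a k hXia hk, zero_mul]) (by simp)]
  have hXDgi : (X * (D * g)) i j = t a * (X i a * g a j) := by
    rw [Matrix.mul_apply, Finset.sum_eq_single a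
      (fun k _ hk => by rw [hrowu i a k hXia hk, zero_mul]) (by simp),
      hDdef, Matrix.diagonal_mul]
    ring
  have hvl_eq : (X * g) ℓ j = X ℓ b * g b j := by
    rw [Matrix.mul_apply, Finset.sum_eq_single b
      (fun k _ hk => by rw [hrowu ℓ b k hXlb hk, zero_mul]) (by simp)]
  have hXDgl : (X * (D * g)) ℓ j = t b * (X ℓ b * g b j) := by
    rw [Matrix.mul_apply, Finset.sum_eq_single b
      (fun k _ hk => by rw [hrowu ℓ b k hXlb hk, zero_mul]) (by simp),
      hDdef, Matrix.diagonal_mul]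
    ring
  -- nonvanishing
  have hgi : g i c₀ * β c₀ ≠ 0 := by rw [← hcol i]; exact hvi
  have hgl : g ℓ c₀ * β c₀ ≠ 0 := by rw [← hcol ℓ]; exact hℓ1
  have hβne : β c₀ ≠ 0 := right_ne_zero_of_mul hgi
  have hgine : g i c₀ ≠ 0 := left_ne_zero_of_mul hgi
  have hglne : g ℓ c₀ ≠ 0 := left_ne_zero_of_mul hgl
  -- key equations
  have E1 : t i * β' c₀ = t a * β c₀ := by
    have e : t i * (g i c₀ * β' c₀) = t a * (g i c₀ * β c₀) := by
      rw [← hcol' i, hXDgi, ← hvi_eq, hcol i]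
    have := mul_left_cancel₀ hgine (by linear_combination e :
      g i c₀ * (t i * β' c₀) = g i c₀ * (t a * β c₀))
    exact this
  have E2 : t ℓ * β' c₀ = t b * β c₀ := by
    have e : t ℓ * (g ℓ c₀ * β' c₀) = t b * (g ℓ c₀ * β c₀) := by
      rw [← hcol' ℓ, hXDgl, ← hvl_eq, hcol ℓ]
    exact mul_left_cancel₀ hglne (by linear_combination e :
      g ℓ c₀ * (t ℓ * β' c₀) = g ℓ c₀ * (t b * β c₀))
  have e3 : t a * (t i)⁻¹ = β' c₀ / β c₀ := by
    rw [eq_div_iff hβne]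
    have h1 : β' c₀ = (t i)⁻¹ * (t a * β c₀) := by
      rw [← E1, ← mul_assoc, inv_mul_cancel₀ (ht i), one_mul]
    rw [h1]; ring
  have e4 : t b * (t ℓ)⁻¹ = β' c₀ / β c₀ := by
    rw [eq_div_iff hβne]
    have h1 : β' c₀ = (t ℓ)⁻¹ * (t b * β c₀) := by
      rw [← E2, ← mul_assoc, inv_mul_cancel₀ (ht ℓ), one_mul]
    rw [h1]; ring
  exact e3.trans e4.symm
end

section
/- Let X be an n×n skeletal nilpotent matrix and H a Hessenberg space. Suppose that for every g ∈ GL(n,ℂ) in normalized Schubert form with g⁻¹ X g ∈ H and every column index j, at least one of the following holds: (i) X g_j = 0; (ii) the dependent matrix B_j of the system (g_1 ⋯ g_{h(j)} | X g_j) is a zero matrix; (iii) B_j is empty (has no rows); (iv) the pivot matrix A_j is a square piv(X g_j) × piv(X g_j) matrix. Then H(X,H) is T-stable. -/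
open Matrix Finset

section StmtAux

variable {n : ℕ}

lemma hess_mul_triangular {h : Fin n → Fin n} (hh2 : Monotone h)
    {M U V : Matrix (Fin n) (Fin n) ℂ}
    (hM : M ∈ hessSpace h) (hU : U.BlockTriangular id) (hV : V.BlockTriangular id) :
    U * M * V ∈ hessSpace h := by
  intro i j hij
  rw [Matrix.mul_apply]
  refine Finset.sum_eq_zero fun l _ => ?_
  by_cases hlj : l ≤ j
  · rw [Matrix.mul_apply, Finset.sum_eq_zero, zero_mul]
    intro k _
    by_cases hik : k < i
    · rw [hU hik, zero_mul]
    · rw [hM k l (lt_of_lt_of_le (lt_of_le_of_lt (hh2 hlj) hij) (not_lt.mp hik)), mul_zero]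
  · rw [hV (not_le.mp hlj), mul_zero]

lemma mem_hess_iff {h : Fin n → Fin n} {M g : Matrix (Fin n) (Fin n) ℂ} (hg : IsUnit g) :
    g⁻¹ * M * g ∈ hessSpace h ↔
      ∀ j : Fin n, ∃ a : Fin n → ℂ, (∀ c : Fin n, ¬ c ≤ h j → a c = 0) ∧
        ∀ i : Fin n, (M * g) i j = ∑ c : Fin n, a c * g i c := by
  have hdet : IsUnit g.det := (Matrix.isUnit_iff_isUnit_det g).mp hg
  have hgi : g * g⁻¹ = 1 := Matrix.mul_nonsing_inv g hdet
  have hig : g⁻¹ * g = 1 := Matrix.nonsing_inv_mul g hdet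
  constructor
  · intro hmem j
    refine ⟨fun c => if c ≤ h j then (g⁻¹ * M * g) c j else 0,
      fun c hc => if_neg hc, fun i => ?_⟩
    have key : ∀ c : Fin n, (if c ≤ h j then (g⁻¹ * M * g) c j else 0) = (g⁻¹ * M * g) c j := by
      intro c
      by_cases hc : c ≤ h j
      · rw [if_pos hc]
      · rw [if_neg hc, hmem c j (not_le.mp hc)]
    have e : g * (g⁻¹ * M * g) = M * g := by
      rw [← Matrix.mul_assoc, ← Matrix.mul_assoc, hgi, Matrix.one_mul]
    calc (M * g) i j = (g * (g⁻¹ * M * g)) i j := by rw [e]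
      _ = ∑ c : Fin n, g i c * (g⁻¹ * M * g) c j := Matrix.mul_apply
      _ = ∑ c : Fin n, (if c ≤ h j then (g⁻¹ * M * g) c j else 0) * g i c := by
          refine Finset.sum_congr rfl fun c _ => ?_
          rw [key c, mul_comm]
  · rintro hco i j hij
    obtain ⟨a, ha0, ha⟩ := hco j
    have e : (g⁻¹ * M * g) i j = a i := by
      rw [Matrix.mul_assoc, Matrix.mul_apply]
      calc ∑ k : Fin n, g⁻¹ i k * (M * g) k j
          = ∑ k : Fin n, ∑ c : Fin n, a c * (g⁻¹ i k * g k c) := by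
            refine Finset.sum_congr rfl fun k _ => ?_
            rw [ha k, Finset.mul_sum]
            refine Finset.sum_congr rfl fun c _ => by ring
        _ = ∑ c : Fin n, a c * ∑ k : Fin n, g⁻¹ i k * g k c := by
            rw [Finset.sum_comm]
            exact Finset.sum_congr rfl fun c _ => (Finset.mul_sum _ _ _).symm
        _ = ∑ c : Fin n, a c * (1 : Matrix (Fin n) (Fin n) ℂ) i c := by
            refine Finset.sum_congr rfl fun c _ => ?_
            rw [← Matrix.mul_apply, hig]
        _ = a i := by
            simp [Matrix.one_apply, mul_ite, mul_one, mul_zero]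
    rw [e]
    exact ha0 i (not_le.mpr hij)

lemma diag_inv_eq (t : Fin n → ℂ) (ht : ∀ i, t i ≠ 0) :
    (Matrix.diagonal t)⁻¹ = Matrix.diagonal (fun i => (t i)⁻¹) := by
  apply Matrix.inv_eq_right_inv
  rw [Matrix.diagonal_mul_diagonal]
  have : (fun i => t i * (t i)⁻¹) = fun _ : Fin n => (1 : ℂ) := by
    funext i; exact mul_inv_cancel₀ (ht i)
  rw [this, Matrix.diagonal_one]

lemma skeletal_collapse {X : Matrix (Fin n) (Fin n) ℂ} (hX : Skeletal X)
    (g : Matrix (Fin n) (Fin n) ℂ) (t : Fin n → ℂ) (ht : ∀ i, t i ≠ 0) (i j : Fin n) :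
    ∃ μ : ℂ, μ ≠ 0 ∧
      ((Matrix.diagonal (fun i => (t i)⁻¹) * X * Matrix.diagonal t) * g) i j
        = μ * (X * g) i j := by
  have hY : ∀ k : Fin n,
      (Matrix.diagonal (fun i => (t i)⁻¹) * X * Matrix.diagonal t) i k
        = (t i)⁻¹ * X i k * t k := by
    intro k
    rw [Matrix.mul_diagonal, Matrix.diagonal_mul]
  by_cases hex : ∃ k : Fin n, X i k ≠ 0
  · obtain ⟨k₀, hk₀⟩ := hex
    refine ⟨(t i)⁻¹ * t k₀, mul_ne_zero (inv_ne_zero (ht i)) (ht k₀), ?_⟩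
    have e1 : (X * g) i j = X i k₀ * g k₀ j := by
      rw [Matrix.mul_apply]
      refine Finset.sum_eq_single k₀ (fun b _ hb => ?_) (fun hmem => absurd (Finset.mem_univ k₀) hmem)
      by_cases hXb : X i b = 0
      · rw [hXb, zero_mul]
      · exact absurd (hX.2.1 i b k₀ hXb hk₀) hb
    have e2 : ((Matrix.diagonal (fun i => (t i)⁻¹) * X * Matrix.diagonal t) * g) i j
        = (Matrix.diagonal (fun i => (t i)⁻¹) * X * Matrix.diagonal t) i k₀ * g k₀ j := by
      rw [Matrix.mul_apply (M := Matrix.diagonal (fun i => (t i)⁻¹) * X * Matrix.diagonal t) (N := g)]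
      refine Finset.sum_eq_single k₀ (fun b _ hb => ?_) (fun hmem => absurd (Finset.mem_univ k₀) hmem)
      by_cases hXb : X i b = 0
      · rw [hY b, hXb, mul_zero, zero_mul, zero_mul]
      · exact absurd (hX.2.1 i b k₀ hXb hk₀) hb
    rw [e1, e2, hY k₀]; ring
  · push_neg at hex
    refine ⟨1, one_ne_zero, ?_⟩
    have e1 : (X * g) i j = 0 := by
      rw [Matrix.mul_apply]
      exact Finset.sum_eq_zero fun b _ => by rw [hex b, zero_mul]
    have e2 : ((Matrix.diagonal (fun i => (t i)⁻¹) * X * Matrix.diagonal t) * g) i j = 0 := by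
      rw [Matrix.mul_apply (M := Matrix.diagonal (fun i => (t i)⁻¹) * X * Matrix.diagonal t) (N := g)]
      exact Finset.sum_eq_zero fun b _ => by rw [hY b, hex b, mul_zero, zero_mul, zero_mul]
    rw [e1, e2, mul_zero]

def SchubertPartial (m : Matrix (Fin n) (Fin n) ℂ) (k : ℕ) (W : Fin n → Fin n) : Prop :=
  (∀ i : Fin n, (i : ℕ) < k → m (W i) i = 1) ∧
  (∀ i i' : Fin n, (i : ℕ) < k → W i < i' → m i' i = 0) ∧
  (∀ i j : Fin n, (i : ℕ) < k → i < j → m (W i) j = 0) ∧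
  (∀ i i' : Fin n, (i : ℕ) < k → (i' : ℕ) < k → W i = W i' → i = i')

lemma schubert_step {k : ℕ} (m : Matrix (Fin n) (Fin n) ℂ) (hm : IsUnit m)
    (W : Fin n → Fin n) (hP : SchubertPartial m k W) (hk : k < n) :
    ∃ b : Matrix (Fin n) (Fin n) ℂ, b.BlockTriangular id ∧ IsUnit b ∧
      ∃ W' : Fin n → Fin n, SchubertPartial (m * b) (k + 1) W' := by
  classical
  obtain ⟨hP1, hP2, hP3, hP4⟩ := hP
  set κ : Fin n := ⟨k, hk⟩ with hκ
  have hdet : m.det ≠ 0 := by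
    intro hd
    exact (Matrix.isUnit_iff_isUnit_det m).mp hm |>.ne_zero hd
  have hcol : ∃ i : Fin n, m i κ ≠ 0 := by
    by_contra hc
    push_neg at hc
    exact hdet (Matrix.det_eq_zero_of_column_eq_zero κ hc)
  obtain ⟨i₀, hi₀⟩ := hcol
  obtain ⟨ℓ, hℓmem, hℓmax⟩ := Finset.exists_max_image
    (Finset.univ.filter fun i => m i κ ≠ 0) id ⟨i₀, by simp [hi₀]⟩
  have hp : m ℓ κ ≠ 0 := (Finset.mem_filter.mp hℓmem).2
  have hbelow : ∀ i' : Fin n, ℓ < i' → m i' κ = 0 := by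
    intro i' hi'
    by_contra hne
    exact absurd (hℓmax i' (by simp [hne])) (not_le.mpr hi')
  set p : ℂ := m ℓ κ with hpdef
  set b : Matrix (Fin n) (Fin n) ℂ := Matrix.of fun r c =>
    if r = c then (if r = κ then p⁻¹ else 1)
    else if r = κ ∧ κ < c then -(m ℓ c) * p⁻¹ else 0 with hbdef
  have hbapp : ∀ r c : Fin n, b r c =
      (if r = c then (if r = κ then p⁻¹ else 1)
      else if r = κ ∧ κ < c then -(m ℓ c) * p⁻¹ else 0) := fun r c => rfl
  have hbtri : b.BlockTriangular id := by
    intro i j hji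
    rw [hbapp]
    rw [if_neg (fun hh : i = j => absurd hh (by intro he; subst he; exact lt_irrefl _ hji)),
      if_neg (fun hh : i = κ ∧ κ < j => by
        obtain ⟨h1, h2⟩ := hh
        subst h1
        exact absurd hji (not_lt.mpr (le_of_lt h2)))]
  have hbdiag : ∀ i : Fin n, b i i = if i = κ then p⁻¹ else 1 := by
    intro i; rw [hbapp, if_pos rfl]
  have hbu : IsUnit b := by
    rw [Matrix.isUnit_iff_isUnit_det, Matrix.det_of_upperTriangular hbtri]
    rw [isUnit_iff_ne_zero]
    refine Finset.prod_ne_zero_iff.mpr fun i _ => ?_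
    rw [hbdiag]
    by_cases hi : i = κ
    · rw [if_pos hi]; exact inv_ne_zero hp
    · rw [if_neg hi]; exact one_ne_zero
  have hcol_other : ∀ (i c : Fin n), c ≠ κ → ¬ κ < c → (m * b) i c = m i c := by
    intro i c h1 h2
    rw [Matrix.mul_apply]
    have hz : ∀ r : Fin n, r ∈ Finset.univ → r ≠ c → m i r * b r c = 0 := by
      intro r _ hr
      rw [hbapp, if_neg hr, if_neg (fun hh : r = κ ∧ κ < c => h2 hh.2), mul_zero]
    rw [Finset.sum_eq_single c hz (fun hmem => absurd (Finset.mem_univ c) hmem),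
      hbapp, if_pos rfl, if_neg h1, mul_one]
  have hcol_kappa : ∀ i : Fin n, (m * b) i κ = m i κ * p⁻¹ := by
    intro i
    rw [Matrix.mul_apply]
    have hz : ∀ r : Fin n, r ∈ Finset.univ → r ≠ κ → m i r * b r κ = 0 := by
      intro r _ hr
      rw [hbapp, if_neg hr, if_neg (fun hh : r = κ ∧ κ < κ => lt_irrefl κ hh.2), mul_zero]
    rw [Finset.sum_eq_single κ hz (fun hmem => absurd (Finset.mem_univ κ) hmem),
      hbapp, if_pos rfl, if_pos rfl]
  have hcol_gt : ∀ (i c : Fin n), κ < c →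
      (m * b) i c = m i c + m i κ * (-(m ℓ c) * p⁻¹) := by
    intro i c hc
    have hcκ : c ≠ κ := ne_of_gt hc
    have hb_c : ∀ r : Fin n, b r c =
        (if r = c then 1 else 0) + (if r = κ then -(m ℓ c) * p⁻¹ else 0) := by
      intro r
      rw [hbapp]
      by_cases h1 : r = c
      · subst h1
        rw [if_pos rfl, if_pos rfl, if_neg hcκ, if_neg hcκ, add_zero]
      · rw [if_neg h1, if_neg h1]
        by_cases h2 : r = κ
        · subst h2
          rw [if_pos ⟨rfl, hc⟩, if_pos rfl, zero_add]
        · rw [if_neg (fun hh : r = κ ∧ κ < c => h2 hh.1), if_neg h2, add_zero]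
    rw [Matrix.mul_apply]
    simp only [hb_c, mul_add, Finset.sum_add_distrib, mul_ite, mul_one, mul_zero]
    rw [Finset.sum_ite_eq' Finset.univ c (fun r => m i r),
      Finset.sum_ite_eq' Finset.univ κ (fun r => m i r * (-(m ℓ c) * p⁻¹))]
    simp
  refine ⟨b, hbtri, hbu, Function.update W κ ℓ, ?_, ?_, ?_, ?_⟩
  · intro i hi
    rcases Nat.lt_succ_iff_lt_or_eq.mp hi with hlt | heq
    · have hiκ : i ≠ κ := fun he => absurd (he ▸ hlt) (by simp [hκ])
      have hiltκ : i < κ := by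
        rw [Fin.lt_def]; exact hlt
      rw [Function.update_of_ne hiκ, hcol_other _ _ hiκ (not_lt.mpr (le_of_lt hiltκ))]
      exact hP1 i hlt
    · have hieq : i = κ := Fin.ext heq
      subst hieq
      rw [Function.update_self, hcol_kappa]
      exact mul_inv_cancel₀ hp
  · intro i i' hi hlt'
    rcases Nat.lt_succ_iff_lt_or_eq.mp hi with hlt | heq
    · have hiκ : i ≠ κ := fun he => absurd (he ▸ hlt) (by simp [hκ])
      have hiltκ : i < κ := by rw [Fin.lt_def]; exact hlt
      rw [Function.update_of_ne hiκ] at hlt'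
      rw [hcol_other _ _ hiκ (not_lt.mpr (le_of_lt hiltκ))]
      exact hP2 i i' hlt hlt'
    · have hieq : i = κ := Fin.ext heq
      subst hieq
      rw [Function.update_self] at hlt'
      rw [hcol_kappa, hbelow i' hlt', zero_mul]
  · intro i j hi hij
    rcases Nat.lt_succ_iff_lt_or_eq.mp hi with hlt | heq
    · have hiκ : i ≠ κ := fun he => absurd (he ▸ hlt) (by simp [hκ])
      have hiltκ : i < κ := by rw [Fin.lt_def]; exact hlt
      rw [Function.update_of_ne hiκ]
      rcases lt_trichotomy j κ with hjκ | hjκ | hjκ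
      · rw [hcol_other _ _ (ne_of_lt hjκ) (not_lt.mpr (le_of_lt hjκ)), hP3 i j hlt hij]
      · rw [hjκ] at hij ⊢
        rw [hcol_kappa, hP3 i κ hlt hij, zero_mul]
      · rw [hcol_gt _ _ hjκ, hP3 i j hlt hij, hP3 i κ hlt hiltκ, zero_mul, add_zero]
    · have hieq : i = κ := Fin.ext heq
      subst hieq
      rw [Function.update_self, hcol_gt _ _ hij]
      rw [← hpdef]
      field_simp
      ring
  · intro i i' hi hi' heq
    rcases Nat.lt_succ_iff_lt_or_eq.mp hi with hlt | hik <;>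
      rcases Nat.lt_succ_iff_lt_or_eq.mp hi' with hlt' | hik'
    · have hiκ : i ≠ κ := fun he => absurd (he ▸ hlt) (by simp [hκ])
      have hiκ' : i' ≠ κ := fun he => absurd (he ▸ hlt') (by simp [hκ])
      rw [Function.update_of_ne hiκ, Function.update_of_ne hiκ'] at heq
      exact hP4 i i' hlt hlt' heq
    · have hieq' : i' = κ := Fin.ext hik'
      subst hieq'
      have hiκ : i ≠ κ := fun he => absurd (he ▸ hlt) (by simp [hκ])
      rw [Function.update_of_ne hiκ, Function.update_self] at heq
      exfalso
      have hiltκ : i < κ := by rw [Fin.lt_def]; exact hlt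
      have hz := hP3 i κ hlt hiltκ
      rw [heq] at hz
      exact hp hz
    · have hieq : i = κ := Fin.ext hik
      subst hieq
      have hiκ' : i' ≠ κ := fun he => absurd (he ▸ hlt') (by simp [hκ])
      rw [Function.update_of_ne hiκ', Function.update_self] at heq
      exfalso
      have hiltκ : i' < κ := by rw [Fin.lt_def]; exact hlt'
      have hz := hP3 i' κ hlt' hiltκ
      rw [← heq] at hz
      exact hp hz
    · exact Fin.ext (hik.trans hik'.symm)

lemma schubert_iter (g : Matrix (Fin n) (Fin n) ℂ) (hg : IsUnit g) :
    ∀ k : ℕ, k ≤ n →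
      ∃ b : Matrix (Fin n) (Fin n) ℂ, b.BlockTriangular id ∧ IsUnit b ∧
        ∃ W : Fin n → Fin n, SchubertPartial (g * b) k W := by
  intro k
  induction k with
  | zero =>
    intro _
    refine ⟨1, Matrix.blockTriangular_one, isUnit_one, id,
      fun i hi => absurd hi (Nat.not_lt_zero _),
      fun i i' hi => absurd hi (Nat.not_lt_zero _),
      fun i j hi => absurd hi (Nat.not_lt_zero _),
      fun i i' hi => absurd hi (Nat.not_lt_zero _)⟩
  | succ k ih =>
    intro hk1
    obtain ⟨b, hbt, hbu, W, hW⟩ := ih (Nat.le_of_succ_le hk1)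
    obtain ⟨b₂, hbt₂, hbu₂, W', hW'⟩ :=
      schubert_step (g * b) (hg.mul hbu) W hW (Nat.lt_of_succ_le hk1)
    exact ⟨b * b₂, hbt.mul hbt₂, hbu.mul hbu₂, W', by rwa [← Matrix.mul_assoc]⟩

lemma schubert_decomp (g : Matrix (Fin n) (Fin n) ℂ) (hg : IsUnit g) :
    ∃ b : Matrix (Fin n) (Fin n) ℂ, b.BlockTriangular id ∧ IsUnit b ∧
      ∃ w : Equiv.Perm (Fin n),
        (∀ i : Fin n, (g * b) (w i) i = 1) ∧
        (∀ i i' : Fin n, w i < i' → (g * b) i' i = 0) ∧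
        (∀ i j : Fin n, i < j → (g * b) (w i) j = 0) := by
  obtain ⟨b, hbt, hbu, W, hW1, hW2, hW3, hW4⟩ := schubert_iter g hg n (le_refl n)
  have hinj : Function.Injective W := fun i i' he => hW4 i i' i.isLt i'.isLt he
  have hbij : Function.Bijective W := Finite.injective_iff_bijective.mp hinj
  refine ⟨b, hbt, hbu, Equiv.ofBijective W hbij, ?_, ?_, ?_⟩
  · intro i; rw [Equiv.ofBijective_apply]; exact hW1 i i.isLt
  · intro i i' hlt; rw [Equiv.ofBijective_apply] at hlt; exact hW2 i i' i.isLt hlt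
  · intro i j hij; rw [Equiv.ofBijective_apply]; exact hW3 i j i.isLt hij

lemma schubert_core (X : Matrix (Fin n) (Fin n) ℂ) (hX : Skeletal X)
    (h : Fin n → Fin n)
    (hyp : ∀ (g : Matrix (Fin n) (Fin n) ℂ) (w : Equiv.Perm (Fin n)),
      IsUnit g → (∀ i : Fin n, g (w i) i = 1) →
      (∀ i i' : Fin n, w i < i' → g i' i = 0) →
      (∀ i j : Fin n, i < j → g (w i) j = 0) →
      g⁻¹ * X * g ∈ hessSpace h →
      ∀ j ℓ : Fin n, (X * g) ℓ j ≠ 0 → (∀ i : Fin n, ℓ < i → (X * g) i j = 0) →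
        ((∀ i c : Fin n, i ≤ ℓ → (∀ c' : Fin n, c' ≤ h j → w c' ≤ ℓ → w c' ≠ i) →
            c ≤ h j → w c ≤ ℓ → g i c = 0) ∨
          (¬ ∃ i : Fin n, i ≤ ℓ ∧ ∀ c' : Fin n, c' ≤ h j → w c' ≤ ℓ → w c' ≠ i) ∨
          (Fintype.card {c : Fin n // c ≤ h j ∧ w c ≤ ℓ} = (ℓ : ℕ) + 1)))
    (t : Fin n → ℂ) (ht : ∀ i, t i ≠ 0)
    (g : Matrix (Fin n) (Fin n) ℂ) (w : Equiv.Perm (Fin n)) (hgu : IsUnit g)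
    (hw1 : ∀ i : Fin n, g (w i) i = 1)
    (hw2 : ∀ i i' : Fin n, w i < i' → g i' i = 0)
    (hw3 : ∀ i j : Fin n, i < j → g (w i) j = 0)
    (hmem : g⁻¹ * X * g ∈ hessSpace h) :
    g⁻¹ * (Matrix.diagonal (fun i => (t i)⁻¹) * X * Matrix.diagonal t) * g ∈ hessSpace h := by
  classical
  rw [mem_hess_iff hgu]
  intro j
  obtain ⟨a, ha0, hay⟩ := (mem_hess_iff hgu).mp hmem j
  set Y : Matrix (Fin n) (Fin n) ℂ :=
    Matrix.diagonal (fun i => (t i)⁻¹) * X * Matrix.diagonal t with hYdef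
  by_cases hy0 : ∀ i : Fin n, (X * g) i j = 0
  · refine ⟨0, fun c _ => rfl, fun i => ?_⟩
    obtain ⟨μ, hμ, hμe⟩ := skeletal_collapse hX g t ht i j
    rw [← hYdef] at hμe
    rw [hμe, hy0 i, mul_zero]
    symm
    exact Finset.sum_eq_zero fun c _ => by rw [Pi.zero_apply, zero_mul]
  · push_neg at hy0
    obtain ⟨i₀, hi₀⟩ := hy0
    obtain ⟨ℓ, hℓmem, hℓmax⟩ := Finset.exists_max_image
      (Finset.univ.filter fun i => (X * g) i j ≠ 0) id ⟨i₀, by simp [hi₀]⟩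
    have hyℓ : (X * g) ℓ j ≠ 0 := (Finset.mem_filter.mp hℓmem).2
    have hygt : ∀ i : Fin n, ℓ < i → (X * g) i j = 0 := by
      intro i hi
      by_contra hne
      exact absurd (hℓmax i (by simp [hne])) (not_le.mpr hi)
    set P : Fin n → Prop := fun c => c ≤ h j ∧ w c ≤ ℓ with hP
    -- support of the original coefficients
    have hasupp : ∀ c : Fin n, ¬ P c → a c = 0 := by
      by_contra hbad
      push_neg at hbad
      obtain ⟨c₀, hc₀P, hac₀⟩ := hbad
      have hset : (Finset.univ.filter fun c => a c ≠ 0 ∧ ℓ < w c).Nonempty := by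
        refine ⟨c₀, ?_⟩
        simp only [Finset.mem_filter, Finset.mem_univ, true_and]
        refine ⟨hac₀, ?_⟩
        rcases not_and_or.mp hc₀P with hcc | hcc
        · exact absurd (ha0 c₀ hcc) hac₀
        · exact not_le.mp hcc
      obtain ⟨c, hcmem, hcmax⟩ := Finset.exists_max_image _ (fun c => w c) hset
      simp only [Finset.mem_filter, Finset.mem_univ, true_and] at hcmem
      obtain ⟨hac, hℓwc⟩ := hcmem
      have hyw : (X * g) (w c) j = a c := by
        rw [hay (w c)]
        have hz : ∀ b : Fin n, b ∈ Finset.univ → b ≠ c → a b * g (w c) b = 0 := by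
          intro b _ hb
          by_cases hab : a b = 0
          · rw [hab, zero_mul]
          · have hwb : w b < w c := by
              have hne : w b ≠ w c := fun he => hb (w.injective he)
              by_cases hbig : ℓ < w b
              · exact lt_of_le_of_ne (hcmax b (by
                  simp only [Finset.mem_filter, Finset.mem_univ, true_and]
                  exact ⟨hab, hbig⟩)) hne
              · exact lt_of_le_of_lt (not_lt.mp hbig) hℓwc
            rw [hw2 b (w c) hwb, mul_zero]
        rw [Finset.sum_eq_single c hz (fun hmem => absurd (Finset.mem_univ c) hmem),
          hw1 c, mul_one]
      rw [hygt (w c) hℓwc] at hyw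
      exact hac hyw.symm
    -- the disjunction from the hypothesis
    have hcases := hyp g w hgu hw1 hw2 hw3 hmem j ℓ hyℓ hygt
    -- solving the triangular system on the pivot columns
    set A : Matrix {c : Fin n // P c} {c : Fin n // P c} ℂ :=
      fun c c' => g (w c.1) c'.1 with hA
    have hAinj : Function.Injective (Matrix.toLin' A) := by
      rw [injective_iff_map_eq_zero]
      intro v hv
      by_contra hvne
      obtain ⟨c₁, hc₁⟩ := Function.ne_iff.mp hvne
      have hc₁' : v c₁ ≠ 0 := by simpa using hc₁
      obtain ⟨c, hcmem, hcmax⟩ := Finset.exists_max_image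
        (Finset.univ.filter fun c : {c : Fin n // P c} => v c ≠ 0)
        (fun c => w c.1) ⟨c₁, by simp [hc₁']⟩
      have hvc : v c ≠ 0 := (Finset.mem_filter.mp hcmem).2
      have hrow : A.mulVec v c = 0 := by
        rw [Matrix.toLin'_apply] at hv
        rw [hv]; rfl
      rw [Matrix.mulVec, dotProduct] at hrow
      have hz : ∀ b : {c : Fin n // P c}, b ∈ Finset.univ → b ≠ c → A c b * v b = 0 := by
        intro b _ hb
        by_cases hvb : v b = 0
        · rw [hvb, mul_zero]
        · have hne : w b.1 ≠ w c.1 := fun he => hb (Subtype.ext (w.injective he))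
          have hwb : w b.1 < w c.1 :=
            lt_of_le_of_ne (hcmax b (by simp [hvb])) hne
          show g (w c.1) b.1 * v b = 0
          rw [hw2 b.1 (w c.1) hwb, zero_mul]
      rw [Finset.sum_eq_single c hz (fun hmem => absurd (Finset.mem_univ c) hmem)] at hrow
      have hAcc : A c c = 1 := hw1 c.1
      rw [hAcc, one_mul] at hrow
      exact hvc hrow
    have hAsurj := LinearMap.injective_iff_surjective.mp hAinj
    obtain ⟨v, hv⟩ := hAsurj (fun c : {c : Fin n // P c} => (Y * g) (w c.1) j)
    have hvrow : ∀ c : {c : Fin n // P c},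
        ∑ c' : {c : Fin n // P c}, v c' * g (w c.1) c'.1 = (Y * g) (w c.1) j := by
      intro c
      have := congrFun hv c
      rw [Matrix.toLin'_apply] at this
      rw [Matrix.mulVec, dotProduct] at this
      rw [← this]
      exact Finset.sum_congr rfl fun c' _ => mul_comm _ _
    refine ⟨fun c => if hc : P c then v ⟨c, hc⟩ else 0,
      fun c hc => dif_neg (fun hPc => hc hPc.1), fun i => ?_⟩
    have hsum : ∑ c : Fin n, (if hc : P c then v ⟨c, hc⟩ else 0) * g i c
        = ∑ c : {c : Fin n // P c}, v c * g i c.1 := by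
      rw [← Finset.sum_filter_of_ne (p := P) (fun x _ hx => by
            by_contra hPx
            exact hx (by rw [dif_neg hPx, zero_mul]))]
      rw [Finset.sum_subtype (p := P) (Finset.univ.filter P) (fun x => by simp)
        (fun c => (if hc : P c then v ⟨c, hc⟩ else 0) * g i c)]
      refine Finset.sum_congr rfl fun c _ => ?_
      rw [dif_pos c.2]
    rw [hsum]
    by_cases hpiv : ∃ c : {c : Fin n // P c}, w c.1 = i
    · obtain ⟨c, hc⟩ := hpiv
      rw [← hc]
      exact (hvrow c).symm
    · by_cases hiℓ : i ≤ ℓ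
      · have hnop : ∀ c' : Fin n, c' ≤ h j → w c' ≤ ℓ → w c' ≠ i :=
          fun c' h1 h2 he => hpiv ⟨⟨c', h1, h2⟩, he⟩
        rcases hcases with hB | hIII | hIV
        · have hgz : ∀ c : {c : Fin n // P c}, g i c.1 = 0 :=
            fun c => hB i c.1 hiℓ hnop c.2.1 c.2.2
          have hyi : (X * g) i j = 0 := by
            rw [hay i]
            refine Finset.sum_eq_zero fun c _ => ?_
            by_cases hc : P c
            · rw [hgz ⟨c, hc⟩, mul_zero]
            · rw [hasupp c hc, zero_mul]
          obtain ⟨μ, hμ, hμe⟩ := skeletal_collapse hX g t ht i j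
          rw [← hYdef] at hμe
          rw [hμe, hyi, mul_zero]
          symm
          exact Finset.sum_eq_zero fun c _ => by rw [hgz c, mul_zero]
        · exact absurd ⟨i, hiℓ, hnop⟩ hIII
        · exfalso
          have hinj2 : Function.Injective
              (fun c : {c : Fin n // P c} => (⟨w c.1, c.2.2⟩ : {i : Fin n // i ≤ ℓ})) := by
            intro c c' he
            exact Subtype.ext (w.injective (congrArg Subtype.val he))
          have hcard : Fintype.card {i : Fin n // i ≤ ℓ} = (ℓ : ℕ) + 1 := by
            rw [Fintype.card_subtype]
            have he : Finset.univ.filter (fun i : Fin n => i ≤ ℓ) = Finset.Iic ℓ := by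
              ext x; simp
            rw [he, Fin.card_Iic]
          have hbij := (Fintype.bijective_iff_injective_and_card _).mpr
            ⟨hinj2, by rw [hIV, hcard]⟩
          obtain ⟨c, hc⟩ := hbij.surjective ⟨i, hiℓ⟩
          exact hpiv ⟨c, congrArg Subtype.val hc⟩
      · have hyi : (X * g) i j = 0 := hygt i (not_le.mp hiℓ)
        obtain ⟨μ, hμ, hμe⟩ := skeletal_collapse hX g t ht i j
        rw [← hYdef] at hμe
        rw [hμe, hyi, mul_zero]
        symm
        refine Finset.sum_eq_zero fun c _ => ?_
        rw [hw2 c.1 i (lt_of_le_of_lt c.2.2 (not_le.mp hiℓ)), mul_zero]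

end StmtAux

/-- Let `X` be skeletal nilpotent and `H` a Hessenberg space.  Suppose
for every `g ∈ GL(n,ℂ)` in normalized Schubert form (pivot permutation `w`) with
`g⁻¹ X g ∈ H` and every column `j`, at least one of the following holds:
(i) `X g_j = 0` (no pivot row `ℓ` exists); or, with `ℓ = piv(X g_j)`:
(ii) the dependent matrix `B_j` is zero; (iii) `B_j` is empty (there are no rows
`i ≤ ℓ` outside `R_j`); (iv) the pivot matrix `A_j` is square of size
`piv(X g_j) × piv(X g_j)` (i.e. `#C_j = ℓ` in 1-based terms, `= (ℓ : ℕ) + 1`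
in 0-based terms).  Then `H(X,H)` is `T`-stable. -/
theorem stmt13 {n : ℕ} (X : Matrix (Fin n) (Fin n) ℂ) (hX : Skeletal X)
    (h : Fin n → Fin n) (hh1 : ∀ i, i ≤ h i) (hh2 : Monotone h)
    (hyp : ∀ (g : Matrix (Fin n) (Fin n) ℂ) (w : Equiv.Perm (Fin n)),
      IsUnit g → (∀ i : Fin n, g (w i) i = 1) →
      (∀ i i' : Fin n, w i < i' → g i' i = 0) →
      (∀ i j : Fin n, i < j → g (w i) j = 0) →
      g⁻¹ * X * g ∈ hessSpace h →
      ∀ j ℓ : Fin n, (X * g) ℓ j ≠ 0 → (∀ i : Fin n, ℓ < i → (X * g) i j = 0) →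
        ((∀ i c : Fin n, i ≤ ℓ → (∀ c' : Fin n, c' ≤ h j → w c' ≤ ℓ → w c' ≠ i) →
            c ≤ h j → w c ≤ ℓ → g i c = 0) ∨
          (¬ ∃ i : Fin n, i ≤ ℓ ∧ ∀ c' : Fin n, c' ≤ h j → w c' ≤ ℓ → w c' ≠ i) ∨
          (Fintype.card {c : Fin n // c ≤ h j ∧ w c ≤ ℓ} = (ℓ : ℕ) + 1))) :
    ∀ t : Fin n → ℂ, (∀ i, t i ≠ 0) →
      ∀ g : Matrix (Fin n) (Fin n) ℂ, IsUnit g → g⁻¹ * X * g ∈ hessSpace h →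
        (Matrix.diagonal t * g)⁻¹ * X * (Matrix.diagonal t * g) ∈ hessSpace h := by
  intro t ht g hgu hmem
  obtain ⟨b, hbtri, hbu, w, hw1, hw2, hw3⟩ := schubert_decomp g hgu
  have hbdet : IsUnit b.det := (Matrix.isUnit_iff_isUnit_det b).mp hbu
  have hb1 : b * b⁻¹ = 1 := Matrix.mul_nonsing_inv b hbdet
  have hb2 : b⁻¹ * b = 1 := Matrix.nonsing_inv_mul b hbdet
  haveI : Invertible b := hbu.invertible
  have hbinvtri : b⁻¹.BlockTriangular id :=
    Matrix.blockTriangular_inv_of_blockTriangular hbtri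
  set g₀ : Matrix (Fin n) (Fin n) ℂ := g * b with hg₀
  have hg₀u : IsUnit g₀ := hgu.mul hbu
  have hmem₀ : g₀⁻¹ * X * g₀ ∈ hessSpace h := by
    have he : g₀⁻¹ * X * g₀ = b⁻¹ * (g⁻¹ * X * g) * b := by
      rw [hg₀, Matrix.mul_inv_rev]
      simp only [Matrix.mul_assoc]
    rw [he]
    exact hess_mul_triangular hh2 hmem hbinvtri hbtri
  have hcore : g₀⁻¹ * (Matrix.diagonal (fun i => (t i)⁻¹) * X * Matrix.diagonal t) * g₀
      ∈ hessSpace h :=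
    schubert_core X hX h hyp t ht g₀ w hg₀u hw1 hw2 hw3 hmem₀
  set Y : Matrix (Fin n) (Fin n) ℂ :=
    Matrix.diagonal (fun i => (t i)⁻¹) * X * Matrix.diagonal t with hYdef
  have e1 : (Matrix.diagonal t * g)⁻¹ * X * (Matrix.diagonal t * g) = g⁻¹ * Y * g := by
    rw [Matrix.mul_inv_rev, diag_inv_eq t ht, hYdef]
    simp only [Matrix.mul_assoc]
  have e2 : b * (g₀⁻¹ * Y * g₀) * b⁻¹ = g⁻¹ * Y * g := by
    rw [hg₀, Matrix.mul_inv_rev]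
    calc b * (b⁻¹ * g⁻¹ * Y * (g * b)) * b⁻¹
        = (b * b⁻¹) * (g⁻¹ * Y * g) * (b * b⁻¹) := by
          simp only [Matrix.mul_assoc]
      _ = g⁻¹ * Y * g := by
          rw [hb1, Matrix.one_mul]
          rw [show g⁻¹ * Y * g * 1 = g⁻¹ * Y * g from by rw [Matrix.mul_one]]
  rw [e1, ← e2]
  exact hess_mul_triangular hh2 hcore hbtri hbinvtri
end

section
/- Let X = F_{n−1} be the regular nilpotent n×n matrix in Jordan form (entry 1 in positions (i, i+1) for i = 1,…,n−1, and 0 elsewhere), and let H be the Hessenberg space of the Hessenberg function with h(j) = n−1 for all j ≤ n−1 and h(n) = n. Then H(X,H) is T-stable, and moreover if g' ∈ B g B and g⁻¹ X g ∈ H then g'⁻¹ X g' ∈ H, so H(X,H) is a union of Schubert cells BwB/B. -/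
section Aux

variable {n : ℕ}

/-- The last index. -/
def la (hn : 2 ≤ n) : Fin n := ⟨n - 1, by omega⟩

lemma fmat_apply (hn : 2 ≤ n) (i j : Fin n) :
    Fmat n (n - 1) i j = if (i : ℕ) < n - 1 ∧ (j : ℕ) = 1 + (i : ℕ) then 1 else 0 := by
  have h1 : n - (n - 1) = 1 := by omega
  simp [Fmat, h1]

/-- If the last row of `A` is supported on the last entry, then `A * X * C ∈ Hlast`. -/
lemma mem_Hlast_of_row (hn : 2 ≤ n) (A C : Matrix (Fin n) (Fin n) ℂ)
    (hA : ∀ j : Fin n, (j : ℕ) < n - 1 → A (la hn) j = 0) :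
    A * Fmat n (n - 1) * C ∈ Hlast n := by
  intro i j hi hj
  have hi' : i = la hn := Fin.ext hi
  subst hi'
  have hAX : ∀ k : Fin n, (A * Fmat n (n - 1)) (la hn) k = 0 := by
    intro k
    rw [Matrix.mul_apply]
    apply Finset.sum_eq_zero
    intro m _
    by_cases hm : (m : ℕ) < n - 1
    · rw [hA m hm, zero_mul]
    · rw [fmat_apply hn, if_neg (by tauto), mul_zero]
  rw [Matrix.mul_apply]
  apply Finset.sum_eq_zero
  intro k _
  rw [hAX k, zero_mul]

/-- Conversely: membership forces the last row of `g⁻¹` to be supported on the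
last entry. -/
lemma row_of_mem (hn : 2 ≤ n) (g : Matrix (Fin n) (Fin n) ℂ) (hg : IsUnit g)
    (h : g⁻¹ * Fmat n (n - 1) * g ∈ Hlast n) :
    ∀ j : Fin n, (j : ℕ) < n - 1 → g⁻¹ (la hn) j = 0 := by
  have hgd : IsUnit g.det := (Matrix.isUnit_iff_isUnit_det g).mp hg
  set M := g⁻¹ * Fmat n (n - 1) * g with hM
  set c := M (la hn) (la hn) with hc
  have hMrow : ∀ k : Fin n, (k : ℕ) < n - 1 → M (la hn) k = 0 := by
    intro k hk
    exact h (la hn) k rfl hk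
  have hMg : M * g⁻¹ = g⁻¹ * Fmat n (n - 1) := by
    rw [hM, mul_assoc, Matrix.mul_nonsing_inv g hgd, mul_one]
  -- the fundamental equation: for every j, (g⁻¹ * Fmat n (n - 1)) la j = c * g⁻¹ la j
  have E : ∀ j : Fin n, (g⁻¹ * Fmat n (n - 1)) (la hn) j = c * g⁻¹ (la hn) j := by
    intro j
    rw [← hMg, Matrix.mul_apply]
    rw [Finset.sum_eq_single (la hn)]
    · intro k _ hk
      have hk' : (k : ℕ) < n - 1 := by
        have := k.isLt
        have : (k : ℕ) ≠ n - 1 := fun hh => hk (Fin.ext hh)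
        omega
      rw [hMrow k hk', zero_mul]
    · intro hmem; exact absurd (Finset.mem_univ _) hmem
  -- compute the left side
  have L0 : (g⁻¹ * Fmat n (n - 1)) (la hn) ⟨0, by omega⟩ = 0 := by
    rw [Matrix.mul_apply]
    apply Finset.sum_eq_zero
    intro k _
    rw [fmat_apply hn, if_neg (by simp; omega), mul_zero]
  have LS : ∀ m : ℕ, (hm : m + 1 < n) →
      (g⁻¹ * Fmat n (n - 1)) (la hn) ⟨m + 1, hm⟩ = g⁻¹ (la hn) ⟨m, by omega⟩ := by
    intro m hm
    rw [Matrix.mul_apply]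
    rw [Finset.sum_eq_single (⟨m, by omega⟩ : Fin n)]
    · rw [fmat_apply hn, if_pos (by simp; omega), mul_one]
    · intro k _ hk
      have hk' : (k : ℕ) ≠ m := fun hh => hk (Fin.ext hh)
      rw [fmat_apply hn, if_neg (by simp; omega), mul_zero]
    · intro hmem; exact absurd (Finset.mem_univ _) hmem
  -- equations
  have eq0 : c * g⁻¹ (la hn) ⟨0, by omega⟩ = 0 := by rw [← E, L0]
  have eqS : ∀ m : ℕ, (hm : m + 1 < n) →
      g⁻¹ (la hn) ⟨m, by omega⟩ = c * g⁻¹ (la hn) ⟨m + 1, hm⟩ := by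
    intro m hm
    rw [← E, LS m hm]
  by_cases hc0 : c = 0
  · intro j hj
    have hj1 : (j : ℕ) + 1 < n := by omega
    have := eqS (j : ℕ) hj1
    rw [hc0, zero_mul] at this
    have hje : (⟨(j : ℕ), by omega⟩ : Fin n) = j := Fin.ext rfl
    rw [← hje, this]
  · -- c ≠ 0 : all entries of the last row of g⁻¹ vanish
    have hall : ∀ m : ℕ, (hm : m < n) → g⁻¹ (la hn) ⟨m, hm⟩ = 0 := by
      intro m
      induction m with
      | zero =>
        intro hm
        exact (mul_eq_zero.mp eq0).resolve_left hc0
      | succ k ih =>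
        intro hm
        have h1 := eqS k hm
        rw [ih (by omega)] at h1
        have := h1.symm
        rcases mul_eq_zero.mp this with h | h
        · exact absurd h hc0
        · exact h
    intro j hj
    have hje : (⟨(j : ℕ), j.isLt⟩ : Fin n) = j := Fin.ext rfl
    rw [← hje]; exact hall _ _

lemma mul_row (hn : 2 ≤ n) (A B : Matrix (Fin n) (Fin n) ℂ)
    (hA : ∀ k : Fin n, (k : ℕ) < n - 1 → A (la hn) k = 0) (j : Fin n) :
    (A * B) (la hn) j = A (la hn) (la hn) * B (la hn) j := by
  rw [Matrix.mul_apply]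
  rw [Finset.sum_eq_single (la hn)]
  · intro k _ hk
    have hk' : (k : ℕ) < n - 1 := by
      have := k.isLt
      have : (k : ℕ) ≠ n - 1 := fun hh => hk (Fin.ext hh)
      omega
    rw [hA k hk', zero_mul]
  · intro hmem; exact absurd (Finset.mem_univ _) hmem

lemma UT_inv (hn : 2 ≤ n) (b : Matrix (Fin n) (Fin n) ℂ) (hb : IsUnit b) (hUT : UT b) :
    UT b⁻¹ := by
  have : Invertible b := Matrix.invertibleOfIsUnitDet b ((Matrix.isUnit_iff_isUnit_det b).mp hb)
  have hbt : Matrix.BlockTriangular b (id : Fin n → Fin n) := fun i j h => hUT i j h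
  have := Matrix.blockTriangular_inv_of_blockTriangular hbt
  intro i j hij
  exact this hij

end Aux

/-- Let `X = F_{n-1}` be the regular nilpotent in Jordan form and `H`
the Hessenberg space with `h(j) = n-1` for `j ≤ n-1` and `h(n) = n`.  Then `H(X,H)`
is `T`-stable, and moreover membership is constant on double cosets `B g B`, so
`H(X,H)` is a union of Schubert cells `BwB/B`. -/
theorem stmt14 {n : ℕ} (hn : 2 ≤ n) :
    (∀ t : Fin n → ℂ, (∀ i, t i ≠ 0) →
      ∀ g : Matrix (Fin n) (Fin n) ℂ, IsUnit g →
        g⁻¹ * Fmat n (n - 1) * g ∈ Hlast n →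
        (Matrix.diagonal t * g)⁻¹ * Fmat n (n - 1) * (Matrix.diagonal t * g) ∈
          Hlast n) ∧
    (∀ g g' b₁ b₂ : Matrix (Fin n) (Fin n) ℂ, IsUnit g → IsUnit b₁ → IsUnit b₂ →
      UT b₁ → UT b₂ → g' = b₁ * g * b₂ →
      g⁻¹ * Fmat n (n - 1) * g ∈ Hlast n →
      g'⁻¹ * Fmat n (n - 1) * g' ∈ Hlast n) := by
  have main : ∀ g g' b₁ b₂ : Matrix (Fin n) (Fin n) ℂ, IsUnit g → IsUnit b₁ → IsUnit b₂ →
      UT b₁ → UT b₂ → g' = b₁ * g * b₂ →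
      g⁻¹ * Fmat n (n - 1) * g ∈ Hlast n →
      g'⁻¹ * Fmat n (n - 1) * g' ∈ Hlast n := by
    intro g g' b₁ b₂ hg hb₁ hb₂ hU₁ hU₂ hgg' hmem
    have key := row_of_mem hn g hg hmem
    have hU₁' := UT_inv hn b₁ hb₁ hU₁
    have hU₂' := UT_inv hn b₂ hb₂ hU₂
    have hinv : g'⁻¹ = b₂⁻¹ * (g⁻¹ * b₁⁻¹) := by
      rw [hgg', Matrix.mul_inv_rev, Matrix.mul_inv_rev]
    have hrow : ∀ j : Fin n, (j : ℕ) < n - 1 → g'⁻¹ (la hn) j = 0 := by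
      intro j hj
      have hjlt : j < la hn := by
        rw [Fin.lt_def]; exact hj
      have h2 : ∀ k : Fin n, (k : ℕ) < n - 1 → b₂⁻¹ (la hn) k = 0 := by
        intro k hk
        exact hU₂' (la hn) k (by rw [Fin.lt_def]; exact hk)
      rw [hinv, mul_row hn _ _ h2 j, mul_row hn _ _ key j,
        hU₁' (la hn) j hjlt, mul_zero, mul_zero]
    exact mem_Hlast_of_row hn g'⁻¹ g' hrow
  refine ⟨?_, main⟩
  intro t ht g hg hmem
  have hut : IsUnit t := by
    rw [isUnit_iff_exists_inv]
    exact ⟨fun i => (t i)⁻¹, by ext i; exact mul_inv_cancel₀ (ht i)⟩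
  have hdt : IsUnit (Matrix.diagonal t) := Matrix.isUnit_diagonal.mpr hut
  have hUTd : UT (Matrix.diagonal t) := by
    intro i j hij
    exact Matrix.diagonal_apply_ne _ (fun h => absurd h (ne_of_gt hij))
  exact main g (Matrix.diagonal t * g) (Matrix.diagonal t) 1 hg hdt isUnit_one hUTd
    (fun i j hij => by simp [Matrix.one_apply, (ne_of_gt hij)]) (by rw [mul_one]) hmem
end

section
/- Let X be an n×n skeletal nilpotent matrix and let H be the Hessenberg space of a Hessenberg function with h(1) = 1 and h(2) = n. Then H(X,H) is T-stable: for every invertible diagonal matrix t and every g ∈ GL(n,ℂ), if g⁻¹ X g ∈ H then (tg)⁻¹ X (tg) ∈ H. -/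
/-- Let `X` be skeletal nilpotent and `H` the Hessenberg space of a
Hessenberg function with `h(1) = 1` and `h(2) = n` (1-based; 0-based: `h 0 = 0` and
`h 1 = n - 1`).  Then `H(X,H)` is `T`-stable. -/
theorem stmt15 {n : ℕ} (hn : 2 ≤ n)
    (X : Matrix (Fin n) (Fin n) ℂ) (hX : Skeletal X)
    (h : Fin n → Fin n) (hh1 : ∀ i, i ≤ h i) (hh2 : Monotone h)
    (h1 : (h ⟨0, by omega⟩ : ℕ) = 0) (h2 : (h ⟨1, by omega⟩ : ℕ) = n - 1)
    (t : Fin n → ℂ) (ht : ∀ i, t i ≠ 0)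
    (g : Matrix (Fin n) (Fin n) ℂ) (hg : IsUnit g)
    (hmem : g⁻¹ * X * g ∈ hessSpace h) :
    (Matrix.diagonal t * g)⁻¹ * X * (Matrix.diagonal t * g) ∈ hessSpace h := by
  obtain ⟨hupper, hrow, -⟩ := hX
  have z0 : Fin n := ⟨0, by omega⟩
  set w : Fin n → ℂ := fun j => g j ⟨0, by omega⟩ with hw
  set c : ℂ := (g⁻¹ * X * g) ⟨0, by omega⟩ ⟨0, by omega⟩ with hc
  have hgdet : IsUnit g.det := (Matrix.isUnit_iff_isUnit_det g).mp hg
  -- the hypothesis gives vanishing of column 0 below the diagonal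
  have hM0 : ∀ i : Fin n, i ≠ (⟨0, by omega⟩ : Fin n) →
      (g⁻¹ * X * g) i ⟨0, by omega⟩ = 0 := by
    intro i hi
    apply hmem
    have hiv : (i : ℕ) ≠ 0 := by
      intro h0; exact hi (Fin.ext h0)
    rw [Fin.lt_def, h1]
    omega
  -- column 0 of X*g is proportional to column 0 of g
  have hXg : ∀ i : Fin n, (X * g) i ⟨0, by omega⟩ = w i * c := by
    intro i
    have e : X * g = g * (g⁻¹ * X * g) := by
      rw [← Matrix.mul_assoc g, ← Matrix.mul_assoc g,
        Matrix.mul_nonsing_inv g hgdet, Matrix.one_mul]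
    rw [e, Matrix.mul_apply]
    rw [Finset.sum_eq_single (⟨0, by omega⟩ : Fin n)
      (fun b _ hb => by rw [hM0 b hb, mul_zero])
      (fun habs => absurd (Finset.mem_univ _) habs)]
  -- the eigenvalue c is zero
  have hcol0 : ∀ i : Fin n, (X * g) i ⟨0, by omega⟩ = 0 := by
    by_cases hex : ∃ i, w i ≠ 0
    · classical
      set S := Finset.univ.filter (fun i => w i ≠ 0) with hS
      have hSne : S.Nonempty := ⟨hex.choose, by simp [hS, hex.choose_spec]⟩
      set i₀ := S.max' hSne with hi₀
      have hwi₀ : w i₀ ≠ 0 := by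
        have := S.max'_mem hSne
        simpa [hS] using this
      have hzero : (X * g) i₀ ⟨0, by omega⟩ = 0 := by
        rw [Matrix.mul_apply]
        apply Finset.sum_eq_zero
        intro j _
        by_cases hj : j ≤ i₀
        · rw [hupper i₀ j hj, zero_mul]
        · have hwj : w j = 0 := by
            by_contra hwj
            exact hj (S.le_max' j (by simp [hS, hwj]))
          show X i₀ j * w j = 0
          rw [hwj, mul_zero]
      have hc0 : c = 0 := by
        have := hXg i₀
        rw [hzero] at this
        rcases mul_eq_zero.mp this.symm with h' | h'
        · exact absurd h' hwi₀
        · exact h'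
      intro i
      rw [hXg i, hc0, mul_zero]
    · push_neg at hex
      intro i
      rw [hXg i, hex i, zero_mul]
  -- each individual term vanishes
  have hterm : ∀ i j : Fin n, X i j * w j = 0 := by
    intro i j
    by_cases hx : X i j = 0
    · rw [hx, zero_mul]
    · have hsum := hcol0 i
      rw [Matrix.mul_apply] at hsum
      rw [Finset.sum_eq_single j
        (fun b _ hb => by
          by_cases hxb : X i b = 0
          · show X i b * w b = 0
            rw [hxb, zero_mul]
          · exact absurd (hrow i b j hxb hx) hb)
        (fun habs => absurd (Finset.mem_univ _) habs)] at hsum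
      exact hsum
  -- column 0 of X * (diag t * g) is entirely zero
  have hXDg : ∀ i : Fin n, (X * (Matrix.diagonal t * g)) i ⟨0, by omega⟩ = 0 := by
    intro i
    rw [Matrix.mul_apply]
    apply Finset.sum_eq_zero
    intro j _
    rw [Matrix.diagonal_mul]
    calc X i j * (t j * g j ⟨0, by omega⟩) = (X i j * w j) * t j := by ring
      _ = 0 := by rw [hterm i j, zero_mul]
  -- conclude
  intro i j hij
  by_cases hj : j = (⟨0, by omega⟩ : Fin n)
  · rw [hj, Matrix.mul_assoc, Matrix.mul_apply]
    apply Finset.sum_eq_zero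
    intro k _
    rw [hXDg k, mul_zero]
  · exfalso
    have hj1 : (1 : ℕ) ≤ (j : ℕ) := by
      rcases Nat.eq_zero_or_pos (j : ℕ) with h0 | h0
      · exact absurd (Fin.ext h0) hj
      · exact h0
    have hle : h (⟨1, by omega⟩ : Fin n) ≤ h j := hh2 (by rw [Fin.le_def]; exact hj1)
    rw [Fin.le_def, h2] at hle
    rw [Fin.lt_def] at hij
    have := i.isLt
    omega
end

section
/- Let X be an n×n skeletal nilpotent matrix with exactly k nonzero rows, and let H be a Hessenberg space whose Hessenberg function satisfies h(1) = 2. Suppose there exists g ∈ GL(n,ℂ) with g⁻¹ X g ∈ H such that every entry of the first column of g is nonzero (so the first column has pivot in row n). Then every t = diag(t_1,…,t_n) ∈ T such that H(X,H) is {t}-stable satisfies t_i⁻¹ t_{X(i)} = t_{i'}⁻¹ t_{X(i')} for all pairs of nonzero rows i, i' of X; that is, the largest subtorus of T under which H(X,H) is stable is K = {t ∈ T : the ratios t_i⁻¹ t_{X(i)} agree over all nonzero rows i of X}. -/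
lemma lagrange_zero (s : Finset ℂ) (y : ℂ → ℂ)
    (hy : ∀ m : ℕ, ∑ c ∈ s, c ^ m * y c = 0) : ∀ c ∈ s, y c = 0 := by
  classical
  intro c₀ hc₀
  set P : Polynomial ℂ := ∏ c ∈ s.erase c₀, (Polynomial.X - Polynomial.C c) with hP
  have hPeval : ∀ x : ℂ, P.eval x = ∏ c ∈ s.erase c₀, (x - c) := by
    intro x; simp [hP, Polynomial.eval_prod]
  have hsum : ∑ c ∈ s, P.eval c * y c = P.eval c₀ * y c₀ := by
    rw [← Finset.add_sum_erase s _ hc₀]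
    have hz : ∑ c ∈ s.erase c₀, P.eval c * y c = 0 := Finset.sum_eq_zero (fun c hc => by
      have : P.eval c = 0 := by
        rw [hPeval]; exact Finset.prod_eq_zero hc (sub_self c)
      simp [this])
    simp [hz]
  have hzero : ∑ c ∈ s, P.eval c * y c = 0 := by
    have hc : ∀ c ∈ s, P.eval c * y c
        = ∑ m ∈ Finset.range (P.natDegree + 1), P.coeff m * (c ^ m * y c) := by
      intro c _
      rw [Polynomial.eval_eq_sum_range, Finset.sum_mul]
      exact Finset.sum_congr rfl (fun m _ => by ring)
    rw [Finset.sum_congr rfl hc, Finset.sum_comm]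
    apply Finset.sum_eq_zero; intro m _
    rw [← Finset.mul_sum, hy m, mul_zero]
  have hne : P.eval c₀ ≠ 0 := by
    rw [hPeval]
    apply Finset.prod_ne_zero_iff.mpr
    intro c hc
    exact sub_ne_zero_of_ne (Finset.ne_of_mem_erase hc).symm
  exact (mul_eq_zero.mp (hsum.symm.trans hzero)).resolve_left hne

/-- The ratio-`c` part of `X` relative to the torus element `t`. -/
noncomputable def Zmat {n : ℕ} (X : Matrix (Fin n) (Fin n) ℂ) (t : Fin n → ℂ) (c : ℂ) :
    Matrix (Fin n) (Fin n) ℂ :=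
  Matrix.of fun a b => if (t a)⁻¹ * t b = c then X a b else 0

lemma Zmat_apply {n : ℕ} (X : Matrix (Fin n) (Fin n) ℂ) (t : Fin n → ℂ) (c : ℂ)
    (a b : Fin n) : Zmat X t c a b = if (t a)⁻¹ * t b = c then X a b else 0 := rfl

/-- Let `X` be skeletal nilpotent with exactly `k` nonzero rows, and
`H` a Hessenberg space with `h(1) = 2` (1-based; 0-based `h 0 = 1`).  Suppose there
is `g ∈ GL(n,ℂ)` with `g⁻¹ X g ∈ H` whose first column has all entries nonzero (so
its pivot is in row `n`).  Then every `t ∈ T` for which `H(X,H)` is `{t}`-stable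
satisfies `t_i⁻¹ t_{X(i)} = t_{i'}⁻¹ t_{X(i')}` for all nonzero rows `i, i'` of `X`;
that is, the largest subtorus of `T` stabilizing `H(X,H)` is the torus `K` where all
those ratios agree. -/
theorem stmt16 {n k : ℕ} (hn : 2 ≤ n)
    (X : Matrix (Fin n) (Fin n) ℂ) (hX : Skeletal X)
    (hk : Nat.card {i : Fin n // ∃ j, X i j ≠ 0} = k)
    (h : Fin n → Fin n) (hh1 : ∀ i, i ≤ h i) (hh2 : Monotone h)
    (h1 : (h ⟨0, by omega⟩ : ℕ) = 1)
    (g : Matrix (Fin n) (Fin n) ℂ) (hg : IsUnit g)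
    (hmem : g⁻¹ * X * g ∈ hessSpace h)
    (hcol : ∀ i : Fin n, g i ⟨0, by omega⟩ ≠ 0)
    (t : Fin n → ℂ) (ht : ∀ i, t i ≠ 0)
    (hstab : ∀ g' : Matrix (Fin n) (Fin n) ℂ, IsUnit g' →
      g'⁻¹ * X * g' ∈ hessSpace h →
      (Matrix.diagonal t * g')⁻¹ * X * (Matrix.diagonal t * g') ∈ hessSpace h) :
    ∀ i i' j j' : Fin n, X i j ≠ 0 → X i' j' ≠ 0 →
      (t i)⁻¹ * t j = (t i')⁻¹ * t j' := by
    classical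
  intro i₀ i₀' j₀ j₀' hXij hXij'
  by_contra hne
  have hn0 : 0 < n := by omega
  have hn1 : 1 < n := by omega
  let z0 : Fin n := ⟨0, hn0⟩
  let z1 : Fin n := ⟨1, hn1⟩
  let istar : Fin n := ⟨n - 1, by omega⟩
  have h1' : (h z0 : ℕ) = 1 := h1
  have hdet : IsUnit g.det := (Matrix.isUnit_iff_isUnit_det g).mp hg
  have hginv : g * g⁻¹ = 1 := Matrix.mul_nonsing_inv g hdet
  have hinvg : g⁻¹ * g = 1 := Matrix.nonsing_inv_mul g hdet
  set s : Finset ℂ := (Finset.univ.filter (fun p : Fin n × Fin n => X p.1 p.2 ≠ 0)).image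
      (fun p : Fin n × Fin n => (t p.1)⁻¹ * t p.2) with hs
  have hDunit : ∀ u : Fin n → ℂ, (∀ i, u i ≠ 0) → IsUnit (Matrix.diagonal u) := by
    intro u hu
    rw [Matrix.isUnit_iff_isUnit_det, Matrix.det_diagonal]
    exact isUnit_iff_ne_zero.mpr (Finset.prod_ne_zero_iff.mpr fun i _ => hu i)
  -- Step 1 : iterate the stability hypothesis
  have hpow : ∀ m : ℕ, IsUnit (Matrix.diagonal (fun i => t i ^ m) * g) ∧
      (Matrix.diagonal (fun i => t i ^ m) * g)⁻¹ * X *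
        (Matrix.diagonal (fun i => t i ^ m) * g) ∈ hessSpace h := by
    intro m
    induction m with
    | zero => simpa using ⟨hg, hmem⟩
    | succ m ih =>
      have hdd : Matrix.diagonal t * Matrix.diagonal (fun i => t i ^ m)
          = Matrix.diagonal (fun i => t i ^ (m + 1)) := by
        rw [Matrix.diagonal_mul_diagonal]
        exact congrArg Matrix.diagonal
          (funext fun i => by show t i * t i ^ m = t i ^ (m + 1); ring)
      have h2 := hstab _ ih.1 ih.2
      constructor
      · rw [← hdd, Matrix.mul_assoc (Matrix.diagonal t) (Matrix.diagonal fun i => t i ^ m) g]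
        exact (hDunit t ht).mul ih.1
      · rw [← hdd, Matrix.mul_assoc (Matrix.diagonal t) (Matrix.diagonal fun i => t i ^ m) g]
        exact h2
  -- Step 2 : entrywise consequence
  have hmemS : ∀ m : ℕ, g⁻¹ * (∑ c ∈ s, (c ^ m) • Zmat X t c) * g ∈ hessSpace h := by
    intro m
    have h2 := (hpow m).2
    have hDinv : (Matrix.diagonal (fun i => t i ^ m) * g)⁻¹
        = g⁻¹ * Matrix.diagonal (fun i => (t i ^ m)⁻¹) := by
      apply Matrix.inv_eq_right_inv
      rw [Matrix.mul_assoc, ← Matrix.mul_assoc g g⁻¹, hginv, Matrix.one_mul,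
        Matrix.diagonal_mul_diagonal]
      convert Matrix.diagonal_one with i
      exact mul_inv_cancel₀ (pow_ne_zero m (ht i))
    have hmid : Matrix.diagonal (fun i => (t i ^ m)⁻¹) * X * Matrix.diagonal (fun i => t i ^ m)
        = ∑ c ∈ s, (c ^ m) • Zmat X t c := by
      ext a b
      rw [Matrix.mul_diagonal, Matrix.diagonal_mul, Matrix.sum_apply]
      simp only [Matrix.smul_apply, Zmat_apply, smul_eq_mul]
      by_cases hx : X a b = 0
      · simp [hx]
      · have hmem' : (t a)⁻¹ * t b ∈ s :=
          Finset.mem_image.mpr ⟨(a, b), Finset.mem_filter.mpr ⟨Finset.mem_univ _, hx⟩, rfl⟩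
        have : ∑ c ∈ s, c ^ m * (if (t a)⁻¹ * t b = c then X a b else 0)
            = ((t a)⁻¹ * t b) ^ m * X a b := by
          rw [Finset.sum_eq_single ((t a)⁻¹ * t b)]
          · simp
          · intro c _ hcne
            rw [if_neg (fun hh => hcne hh.symm), mul_zero]
          · intro habs; exact absurd hmem' habs
        rw [this, mul_pow, inv_pow]; ring
    have key : (Matrix.diagonal (fun i => t i ^ m) * g)⁻¹ * X *
        (Matrix.diagonal (fun i => t i ^ m) * g)
        = g⁻¹ * (∑ c ∈ s, (c ^ m) • Zmat X t c) * g := by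
      rw [hDinv, ← hmid]
      simp only [Matrix.mul_assoc]
    exact key ▸ h2
  -- Step 3 : separate the ratio components (Vandermonde/Lagrange)
  have hEzero : ∀ c ∈ s, ∀ a b : Fin n, h b < a → (g⁻¹ * Zmat X t c * g) a b = 0 := by
    intro c hc a b hab
    apply lagrange_zero s (fun c => (g⁻¹ * Zmat X t c * g) a b) _ c hc
    intro m
    have hmb := hmemS m a b hab
    rw [← hmb]
    rw [Matrix.mul_sum, Matrix.sum_mul, Matrix.sum_apply]
    apply Finset.sum_congr rfl
    intro c _
    rw [Matrix.mul_smul, Matrix.smul_mul, Matrix.smul_apply, smul_eq_mul]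
  -- Step 4 : the first-column relation
  have hz01 : z0 ≠ z1 := Fin.ne_of_val_ne (by show (0:ℕ) ≠ 1; omega)
  have hE2 : ∀ c ∈ s, ∀ a : Fin n, (Zmat X t c * g) a z0 =
      g a z0 * (g⁻¹ * Zmat X t c * g) z0 z0 + g a z1 * (g⁻¹ * Zmat X t c * g) z1 z0 := by
    intro c hc a
    have hZg : Zmat X t c * g = g * (g⁻¹ * Zmat X t c * g) := by
      rw [← Matrix.mul_assoc, ← Matrix.mul_assoc, hginv, Matrix.one_mul]
    rw [hZg, Matrix.mul_apply]
    rw [← Finset.sum_subset (Finset.subset_univ ({z0, z1} : Finset (Fin n)))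
      (fun b _ hb => ?_)]
    · rw [Finset.sum_pair hz01]
    · have hb0 : b ≠ z0 := fun hh => hb (by simp [hh])
      have hb1 : b ≠ z1 := fun hh => hb (by simp [hh])
      have hlt : h z0 < b := by
        rw [Fin.lt_def, h1']
        have := b.isLt
        have hv0 : (b : ℕ) ≠ 0 := fun hh => hb0 (Fin.ext hh)
        have hv1 : (b : ℕ) ≠ 1 := fun hh => hb1 (Fin.ext hh)
        omega
      rw [hEzero c hc b z0 hlt, mul_zero]
  -- Step 5 : compute the first-column entries of `Zmat · * g`
  have hval : ∀ (a b : Fin n) (c : ℂ), X a b ≠ 0 →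
      (Zmat X t c * g) a z0 = Zmat X t c a b * g b z0 := by
    intro a b c hab
    rw [Matrix.mul_apply]
    apply Finset.sum_eq_single b
    · intro b2 _ hb2
      have hz : X a b2 = 0 := by
        by_contra hc2; exact hb2 (hX.2.1 a b2 b hc2 hab)
      simp [Zmat_apply, hz]
    · intro habs; exact absurd (Finset.mem_univ b) habs
  have hstarzero : ∀ c : ℂ, (Zmat X t c * g) istar z0 = 0 := by
    intro c
    rw [Matrix.mul_apply]
    apply Finset.sum_eq_zero
    intro b _
    have hble : b ≤ istar := by
      have hb := b.isLt
      rw [Fin.le_def]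
      show (b : ℕ) ≤ n - 1
      omega
    have : X istar b = 0 := hX.1 istar b hble
    simp [Zmat_apply, this]
  have hrs : (t i₀)⁻¹ * t j₀ ∈ s :=
    Finset.mem_image.mpr ⟨(i₀, j₀), Finset.mem_filter.mpr ⟨Finset.mem_univ _, hXij⟩, rfl⟩
  have hr's : (t i₀')⁻¹ * t j₀' ∈ s :=
    Finset.mem_image.mpr ⟨(i₀', j₀'), Finset.mem_filter.mpr ⟨Finset.mem_univ _, hXij'⟩, rfl⟩
  set A := (g⁻¹ * Zmat X t ((t i₀)⁻¹ * t j₀) * g) z0 z0 with hA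
  set B := (g⁻¹ * Zmat X t ((t i₀)⁻¹ * t j₀) * g) z1 z0 with hB
  set A' := (g⁻¹ * Zmat X t ((t i₀')⁻¹ * t j₀') * g) z0 z0 with hA'
  set B' := (g⁻¹ * Zmat X t ((t i₀')⁻¹ * t j₀') * g) z1 z0 with hB'
  have e1 : g i₀ z0 * A + g i₀ z1 * B ≠ 0 := by
    rw [← hE2 _ hrs i₀, hval i₀ j₀ _ hXij, Zmat_apply, if_pos rfl]
    exact mul_ne_zero hXij (hcol j₀)
  have e2 : g i₀' z0 * A + g i₀' z1 * B = 0 := by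
    rw [← hE2 _ hrs i₀', hval i₀' j₀' _ hXij', Zmat_apply,
      if_neg (fun hh => hne hh.symm), zero_mul]
  have e3 : g istar z0 * A + g istar z1 * B = 0 := by
    rw [← hE2 _ hrs istar]; exact hstarzero _
  have e4 : g i₀ z0 * A' + g i₀ z1 * B' = 0 := by
    rw [← hE2 _ hr's i₀, hval i₀ j₀ _ hXij, Zmat_apply, if_neg hne, zero_mul]
  have e5 : g i₀' z0 * A' + g i₀' z1 * B' ≠ 0 := by
    rw [← hE2 _ hr's i₀', hval i₀' j₀' _ hXij', Zmat_apply, if_pos rfl]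
    exact mul_ne_zero hXij' (hcol j₀')
  have e6 : g istar z0 * A' + g istar z1 * B' = 0 := by
    rw [← hE2 _ hr's istar]; exact hstarzero _
  -- Step 6 : linear algebra contradiction
  have hcross : A * B' = A' * B := by
    have hx : g istar z0 * (A * B' - A' * B) = 0 := by
      linear_combination B' * e3 - B * e6
    exact sub_eq_zero.mp ((mul_eq_zero.mp hx).resolve_left (hcol istar))
  have hB'0 : B' = 0 := by
    have hx : B' * (g i₀ z0 * A + g i₀ z1 * B) = 0 := by
      linear_combination g i₀ z0 * hcross + B * e4
    exact (mul_eq_zero.mp hx).resolve_right e1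
  have hA'0 : A' = 0 := by
    have hx : g istar z0 * A' = 0 := by
      rw [hB'0] at e6; linear_combination e6
    exact (mul_eq_zero.mp hx).resolve_left (hcol istar)
  rw [hA'0, hB'0] at e5
  simp at e5
end

section
/- Let H_0 be the Hessenberg space of the Hessenberg function with h(i) = i+1 for 1 ≤ i ≤ n−1 and h(n) = n, and let 1 ≤ k ≤ n−1. Then a diagonal matrix t = diag(t_1,…,t_n) ∈ T satisfies (for all g ∈ GL(n,ℂ): g⁻¹ F_k g ∈ H_0 implies (tg)⁻¹ F_k (tg) ∈ H_0) if and only if t_{1+(n−k)}/t_1 = t_{2+(n−k)}/t_2 = ⋯ = t_n/t_k; that is, the maximal subtorus of T under which H(F_k, H_0) is stable is the codimension-(k−1) torus K = {t ∈ T : t_{1+(n−k)}/t_1 = ⋯ = t_n/t_k}. In particular, for the Peterson variety H(F_{n−1}, H_0), t stabilizes it if and only if t_2/t_1 = t_3/t_2 = ⋯ = t_n/t_{n−1}. -/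
/-- The Hessenberg space `H_0` of the Hessenberg function `h(i) = i + 1` for
`i ≤ n-1`, `h(n) = n` (1-based): `M i j = 0` whenever `i > j + 1` (0-based:
`(j : ℕ) + 1 < (i : ℕ)`). -/
def H0 (n : ℕ) : Set (Matrix (Fin n) (Fin n) ℂ) :=
  {M | ∀ i j : Fin n, (j : ℕ) + 1 < (i : ℕ) → M i j = 0}

set_option linter.unusedSectionVars false
open Matrix


open Matrix

/-- Generic "shifted diagonal" matrix with weights `c`. -/
def Wm (n k m : ℕ) (c : ℕ → ℂ) : Matrix (Fin n) (Fin n) ℂ :=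
  Matrix.of fun i j => if (i : ℕ) < k ∧ (j : ℕ) = (i : ℕ) + m then c (i : ℕ) else 0

lemma Wm_mul {n k m : ℕ} (hkm : k + m = n) (c : ℕ → ℂ) (g : Matrix (Fin n) (Fin n) ℂ)
    (u s : Fin n) :
    (Wm n k m c * g) u s =
      if h : (u : ℕ) < k then c (u : ℕ) * g ⟨(u : ℕ) + m, by omega⟩ s else 0 := by
  rw [Matrix.mul_apply]
  split
  case isTrue h =>
    rw [Finset.sum_eq_single (⟨(u : ℕ) + m, by omega⟩ : Fin n)]
    · simp [Wm, h]
    · intro v _ hv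
      have hv' : (v : ℕ) ≠ (u : ℕ) + m := fun hh => hv (Fin.ext hh)
      simp [Wm, hv']
    · simp
  case isFalse h =>
    apply Finset.sum_eq_zero; intro v _; simp [Wm, h]

lemma sumA {n : ℕ} (x : Fin n) (α : ℂ) (Φ : Fin n → ℂ) :
    ∑ u, (if u = x then α else 0) * Φ u = α * Φ x := by
  rw [Fintype.sum_eq_single x]
  · simp
  · intro b hb; simp [hb]

lemma sumB {n : ℕ} (x y : Fin n) (hxy : x ≠ y) (α β : ℂ) (Φ : Fin n → ℂ) :
    ∑ u, (if u = x then α else if u = y then β else 0) * Φ u = α * Φ x + β * Φ y := by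
  have h : ∀ u, (if u = x then α else if u = y then β else 0) * Φ u
      = (if u = x then α * Φ x else 0) + (if u = y then β * Φ y else 0) := by
    intro u
    by_cases h1 : u = x
    · subst h1; simp [hxy]
    · by_cases h2 : u = y
      · subst h2; simp [h1]
      · simp [h1, h2]
  simp only [h, Finset.sum_add_distrib]
  simp [Finset.sum_ite_eq']

lemma sumC {n : ℕ} (x y z : Fin n) (hxy : x ≠ y) (hxz : x ≠ z) (hyz : y ≠ z)
    (α β γ : ℂ) (Φ : Fin n → ℂ) :
    ∑ u, (if u = x then α else if u = y then β else if u = z then γ else 0) * Φ u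
      = α * Φ x + β * Φ y + γ * Φ z := by
  have h : ∀ u, (if u = x then α else if u = y then β else if u = z then γ else 0) * Φ u
      = (if u = x then α * Φ x else 0) + (if u = y then β * Φ y else 0)
        + (if u = z then γ * Φ z else 0) := by
    intro u
    by_cases h1 : u = x
    · subst h1; simp [hxy, hxz]
    · by_cases h2 : u = y
      · subst h2; simp [h1, hyz]
      · by_cases h3 : u = z
        · subst h3; simp [h1, h2]
        · simp [h1, h2, h3]
  simp only [h, Finset.sum_add_distrib]
  simp [Finset.sum_ite_eq']

section P2
variable {n A B C D : ℕ}

/-- column-operation matrix, case m ≥ 2: A=a, B=a+1, C=a+m, D=a+m+1. -/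
def P2g (n A B C D : ℕ) : Matrix (Fin n) (Fin n) ℂ :=
  Matrix.of fun r s =>
    if (r : ℕ) = A then (if (s : ℕ) = B then 1 else 0)
    else if (r : ℕ) = B then (if (s : ℕ) = B ∨ (s : ℕ) = C then 1 else 0)
    else if (r : ℕ) = C then (if (s : ℕ) = A then 1 else 0)
    else if (r : ℕ) = D then (if (s : ℕ) = A ∨ (s : ℕ) = D then 1 else 0)
    else if (s : ℕ) = (r : ℕ) then 1 else 0

def P2gi (n A B C D : ℕ) : Matrix (Fin n) (Fin n) ℂ :=
  Matrix.of fun r u =>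
    if (r : ℕ) = A then (if (u : ℕ) = C then 1 else 0)
    else if (r : ℕ) = B then (if (u : ℕ) = A then 1 else 0)
    else if (r : ℕ) = C then (if (u : ℕ) = A then -1 else if (u : ℕ) = B then 1 else 0)
    else if (r : ℕ) = D then (if (u : ℕ) = C then -1 else if (u : ℕ) = D then 1 else 0)
    else if (u : ℕ) = (r : ℕ) then 1 else 0

variable (hAB : A < B) (hBC : B < C) (hCD : C < D) (hD : D < n)

include hAB hBC hCD hD

lemma P2gi_rowA {r : Fin n} (hr : (r : ℕ) = A) (u : Fin n) :
    P2gi n A B C D r u = if (u : ℕ) = C then 1 else 0 := by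
  simp only [P2gi, Matrix.of_apply]; rw [if_pos hr]

lemma P2gi_rowB {r : Fin n} (hr : (r : ℕ) = B) (u : Fin n) :
    P2gi n A B C D r u = if (u : ℕ) = A then 1 else 0 := by
  simp only [P2gi, Matrix.of_apply]; rw [if_neg (by omega), if_pos hr]

lemma P2gi_rowC {r : Fin n} (hr : (r : ℕ) = C) (u : Fin n) :
    P2gi n A B C D r u = if (u : ℕ) = A then -1 else if (u : ℕ) = B then 1 else 0 := by
  simp only [P2gi, Matrix.of_apply]; rw [if_neg (by omega), if_neg (by omega), if_pos hr]

lemma P2gi_rowD {r : Fin n} (hr : (r : ℕ) = D) (u : Fin n) :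
    P2gi n A B C D r u = if (u : ℕ) = C then -1 else if (u : ℕ) = D then 1 else 0 := by
  simp only [P2gi, Matrix.of_apply]
  rw [if_neg (by omega), if_neg (by omega), if_neg (by omega), if_pos hr]

lemma P2gi_rowE {r : Fin n} (hr1 : (r : ℕ) ≠ A) (hr2 : (r : ℕ) ≠ B) (hr3 : (r : ℕ) ≠ C)
    (hr4 : (r : ℕ) ≠ D) (u : Fin n) :
    P2gi n A B C D r u = if (u : ℕ) = (r : ℕ) then 1 else 0 := by
  simp only [P2gi, Matrix.of_apply]
  rw [if_neg hr1, if_neg hr2, if_neg hr3, if_neg hr4]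

lemma P2g_rowA {r : Fin n} (hr : (r : ℕ) = A) (s : Fin n) :
    P2g n A B C D r s = if (s : ℕ) = B then 1 else 0 := by
  simp only [P2g, Matrix.of_apply]; rw [if_pos hr]

lemma P2g_rowB {r : Fin n} (hr : (r : ℕ) = B) (s : Fin n) :
    P2g n A B C D r s = if (s : ℕ) = B ∨ (s : ℕ) = C then 1 else 0 := by
  simp only [P2g, Matrix.of_apply]; rw [if_neg (by omega), if_pos hr]

lemma P2g_rowC {r : Fin n} (hr : (r : ℕ) = C) (s : Fin n) :
    P2g n A B C D r s = if (s : ℕ) = A then 1 else 0 := by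
  simp only [P2g, Matrix.of_apply]; rw [if_neg (by omega), if_neg (by omega), if_pos hr]

lemma P2g_rowD {r : Fin n} (hr : (r : ℕ) = D) (s : Fin n) :
    P2g n A B C D r s = if (s : ℕ) = A ∨ (s : ℕ) = D then 1 else 0 := by
  simp only [P2g, Matrix.of_apply]
  rw [if_neg (by omega), if_neg (by omega), if_neg (by omega), if_pos hr]

lemma P2g_rowE {r : Fin n} (hr1 : (r : ℕ) ≠ A) (hr2 : (r : ℕ) ≠ B) (hr3 : (r : ℕ) ≠ C)
    (hr4 : (r : ℕ) ≠ D) (s : Fin n) :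
    P2g n A B C D r s = if (s : ℕ) = (r : ℕ) then 1 else 0 := by
  simp only [P2g, Matrix.of_apply]
  rw [if_neg hr1, if_neg hr2, if_neg hr3, if_neg hr4]

end P2

lemma sumA' {n : ℕ} (X : ℕ) (hX : X < n) (α : ℂ) (Φ : Fin n → ℂ) :
    ∑ u : Fin n, (if (u : ℕ) = X then α else 0) * Φ u = α * Φ ⟨X, hX⟩ := by
  have h : ∀ u : Fin n, ((u : ℕ) = X) = (u = ⟨X, hX⟩) :=
    fun u => propext ⟨fun h => Fin.ext h, fun h => by rw [h]⟩
  simp only [h]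
  exact sumA _ _ _

lemma sumB' {n : ℕ} (X Y : ℕ) (hX : X < n) (hY : Y < n) (hXY : X ≠ Y) (α β : ℂ)
    (Φ : Fin n → ℂ) :
    ∑ u : Fin n, (if (u : ℕ) = X then α else if (u : ℕ) = Y then β else 0) * Φ u
      = α * Φ ⟨X, hX⟩ + β * Φ ⟨Y, hY⟩ := by
  have h1 : ∀ u : Fin n, ((u : ℕ) = X) = (u = ⟨X, hX⟩) :=
    fun u => propext ⟨fun h => Fin.ext h, fun h => by rw [h]⟩
  have h2 : ∀ u : Fin n, ((u : ℕ) = Y) = (u = ⟨Y, hY⟩) :=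
    fun u => propext ⟨fun h => Fin.ext h, fun h => by rw [h]⟩
  simp only [h1, h2]
  exact sumB ⟨X, hX⟩ ⟨Y, hY⟩ (fun h => hXY (by simpa using congrArg Fin.val h)) α β Φ

lemma sumC' {n : ℕ} (X Y Z : ℕ) (hX : X < n) (hY : Y < n) (hZ : Z < n)
    (hXY : X ≠ Y) (hXZ : X ≠ Z) (hYZ : Y ≠ Z) (α β γ : ℂ) (Φ : Fin n → ℂ) :
    ∑ u : Fin n, (if (u : ℕ) = X then α else if (u : ℕ) = Y then β
          else if (u : ℕ) = Z then γ else 0) * Φ u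
      = α * Φ ⟨X, hX⟩ + β * Φ ⟨Y, hY⟩ + γ * Φ ⟨Z, hZ⟩ := by
  have h1 : ∀ u : Fin n, ((u : ℕ) = X) = (u = ⟨X, hX⟩) :=
    fun u => propext ⟨fun h => Fin.ext h, fun h => by rw [h]⟩
  have h2 : ∀ u : Fin n, ((u : ℕ) = Y) = (u = ⟨Y, hY⟩) :=
    fun u => propext ⟨fun h => Fin.ext h, fun h => by rw [h]⟩
  have h3 : ∀ u : Fin n, ((u : ℕ) = Z) = (u = ⟨Z, hZ⟩) :=
    fun u => propext ⟨fun h => Fin.ext h, fun h => by rw [h]⟩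
  simp only [h1, h2, h3]
  exact sumC ⟨X, hX⟩ ⟨Y, hY⟩ ⟨Z, hZ⟩ (fun h => hXY (by simpa using congrArg Fin.val h))
    (fun h => hXZ (by simpa using congrArg Fin.val h))
    (fun h => hYZ (by simpa using congrArg Fin.val h)) α β γ Φ

lemma P2_inv {n A B C D : ℕ} (hAB : A < B) (hBC : B < C) (hCD : C < D) (hD : D < n) :
    P2gi n A B C D * P2g n A B C D = 1 := by
  have hA : A < n := by omega
  have hB : B < n := by omega
  have hC : C < n := by omega
  have hone : ∀ r s : Fin n, (1 : Matrix (Fin n) (Fin n) ℂ) r s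
      = if (r : ℕ) = (s : ℕ) then 1 else 0 := by
    intro r s; rw [Matrix.one_apply]
    by_cases h : r = s
    · rw [if_pos h, if_pos (congrArg Fin.val h)]
    · rw [if_neg h, if_neg (fun hh => h (Fin.ext hh))]
  ext r s
  rw [Matrix.mul_apply, hone]
  by_cases hra : (r : ℕ) = A
  · simp only [P2gi_rowA hAB hBC hCD hD hra]
    rw [sumA' C hC]
    rw [P2g_rowC hAB hBC hCD hD rfl]
    rw [hra]
    split_ifs <;> first | (exfalso; omega) | norm_num
  · by_cases hrb : (r : ℕ) = B
    · simp only [P2gi_rowB hAB hBC hCD hD hrb]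
      rw [sumA' A hA, P2g_rowA hAB hBC hCD hD rfl, hrb]
      split_ifs <;> first | (exfalso; omega) | norm_num
    · by_cases hrc : (r : ℕ) = C
      · simp only [P2gi_rowC hAB hBC hCD hD hrc]
        rw [sumB' A B hA hB (by omega), P2g_rowA hAB hBC hCD hD rfl,
          P2g_rowB hAB hBC hCD hD rfl, hrc]
        split_ifs <;> first | (exfalso; omega) | norm_num
      · by_cases hrd : (r : ℕ) = D
        · simp only [P2gi_rowD hAB hBC hCD hD hrd]
          rw [sumB' C D hC hD (by omega), P2g_rowC hAB hBC hCD hD rfl,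
            P2g_rowD hAB hBC hCD hD rfl, hrd]
          split_ifs <;> first | (exfalso; omega) | norm_num
        · simp only [P2gi_rowE hAB hBC hCD hD hra hrb hrc hrd]
          rw [sumA' (r : ℕ) r.isLt]
          simp only [Fin.eta]
          rw [P2g_rowE hAB hBC hCD hD (by omega) (by omega) (by omega) (by omega)]
          split_ifs <;> first | (exfalso; omega) | norm_num

lemma X2low {n k m a : ℕ} (hkm : k + m = n) (hm2 : 2 ≤ m) (ha : a + 1 < k)
    (c : ℕ → ℂ) (r s : Fin n) (hrs : (s : ℕ) + 1 < (r : ℕ)) :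
    (P2gi n a (a+1) (a+m) (a+m+1) * (Wm n k m c * P2g n a (a+1) (a+m) (a+m+1))) r s
      = if (r : ℕ) = a + m ∧ (s : ℕ) = a then c (a+1) - c a else 0 := by
  have hAB : a < a + 1 := by omega
  have hBC : a + 1 < a + m := by omega
  have hCD : a + m < a + m + 1 := by omega
  have hD : a + m + 1 < n := by omega
  have hA : a < n := by omega
  have hB : a + 1 < n := by omega
  have hC : a + m < n := by omega
  have eA : (Wm n k m c * P2g n a (a+1) (a+m) (a+m+1)) ⟨a, hA⟩ s
      = c a * (if (s : ℕ) = a then 1 else 0) := by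
    rw [Wm_mul hkm, dif_pos (show a < k by omega),
      P2g_rowC hAB hBC hCD hD (rfl : a + m = a + m)]
  have eB : (Wm n k m c * P2g n a (a+1) (a+m) (a+m+1)) ⟨a+1, hB⟩ s
      = c (a+1) * (if (s : ℕ) = a ∨ (s : ℕ) = a + m + 1 then 1 else 0) := by
    rw [Wm_mul hkm, dif_pos (show a + 1 < k from ha),
      P2g_rowD hAB hBC hCD hD (by omega : a + 1 + m = a + m + 1)]
  have eC : (s : ℕ) < a + m → (Wm n k m c * P2g n a (a+1) (a+m) (a+m+1)) ⟨a+m, hC⟩ s = 0 := by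
    intro hs
    rw [Wm_mul hkm]
    split
    · rw [P2g_rowE hAB hBC hCD hD (by omega : a + m + m ≠ a)
        (by omega : a + m + m ≠ a + 1) (by omega : a + m + m ≠ a + m)
        (by omega : a + m + m ≠ a + m + 1),
        if_neg (show ¬ ((s : ℕ) = a + m + m) by omega), mul_zero]
    · rfl
  have eD : (s : ℕ) < a + m → (Wm n k m c * P2g n a (a+1) (a+m) (a+m+1)) ⟨a+m+1, hD⟩ s = 0 := by
    intro hs
    rw [Wm_mul hkm]
    split
    · rw [P2g_rowE hAB hBC hCD hD (by omega : a + m + 1 + m ≠ a)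
        (by omega : a + m + 1 + m ≠ a + 1) (by omega : a + m + 1 + m ≠ a + m)
        (by omega : a + m + 1 + m ≠ a + m + 1),
        if_neg (show ¬ ((s : ℕ) = a + m + 1 + m) by omega), mul_zero]
    · rfl
  rw [Matrix.mul_apply]
  by_cases hra : (r : ℕ) = a
  · simp only [P2gi_rowA hAB hBC hCD hD hra]
    rw [sumA' (a+m) hC, eC (by omega), mul_zero, if_neg (by omega)]
  · by_cases hrb : (r : ℕ) = a + 1
    · simp only [P2gi_rowB hAB hBC hCD hD hrb]
      rw [sumA' a hA, eA, if_neg (by omega), mul_zero, mul_zero, if_neg (by omega)]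
    · by_cases hrc : (r : ℕ) = a + m
      · simp only [P2gi_rowC hAB hBC hCD hD hrc]
        rw [sumB' a (a+1) hA hB (by omega), eA, eB]
        by_cases hsa : (s : ℕ) = a
        · rw [if_pos hsa, if_pos (Or.inl hsa), if_pos ⟨hrc, hsa⟩]
          ring
        · rw [if_neg hsa, if_neg (by omega), if_neg (by omega)]
          ring
      · by_cases hrd : (r : ℕ) = a + m + 1
        · simp only [P2gi_rowD hAB hBC hCD hD hrd]
          rw [sumB' (a+m) (a+m+1) hC hD (by omega), eC (by omega), eD (by omega), if_neg (by omega)]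
          ring
        · simp only [P2gi_rowE hAB hBC hCD hD hra hrb hrc hrd]
          rw [sumA' (r : ℕ) r.isLt]
          simp only [Fin.eta]
          rw [Wm_mul hkm, if_neg (by omega), one_mul]
          split
          · by_cases h1 : (r : ℕ) + m = a
            · rw [P2g_rowA hAB hBC hCD hD h1, if_neg (by omega), mul_zero]
            · by_cases h2 : (r : ℕ) + m = a + 1
              · rw [P2g_rowB hAB hBC hCD hD h2, if_neg (by omega), mul_zero]
              · rw [P2g_rowE hAB hBC hCD hD h1 h2 (by omega : (r : ℕ) + m ≠ a + m)
                  (by omega : (r : ℕ) + m ≠ a + m + 1),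
                  if_neg (show ¬ ((s : ℕ) = (r : ℕ) + m) by omega), mul_zero]
          · rfl

section P1
variable {n A B C : ℕ}

/-- column-operation matrix, case m = 1: A=a, B=a+1, C=a+2. -/
noncomputable def P1g (n A B C : ℕ) : Matrix (Fin n) (Fin n) ℂ :=
  Matrix.of fun r s =>
    if (r : ℕ) = A then (if (s : ℕ) = A then 1 else 0)
    else if (r : ℕ) = B then (if (s : ℕ) = A ∨ (s : ℕ) = B then 1 else 0)
    else if (r : ℕ) = C then
      (if (s : ℕ) = A then (1/2 : ℂ) else if (s : ℕ) = B ∨ (s : ℕ) = C then 1 else 0)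
    else if (s : ℕ) = (r : ℕ) then 1 else 0

noncomputable def P1gi (n A B C : ℕ) : Matrix (Fin n) (Fin n) ℂ :=
  Matrix.of fun r u =>
    if (r : ℕ) = A then (if (u : ℕ) = A then 1 else 0)
    else if (r : ℕ) = B then (if (u : ℕ) = A then -1 else if (u : ℕ) = B then 1 else 0)
    else if (r : ℕ) = C then
      (if (u : ℕ) = A then (1/2 : ℂ) else if (u : ℕ) = B then -1
       else if (u : ℕ) = C then 1 else 0)
    else if (u : ℕ) = (r : ℕ) then 1 else 0

variable (hAB : A < B) (hBC : B < C) (hC : C < n)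

include hAB hBC hC

lemma P1gi_rowA {r : Fin n} (hr : (r : ℕ) = A) (u : Fin n) :
    P1gi n A B C r u = if (u : ℕ) = A then 1 else 0 := by
  simp only [P1gi, Matrix.of_apply]; rw [if_pos hr]

lemma P1gi_rowB {r : Fin n} (hr : (r : ℕ) = B) (u : Fin n) :
    P1gi n A B C r u = if (u : ℕ) = A then -1 else if (u : ℕ) = B then 1 else 0 := by
  simp only [P1gi, Matrix.of_apply]; rw [if_neg (by omega), if_pos hr]

lemma P1gi_rowC {r : Fin n} (hr : (r : ℕ) = C) (u : Fin n) :
    P1gi n A B C r u = if (u : ℕ) = A then (1/2 : ℂ) else if (u : ℕ) = B then -1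
      else if (u : ℕ) = C then 1 else 0 := by
  simp only [P1gi, Matrix.of_apply]; rw [if_neg (by omega), if_neg (by omega), if_pos hr]

lemma P1gi_rowE {r : Fin n} (hr1 : (r : ℕ) ≠ A) (hr2 : (r : ℕ) ≠ B) (hr3 : (r : ℕ) ≠ C)
    (u : Fin n) :
    P1gi n A B C r u = if (u : ℕ) = (r : ℕ) then 1 else 0 := by
  simp only [P1gi, Matrix.of_apply]; rw [if_neg hr1, if_neg hr2, if_neg hr3]

lemma P1g_rowA {r : Fin n} (hr : (r : ℕ) = A) (s : Fin n) :
    P1g n A B C r s = if (s : ℕ) = A then 1 else 0 := by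
  simp only [P1g, Matrix.of_apply]; rw [if_pos hr]

lemma P1g_rowB {r : Fin n} (hr : (r : ℕ) = B) (s : Fin n) :
    P1g n A B C r s = if (s : ℕ) = A ∨ (s : ℕ) = B then 1 else 0 := by
  simp only [P1g, Matrix.of_apply]; rw [if_neg (by omega), if_pos hr]

lemma P1g_rowC {r : Fin n} (hr : (r : ℕ) = C) (s : Fin n) :
    P1g n A B C r s = if (s : ℕ) = A then (1/2 : ℂ)
      else if (s : ℕ) = B ∨ (s : ℕ) = C then 1 else 0 := by
  simp only [P1g, Matrix.of_apply]; rw [if_neg (by omega), if_neg (by omega), if_pos hr]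

lemma P1g_rowE {r : Fin n} (hr1 : (r : ℕ) ≠ A) (hr2 : (r : ℕ) ≠ B) (hr3 : (r : ℕ) ≠ C)
    (s : Fin n) :
    P1g n A B C r s = if (s : ℕ) = (r : ℕ) then 1 else 0 := by
  simp only [P1g, Matrix.of_apply]; rw [if_neg hr1, if_neg hr2, if_neg hr3]

end P1

lemma P1_inv {n A B C : ℕ} (hAB : A < B) (hBC : B < C) (hC : C < n) :
    P1gi n A B C * P1g n A B C = 1 := by
  have hA : A < n := by omega
  have hB : B < n := by omega
  have hone : ∀ r s : Fin n, (1 : Matrix (Fin n) (Fin n) ℂ) r s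
      = if (r : ℕ) = (s : ℕ) then 1 else 0 := by
    intro r s; rw [Matrix.one_apply]
    by_cases h : r = s
    · rw [if_pos h, if_pos (congrArg Fin.val h)]
    · rw [if_neg h, if_neg (fun hh => h (Fin.ext hh))]
  ext r s
  rw [Matrix.mul_apply, hone]
  by_cases hra : (r : ℕ) = A
  · simp only [P1gi_rowA hAB hBC hC hra]
    rw [sumA' A hA, P1g_rowA hAB hBC hC rfl, hra]
    split_ifs <;> first | (exfalso; omega) | norm_num
  · by_cases hrb : (r : ℕ) = B
    · simp only [P1gi_rowB hAB hBC hC hrb]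
      rw [sumB' A B hA hB (by omega), P1g_rowA hAB hBC hC rfl,
        P1g_rowB hAB hBC hC rfl, hrb]
      split_ifs <;> first | (exfalso; omega) | norm_num
    · by_cases hrc : (r : ℕ) = C
      · simp only [P1gi_rowC hAB hBC hC hrc]
        rw [sumC' A B C hA hB hC (by omega) (by omega) (by omega),
          P1g_rowA hAB hBC hC rfl, P1g_rowB hAB hBC hC rfl,
          P1g_rowC hAB hBC hC rfl, hrc]
        split_ifs <;> first | (exfalso; omega) | norm_num
      · simp only [P1gi_rowE hAB hBC hC hra hrb hrc]
        rw [sumA' (r : ℕ) r.isLt]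
        simp only [Fin.eta]
        rw [P1g_rowE hAB hBC hC (by omega) (by omega) (by omega)]
        split_ifs <;> first | (exfalso; omega) | norm_num

lemma X1low {n k a : ℕ} (hkm : k + 1 = n) (ha : a + 1 < k)
    (c : ℕ → ℂ) (r s : Fin n) (hrs : (s : ℕ) + 1 < (r : ℕ)) :
    (P1gi n a (a+1) (a+2) * (Wm n k 1 c * P1g n a (a+1) (a+2))) r s
      = if (r : ℕ) = a + 2 ∧ (s : ℕ) = a then (c a - c (a+1)) / 2 else 0 := by
  have hAB : a < a + 1 := by omega
  have hBC : a + 1 < a + 2 := by omega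
  have hC : a + 2 < n := by omega
  have hA : a < n := by omega
  have hB : a + 1 < n := by omega
  have eA : (Wm n k 1 c * P1g n a (a+1) (a+2)) ⟨a, hA⟩ s
      = c a * (if (s : ℕ) = a ∨ (s : ℕ) = a + 1 then 1 else 0) := by
    rw [Wm_mul hkm, dif_pos (show a < k by omega),
      P1g_rowB hAB hBC hC (rfl : a + 1 = a + 1)]
  have eB : (Wm n k 1 c * P1g n a (a+1) (a+2)) ⟨a+1, hB⟩ s
      = c (a+1) * (if (s : ℕ) = a then (1/2 : ℂ)
          else if (s : ℕ) = a + 1 ∨ (s : ℕ) = a + 2 then 1 else 0) := by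
    rw [Wm_mul hkm, dif_pos (show a + 1 < k from ha),
      P1g_rowC hAB hBC hC (by omega : a + 1 + 1 = a + 2)]
  have eC : (s : ℕ) < a + 2 →
      (Wm n k 1 c * P1g n a (a+1) (a+2)) ⟨a+2, hC⟩ s = 0 := by
    intro hs
    rw [Wm_mul hkm]
    split
    · rw [P1g_rowE hAB hBC hC (by omega : a + 2 + 1 ≠ a)
        (by omega : a + 2 + 1 ≠ a + 1) (by omega : a + 2 + 1 ≠ a + 2),
        if_neg (show ¬ ((s : ℕ) = a + 2 + 1) by omega), mul_zero]
    · rfl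
  rw [Matrix.mul_apply]
  by_cases hra : (r : ℕ) = a
  · simp only [P1gi_rowA hAB hBC hC hra]
    rw [sumA' a hA, eA, if_neg (by omega), mul_zero, mul_zero, if_neg (by omega)]
  · by_cases hrb : (r : ℕ) = a + 1
    · simp only [P1gi_rowB hAB hBC hC hrb]
      rw [sumB' a (a+1) hA hB (by omega), eA, eB, if_neg (by omega),
        if_neg (by omega), if_neg (by omega), if_neg (by omega)]
      ring
    · by_cases hrc : (r : ℕ) = a + 2
      · simp only [P1gi_rowC hAB hBC hC hrc]
        rw [sumC' a (a+1) (a+2) hA hB hC (by omega) (by omega) (by omega), eA, eB,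
          eC (by omega)]
        by_cases hsa : (s : ℕ) = a
        · rw [if_pos (Or.inl hsa), if_pos hsa, if_pos ⟨hrc, hsa⟩]
          ring
        · rw [if_neg (by omega), if_neg hsa, if_neg (by omega), if_neg (by omega)]
          ring
      · simp only [P1gi_rowE hAB hBC hC hra hrb hrc]
        rw [sumA' (r : ℕ) r.isLt]
        simp only [Fin.eta]
        rw [Wm_mul hkm, if_neg (by omega), one_mul]
        split
        · by_cases h1 : (r : ℕ) + 1 = a
          · rw [P1g_rowA hAB hBC hC h1, if_neg (by omega), mul_zero]
          · rw [P1g_rowE hAB hBC hC h1 (by omega : (r : ℕ) + 1 ≠ a + 1)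
              (by omega : (r : ℕ) + 1 ≠ a + 2),
              if_neg (show ¬ ((s : ℕ) = (r : ℕ) + 1) by omega), mul_zero]
        · rfl

lemma Fmat_eq_Wm (n k : ℕ) : Fmat n k = Wm n k (n - k) (fun _ => 1) := by
  ext i j
  simp only [Fmat, Wm, Matrix.of_apply]
  rw [show n - k + (i : ℕ) = (i : ℕ) + (n - k) from Nat.add_comm _ _]

lemma diag_Wm {n k m : ℕ} (hkm : k + m = n) (t : Fin n → ℂ) :
    Matrix.diagonal (fun i => (t i)⁻¹) * Wm n k m (fun _ => 1) * Matrix.diagonal t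
      = Wm n k m (fun b => if h : b < k then
          (t ⟨b, by omega⟩)⁻¹ * t ⟨b + m, by omega⟩ else 0) := by
  ext i j
  simp only [Matrix.diagonal_mul, Matrix.mul_diagonal, Wm, Matrix.of_apply]
  by_cases hc : (i : ℕ) < k ∧ (j : ℕ) = (i : ℕ) + m
  · obtain ⟨h1, h2⟩ := hc
    rw [if_pos (⟨h1, h2⟩ : (i : ℕ) < k ∧ (j : ℕ) = (i : ℕ) + m),
      if_pos (⟨h1, h2⟩ : (i : ℕ) < k ∧ (j : ℕ) = (i : ℕ) + m)]
    simp only [dif_pos h1]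
    have e1 : (⟨(i : ℕ), by omega⟩ : Fin n) = i := Fin.eta i _
    have e2 : (⟨(i : ℕ) + m, by omega⟩ : Fin n) = j := Fin.ext h2.symm
    rw [e1, e2]; ring
  · rw [if_neg hc, if_neg hc]; ring

/-- common plumbing for the hard direction -/
lemma plumb {n k m : ℕ} (hkm : k + m = n)
    (t : Fin n → ℂ) (ht : ∀ i, t i ≠ 0)
    (H : ∀ g : Matrix (Fin n) (Fin n) ℂ, IsUnit g →
        g⁻¹ * Wm n k m (fun _ => 1) * g ∈ H0 n →
        (Matrix.diagonal t * g)⁻¹ * Wm n k m (fun _ => 1) * (Matrix.diagonal t * g) ∈ H0 n)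
    (g gi : Matrix (Fin n) (Fin n) ℂ) (h1 : gi * g = 1)
    (r0 s0 : Fin n) (hrs : (s0 : ℕ) + 1 < (r0 : ℕ))
    (E : (ℕ → ℂ) → ℂ) (hE1 : E (fun _ => 1) = 0)
    (hX : ∀ (c : ℕ → ℂ) (r s : Fin n), (s : ℕ) + 1 < (r : ℕ) →
      (gi * (Wm n k m c * g)) r s
        = if (r : ℕ) = (r0 : ℕ) ∧ (s : ℕ) = (s0 : ℕ) then E c else 0) :
    E (fun b => if h : b < k then
        (t ⟨b, by omega⟩)⁻¹ * t ⟨b + m, by omega⟩ else 0) = 0 := by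
  set ct : ℕ → ℂ := fun b => if h : b < k then
      (t ⟨b, by omega⟩)⁻¹ * t ⟨b + m, by omega⟩ else 0 with hct
  have h2 : g * gi = 1 := mul_eq_one_comm.mp h1
  have hu : IsUnit g := ⟨⟨g, gi, h2, h1⟩, rfl⟩
  have hginv : g⁻¹ = gi := Matrix.inv_eq_left_inv h1
  have hmemF : g⁻¹ * Wm n k m (fun _ => 1) * g ∈ H0 n := by
    rw [hginv]
    intro i j hij
    rw [Matrix.mul_assoc, hX (fun _ => 1) i j hij]
    split_ifs
    · exact hE1
    · rfl
  have hst := H g hu hmemF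
  have hdg : (Matrix.diagonal t * g)⁻¹ = gi * Matrix.diagonal (fun i => (t i)⁻¹) := by
    apply Matrix.inv_eq_left_inv
    rw [Matrix.mul_assoc, ← Matrix.mul_assoc (Matrix.diagonal fun i => (t i)⁻¹),
      Matrix.diagonal_mul_diagonal,
      show (fun i => (t i)⁻¹ * t i) = fun _ => (1 : ℂ) from
        funext fun i => inv_mul_cancel₀ (ht i),
      Matrix.diagonal_one, Matrix.one_mul, h1]
  have e2 : (gi * Matrix.diagonal fun i => (t i)⁻¹) * Wm n k m (fun _ => 1)
      * (Matrix.diagonal t * g) = gi * (Wm n k m ct * g) := by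
    rw [← diag_Wm hkm t]
    simp only [Matrix.mul_assoc]
  rw [hdg, e2] at hst
  have hv := hst r0 s0 hrs
  rw [hX ct r0 s0 hrs, if_pos ⟨rfl, rfl⟩] at hv
  exact hv

lemma key_step {n k m : ℕ} (hkm : k + m = n) (hm1 : 1 ≤ m)
    (t : Fin n → ℂ) (ht : ∀ i, t i ≠ 0)
    (H : ∀ g : Matrix (Fin n) (Fin n) ℂ, IsUnit g →
        g⁻¹ * Wm n k m (fun _ => 1) * g ∈ H0 n →
        (Matrix.diagonal t * g)⁻¹ * Wm n k m (fun _ => 1) * (Matrix.diagonal t * g) ∈ H0 n)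
    (a : ℕ) (ha : a + 1 < k) :
    t ⟨a + m, by omega⟩ * (t ⟨a, by omega⟩)⁻¹
      = t ⟨a + 1 + m, by omega⟩ * (t ⟨a + 1, by omega⟩)⁻¹ := by
  by_cases hm2 : 2 ≤ m
  · have hp := plumb hkm t ht H
      (P2g n a (a+1) (a+m) (a+m+1)) (P2gi n a (a+1) (a+m) (a+m+1))
      (P2_inv (by omega) (by omega) (by omega) (by omega))
      ⟨a + m, by omega⟩ ⟨a, by omega⟩ (show a + 1 < a + m by omega)
      (fun c => c (a+1) - c a) (by norm_num)
      (fun c r s h => X2low hkm hm2 ha c r s h)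
    simp only [dif_pos (show a + 1 < k from ha), dif_pos (show a < k by omega),
      sub_eq_zero] at hp
    rw [mul_comm, mul_comm (t ⟨a + 1 + m, by omega⟩)]
    exact hp.symm
  · have hm : m = 1 := by omega
    subst hm
    have hp := plumb hkm t ht H
      (P1g n a (a+1) (a+2)) (P1gi n a (a+1) (a+2))
      (P1_inv (by omega) (by omega) (by omega))
      ⟨a + 2, by omega⟩ ⟨a, by omega⟩ (show a + 1 < a + 2 by omega)
      (fun c => (c a - c (a+1)) / 2) (by norm_num)
      (fun c r s h => X1low hkm ha c r s h)
    simp only [div_eq_zero_iff] at hp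
    have hp' := hp.resolve_right (by norm_num)
    simp only [dif_pos (show a + 1 < k from ha), dif_pos (show a < k by omega),
      sub_eq_zero] at hp'
    rw [mul_comm, mul_comm (t ⟨a + 1 + 1, by omega⟩)]
    exact hp'

lemma hard_dir {n k m : ℕ} (hkm : k + m = n) (hm1 : 1 ≤ m)
    (t : Fin n → ℂ) (ht : ∀ i, t i ≠ 0)
    (H : ∀ g : Matrix (Fin n) (Fin n) ℂ, IsUnit g →
        g⁻¹ * Wm n k m (fun _ => 1) * g ∈ H0 n →
        (Matrix.diagonal t * g)⁻¹ * Wm n k m (fun _ => 1) * (Matrix.diagonal t * g) ∈ H0 n) :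
    ∀ i i' j j' : Fin n, (i : ℕ) < k → (i' : ℕ) < k →
      (j : ℕ) = (i : ℕ) + m → (j' : ℕ) = (i' : ℕ) + m →
      t j * (t i)⁻¹ = t j' * (t i')⁻¹ := by
  set R : ℕ → ℂ := fun b => if h : b < k then
      t ⟨b + m, by omega⟩ * (t ⟨b, by omega⟩)⁻¹ else 0 with hR
  have step : ∀ b, b + 1 < k → R b = R (b + 1) := by
    intro b hb
    have hks := key_step hkm hm1 t ht H b hb
    simp only [hR, dif_pos (show b < k by omega), dif_pos hb]
    exact hks
  have chain : ∀ d b, b + d < k → R b = R (b + d) := by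
    intro d
    induction d with
    | zero => intro b _; rfl
    | succ d ih =>
      intro b hb
      rw [show b + (d + 1) = (b + 1) + d by omega, step b (by omega)]
      exact ih (b + 1) (by omega)
  have all : ∀ b b', b < k → b' < k → R b = R b' := by
    intro b b' hb hb'
    rcases Nat.le_total b b' with h | h
    · have hc := chain (b' - b) b (by omega)
      rwa [show b + (b' - b) = b' by omega] at hc
    · have hc := chain (b - b') b' (by omega)
      rw [show b' + (b - b') = b by omega] at hc
      exact hc.symm
  intro i i' j j' hi hi' hj hj'
  have ei : t j * (t i)⁻¹ = R (i : ℕ) := by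
    simp only [hR, dif_pos hi]
    have e1 : (⟨(i : ℕ) + m, by omega⟩ : Fin n) = j := Fin.ext hj.symm
    have e2 : (⟨(i : ℕ), by omega⟩ : Fin n) = i := Fin.eta i _
    rw [e1, e2]
  have ei' : t j' * (t i')⁻¹ = R (i' : ℕ) := by
    simp only [hR, dif_pos hi']
    have e1 : (⟨(i' : ℕ) + m, by omega⟩ : Fin n) = j' := Fin.ext hj'.symm
    have e2 : (⟨(i' : ℕ), by omega⟩ : Fin n) = i' := Fin.eta i' _
    rw [e1, e2]
  rw [ei, ei', all (i : ℕ) (i' : ℕ) hi hi']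

lemma easy_dir {n k m : ℕ} (hkm : k + m = n) (hk1 : 1 ≤ k)
    (t : Fin n → ℂ) (ht : ∀ i, t i ≠ 0)
    (hrat : ∀ i i' j j' : Fin n, (i : ℕ) < k → (i' : ℕ) < k →
      (j : ℕ) = (i : ℕ) + m → (j' : ℕ) = (i' : ℕ) + m →
      t j * (t i)⁻¹ = t j' * (t i')⁻¹)
    (g : Matrix (Fin n) (Fin n) ℂ) (hg : IsUnit g)
    (hmem : g⁻¹ * Wm n k m (fun _ => 1) * g ∈ H0 n) :
    (Matrix.diagonal t * g)⁻¹ * Wm n k m (fun _ => 1) * (Matrix.diagonal t * g) ∈ H0 n := by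
  have hmn : m < n := by omega
  have h0n : 0 < n := by omega
  set z : ℂ := t ⟨m, hmn⟩ * (t ⟨0, h0n⟩)⁻¹ with hz
  have hDF : Matrix.diagonal (fun i => (t i)⁻¹) * Wm n k m (fun _ => 1) * Matrix.diagonal t
      = z • Wm n k m (fun _ => 1) := by
    ext i j
    simp only [Matrix.diagonal_mul, Matrix.mul_diagonal, Wm, Matrix.of_apply,
      Matrix.smul_apply, smul_eq_mul]
    by_cases hc : (i : ℕ) < k ∧ (j : ℕ) = (i : ℕ) + m
    · rw [if_pos hc]
      have hr := hrat i ⟨0, h0n⟩ j ⟨m, hmn⟩ hc.1 (show (0 : ℕ) < k from hk1) hc.2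
        (show (m : ℕ) = 0 + m by omega)
      calc (t i)⁻¹ * 1 * t j = t j * (t i)⁻¹ := by ring
        _ = z := hr
        _ = z * 1 := by ring
    · rw [if_neg hc]; ring
  have hdg : (Matrix.diagonal t * g)⁻¹ = g⁻¹ * Matrix.diagonal (fun i => (t i)⁻¹) := by
    apply Matrix.inv_eq_right_inv
    rw [Matrix.mul_assoc, ← Matrix.mul_assoc g,
      Matrix.mul_nonsing_inv g ((Matrix.isUnit_iff_isUnit_det g).mp hg), Matrix.one_mul,
      Matrix.diagonal_mul_diagonal,
      show (fun i => t i * (t i)⁻¹) = fun _ => (1 : ℂ) from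
        funext fun i => mul_inv_cancel₀ (ht i),
      Matrix.diagonal_one]
  have e : (g⁻¹ * Matrix.diagonal fun i => (t i)⁻¹) * Wm n k m (fun _ => 1)
      * (Matrix.diagonal t * g) = z • (g⁻¹ * Wm n k m (fun _ => 1) * g) := by
    calc (g⁻¹ * Matrix.diagonal fun i => (t i)⁻¹) * Wm n k m (fun _ => 1)
        * (Matrix.diagonal t * g)
        = g⁻¹ * ((Matrix.diagonal fun i => (t i)⁻¹) * Wm n k m (fun _ => 1)
            * Matrix.diagonal t) * g := by simp only [Matrix.mul_assoc]
      _ = g⁻¹ * (z • Wm n k m (fun _ => 1)) * g := by rw [hDF]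
      _ = z • (g⁻¹ * Wm n k m (fun _ => 1) * g) := by
          rw [mul_smul_comm, smul_mul_assoc]
  rw [hdg, e]
  intro i j hij
  have hm0 := hmem i j hij
  simp only [Matrix.smul_apply, hm0, smul_eq_mul, mul_zero]

lemma main_iff {n k : ℕ} (hk1 : 1 ≤ k) (hk2 : k ≤ n - 1) (t : Fin n → ℂ)
    (ht : ∀ i, t i ≠ 0) :
    (∀ g : Matrix (Fin n) (Fin n) ℂ, IsUnit g → g⁻¹ * Fmat n k * g ∈ H0 n →
        (Matrix.diagonal t * g)⁻¹ * Fmat n k * (Matrix.diagonal t * g) ∈ H0 n) ↔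
    (∀ i i' j j' : Fin n, (i : ℕ) < k → (i' : ℕ) < k →
        (j : ℕ) = (i : ℕ) + (n - k) → (j' : ℕ) = (i' : ℕ) + (n - k) →
        t j * (t i)⁻¹ = t j' * (t i')⁻¹) := by
  have hkm : k + (n - k) = n := by omega
  have hm1 : 1 ≤ n - k := by omega
  simp only [Fmat_eq_Wm n k]
  constructor
  · intro H
    exact hard_dir hkm hm1 t ht H
  · intro hrat g hg hmem
    exact easy_dir hkm hk1 t ht hrat g hg hmem


/-- A diagonal `t ∈ T` stabilizes the Hessenberg variety `H(F_k, H_0)`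
iff `t_{1+(n-k)}/t_1 = t_{2+(n-k)}/t_2 = ⋯ = t_n/t_k`; i.e. the maximal subtorus of
`T` stabilizing `H(F_k, H_0)` is the codimension-`(k-1)` torus `K`.  In particular
`t` stabilizes the Peterson variety `H(F_{n-1}, H_0)` iff
`t_2/t_1 = t_3/t_2 = ⋯ = t_n/t_{n-1}`. -/
theorem stmt18 {n k : ℕ} (hk1 : 1 ≤ k) (hk2 : k ≤ n - 1) :
    (∀ t : Fin n → ℂ, (∀ i, t i ≠ 0) →
      ((∀ g : Matrix (Fin n) (Fin n) ℂ, IsUnit g →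
          g⁻¹ * Fmat n k * g ∈ H0 n →
          (Matrix.diagonal t * g)⁻¹ * Fmat n k * (Matrix.diagonal t * g) ∈ H0 n) ↔
        (∀ i i' j j' : Fin n, (i : ℕ) < k → (i' : ℕ) < k →
          (j : ℕ) = (i : ℕ) + (n - k) → (j' : ℕ) = (i' : ℕ) + (n - k) →
          t j * (t i)⁻¹ = t j' * (t i')⁻¹))) ∧
    (∀ t : Fin n → ℂ, (∀ i, t i ≠ 0) →
      ((∀ g : Matrix (Fin n) (Fin n) ℂ, IsUnit g →
          g⁻¹ * Fmat n (n - 1) * g ∈ H0 n →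
          (Matrix.diagonal t * g)⁻¹ * Fmat n (n - 1) * (Matrix.diagonal t * g) ∈
            H0 n) ↔
        (∀ i i' j j' : Fin n, (j : ℕ) = (i : ℕ) + 1 → (j' : ℕ) = (i' : ℕ) + 1 →
          t j * (t i)⁻¹ = t j' * (t i')⁻¹))) := by
  constructor
  · intro t ht
    exact main_iff hk1 hk2 t ht
  · intro t ht
    have hk1' : 1 ≤ n - 1 := by omega
    have base := main_iff hk1' (le_refl (n - 1)) t ht
    rw [show n - (n - 1) = 1 by omega] at base
    refine base.trans
      ⟨fun h i i' j j' hj hj' =>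
        h i i' j j' (by have := j.isLt; omega) (by have := j'.isLt; omega) hj hj',
       fun h i i' j j' _ _ hj hj' => h i i' j j' hj hj'⟩
end
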